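/- arXiv:2308.06800 — 5 statements merged into one kernel-verified Lean document; each statement's English description precedes it below -/
import Mathlib

section
/- Let q be a complex number with 0 < |q| < 1, and let n, m be integers with n ≥ 1 and 0 ≤ m ≤ n−1. Then ∑_{k=1}^{n} k·(−1)^k·q^{k(k−1)/2}·[n choose k]_q·q^{−mk} = (−1)^{m+1}·q^{−m(m+1)/2}·(q;q)_m·(q;q)_{n−m−1}. -/
/-- The finite q-Pochhammer symbol `(a;q)_n = ∏_{k=0}^{n-1} (1 - a q^k)`. -/
noncomputable def qPoch (a q : ℂ) (n : ℕ) : ℂ := ∏ k ∈ Finset.range n, (1 - a * q ^ k)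

/-- The Gaussian (q-binomial) coefficient `[n choose k]_q`. -/
noncomputable def qBinom (q : ℂ) (n k : ℕ) : ℂ := qPoch q q n / (qPoch q q k * qPoch q q (n - k))

open Finset Polynomial

variable {q : ℂ}

lemma qPoch_zero (a q : ℂ) : qPoch a q 0 = 1 := by simp [qPoch]

lemma qPoch_succ (a q : ℂ) (n : ℕ) : qPoch a q (n+1) = qPoch a q n * (1 - a * q ^ n) :=
  Finset.prod_range_succ _ _

lemma qq_ne_one (hq1 : ‖q‖ < 1) (k : ℕ) : 1 - q * q ^ k ≠ 0 := by
  intro h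
  have h1 : q * q ^ k = 1 := by linear_combination -h
  have h2 : ‖q * q ^ k‖ < 1 := by
    rw [norm_mul, norm_pow]
    calc ‖q‖ * ‖q‖ ^ k = ‖q‖ ^ (k+1) := by ring
    _ < 1 := pow_lt_one₀ (norm_nonneg _) hq1 (Nat.succ_ne_zero k)
  rw [h1] at h2; simp at h2

lemma qPoch_ne_zero (hq1 : ‖q‖ < 1) (n : ℕ) : qPoch q q n ≠ 0 :=
  Finset.prod_ne_zero_iff.mpr fun k _ => qq_ne_one hq1 k

lemma qBinom_self (hq1 : ‖q‖ < 1) (n : ℕ) : qBinom q n n = 1 := by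
  simp [qBinom, qPoch_zero, div_self (qPoch_ne_zero hq1 n)]

lemma qBinom_zero (hq1 : ‖q‖ < 1) (n : ℕ) : qBinom q n 0 = 1 := by
  simp [qBinom, qPoch_zero, div_self (qPoch_ne_zero hq1 n)]

lemma qBinom_pascal (hq1 : ‖q‖ < 1) {n k : ℕ} (h1 : 1 ≤ k) (h2 : k ≤ n) :
    qBinom q (n+1) k = qBinom q n k + q ^ (n + 1 - k) * qBinom q n (k-1) := by
  obtain ⟨j, rfl⟩ : ∃ j, k = j + 1 := ⟨k - 1, by omega⟩
  obtain ⟨d, rfl⟩ : ∃ d, n = j + 1 + d := ⟨n - (j+1), by omega⟩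
  have hAj : qPoch q q j ≠ 0 := qPoch_ne_zero hq1 j
  have hAd : qPoch q q d ≠ 0 := qPoch_ne_zero hq1 d
  have hFj : 1 - q * q ^ j ≠ 0 := qq_ne_one hq1 j
  have hFd : 1 - q * q ^ d ≠ 0 := qq_ne_one hq1 d
  simp only [qBinom]
  rw [show j + 1 + d + 1 - (j+1) = d + 1 by omega, show j + 1 + d - (j+1) = d by omega,
    show j + 1 - 1 = j by omega, show j + 1 + d - j = d + 1 by omega,
    show j + 1 + d + 1 = (j + 1 + d) + 1 by omega]
  rw [qPoch_succ q q (j+1+d), qPoch_succ q q d, qPoch_succ q q j]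
  field_simp
  ring

lemma coeff_sum_CX (c : ℕ → ℂ) (N j : ℕ) :
    (∑ k ∈ range N, C (c k) * X ^ k).coeff j = if j < N then c j else 0 := by
  rw [Polynomial.finset_sum_coeff]
  simp only [Polynomial.coeff_C_mul, Polynomial.coeff_X_pow, mul_ite, mul_one, mul_zero]
  rw [Finset.sum_ite_eq (range N) j c]
  simp [Finset.mem_range]

lemma tri_exp {n i : ℕ} (hi : i ≤ n) :
    (i+1) * (i+1-1) / 2 + (n - i) = n + i * (i-1) / 2 := by
  rw [Nat.triangle_succ]
  generalize i * (i-1) / 2 = s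
  omega

lemma qbt (hq1 : ‖q‖ < 1) (n : ℕ) :
    ∏ j ∈ range n, (1 - C (q ^ j) * X) =
      ∑ k ∈ range (n+1), C ((-1)^k * q ^ (k * (k-1) / 2) * qBinom q n k) * X ^ k := by
  induction n with
  | zero => simp [qBinom, qPoch_zero]
  | succ n ih =>
    rw [Finset.prod_range_succ, ih]
    have hrw : (∑ k ∈ range (n+1), C ((-1)^k * q ^ (k*(k-1)/2) * qBinom q n k) * X ^ k) *
        (1 - C (q ^ n) * X) =
        (∑ k ∈ range (n+1), C ((-1)^k * q ^ (k*(k-1)/2) * qBinom q n k) * X ^ k) -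
        C (q ^ n) * ((∑ k ∈ range (n+1), C ((-1)^k * q ^ (k*(k-1)/2) * qBinom q n k) * X ^ k) * X) := by
      ring
    rw [hrw]
    ext j
    rw [Polynomial.coeff_sub, Polynomial.coeff_C_mul, coeff_sum_CX]
    match j with
    | 0 =>
      simp only [Nat.lt_irrefl, if_pos (Nat.succ_pos n), if_pos (Nat.succ_pos (n+1))]
      rw [Polynomial.mul_coeff_zero, Polynomial.coeff_X_zero, mul_zero]
      rw [coeff_sum_CX]
      simp [qBinom_zero hq1]
    | (i+1) =>
      rw [Polynomial.coeff_mul_X, coeff_sum_CX, coeff_sum_CX]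
      by_cases hcase : i < n
      · rw [if_pos (by omega), if_pos (by omega), if_pos (by omega)]
        rw [qBinom_pascal hq1 (by omega : 1 ≤ i + 1) (by omega : i + 1 ≤ n)]
        have e1 : q ^ ((i+1) * (i+1-1) / 2) * q ^ (n - i) = q ^ n * q ^ (i * (i-1) / 2) := by
          rw [← pow_add, ← pow_add, tri_exp (le_of_lt hcase)]
        have hred : n + 1 - (i + 1) = n - i := by omega
        rw [hred, show (i + 1 - 1) = i by omega] at *
        linear_combination ((-1:ℂ))^i * qBinom q n i * e1
      · by_cases hc2 : i = n
        · subst hc2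
          rw [if_neg (by omega), if_pos (by omega), if_pos (by omega)]
          rw [qBinom_self hq1, qBinom_self hq1]
          have e1 : q ^ ((i+1) * (i+1-1) / 2) = q ^ i * q ^ (i * (i-1) / 2) := by
            rw [← pow_add, Nat.triangle_succ, Nat.add_comm]
          rw [show (i + 1 - 1) = i by omega] at *
          linear_combination ((-1:ℂ))^i * e1
        · rw [if_neg (by omega), if_neg (by omega), if_neg (by omega)]
          ring

lemma derivative_finset_prod {ι : Type*} [DecidableEq ι] (s : Finset ι) (f : ι → Polynomial ℂ) :
    derivative (∏ i ∈ s, f i) = ∑ i ∈ s, (∏ j ∈ s.erase i, f j) * derivative (f i) := by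
  induction s using Finset.induction_on with
  | empty => simp
  | insert a s ha ih =>
    rw [Finset.prod_insert ha, derivative_mul, ih, Finset.mul_sum, Finset.sum_insert ha]
    congr 1
    · rw [Finset.erase_insert ha]; ring
    · apply Finset.sum_congr rfl
      intro i hi
      rw [Finset.erase_insert_of_ne (by rintro rfl; exact ha hi),
        Finset.prod_insert (fun h => ha (Finset.mem_of_mem_erase h))]
      ring

theorem stmt0 (q : ℂ) (hq0 : 0 < ‖q‖) (hq1 : ‖q‖ < 1)
    (n m : ℕ) (hn : 1 ≤ n) (hm : m ≤ n - 1) :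
    ∑ k ∈ Finset.Icc 1 n,
        (k : ℂ) * (-1) ^ k * q ^ (k * (k - 1) / 2) * qBinom q n k * q ^ (-((m * k : ℕ) : ℤ)) =
      (-1) ^ (m + 1) * q ^ (-((m * (m + 1) / 2 : ℕ) : ℤ)) * qPoch q q m * qPoch q q (n - m - 1) := by
  have hqne : q ≠ 0 := by
    intro h; rw [h] at hq0; simp at hq0
  have hmn : m < n := by omega
  set x : ℂ := q ^ (-(m : ℤ)) with hx
  have hxinv : x = (q ^ m)⁻¹ := by rw [hx, zpow_neg, zpow_natCast]
  have hqm : q ^ m * x = 1 := by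
    rw [hxinv]; exact mul_inv_cancel₀ (pow_ne_zero m hqne)
  have hxk : ∀ k : ℕ, q ^ (-((m * k : ℕ) : ℤ)) = x ^ k := by
    intro k
    rw [zpow_neg, zpow_natCast, hxinv, inv_pow, ← pow_mul]
  -- the polynomial and its derivative
  set P : Polynomial ℂ := ∏ j ∈ range n, (1 - C (q ^ j) * X) with hP
  -- Step A : LHS = x * eval x (derivative P)
  have hDsum : derivative P = ∑ k ∈ range (n+1),
      C ((-1)^k * q ^ (k * (k-1) / 2) * qBinom q n k) * (C (k : ℂ) * X ^ (k-1)) := by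
    rw [hP, qbt hq1 n, Polynomial.derivative_sum]
    apply Finset.sum_congr rfl
    intro k _
    rw [Polynomial.derivative_C_mul, Polynomial.derivative_X_pow]
  have hA : ∑ k ∈ Finset.Icc 1 n,
        (k : ℂ) * (-1) ^ k * q ^ (k * (k - 1) / 2) * qBinom q n k * q ^ (-((m * k : ℕ) : ℤ))
      = x * eval x (derivative P) := by
    rw [hDsum, Polynomial.eval_finset_sum]
    simp only [Polynomial.eval_mul, Polynomial.eval_C, Polynomial.eval_pow, Polynomial.eval_X]
    rw [Finset.mul_sum]
    rw [Finset.sum_subset (show Finset.Icc 1 n ⊆ range (n+1) by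
        intro k hk; simp only [Finset.mem_Icc] at hk; simp only [Finset.mem_range]; omega)
      (by intro k hk hnk
          simp only [Finset.mem_Icc, Finset.mem_range] at hk hnk
          have : k = 0 := by omega
          subst this; simp)]
    apply Finset.sum_congr rfl
    intro k _
    match k with
    | 0 => simp
    | (i+1) =>
      rw [hxk (i+1)]
      push_cast
      rw [pow_succ]
      ring
  -- Step B : eval x (derivative P) via product rule
  have hDev : eval x (derivative P) =
      ∑ j ∈ range n, (∏ i ∈ (range n).erase j, (1 - q ^ i * x)) * (-(q ^ j)) := by
    rw [hP, derivative_finset_prod, Polynomial.eval_finset_sum]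
    apply Finset.sum_congr rfl
    intro j _
    rw [Polynomial.eval_mul, Polynomial.eval_prod]
    congr 1
    · apply Finset.prod_congr rfl; intro i _; simp
    · rw [Polynomial.derivative_sub, Polynomial.derivative_one, Polynomial.derivative_C_mul,
        Polynomial.derivative_X, mul_one, zero_sub, Polynomial.eval_neg, Polynomial.eval_C]
  have hcol : eval x (derivative P) =
      (∏ i ∈ (range n).erase m, (1 - q ^ i * x)) * (-(q ^ m)) := by
    rw [hDev]
    apply Finset.sum_eq_single_of_mem m (Finset.mem_range.mpr hmn)
    intro j hj hne
    apply mul_eq_zero_of_left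
    apply Finset.prod_eq_zero (Finset.mem_erase.mpr ⟨Ne.symm hne, Finset.mem_range.mpr hmn⟩)
    rw [hqm, sub_self]
  -- split the product
  have hsplit : (range n).erase m = range m ∪ Finset.Ico (m+1) n := by
    ext a
    simp only [Finset.mem_erase, Finset.mem_range, Finset.mem_union, Finset.mem_Ico]
    omega
  have hdisj : Disjoint (range m) (Finset.Ico (m+1) n) := by
    rw [Finset.disjoint_left]
    intro a ha hb
    simp only [Finset.mem_range] at ha
    simp only [Finset.mem_Ico] at hb
    omega
  have hIco : ∏ i ∈ Finset.Ico (m+1) n, (1 - q ^ i * x) = qPoch q q (n - m - 1) := by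
    rw [Finset.prod_Ico_eq_prod_range]
    rw [show n - (m+1) = n - m - 1 by omega]
    simp only [qPoch]
    apply Finset.prod_congr rfl
    intro i _
    congr 1
    rw [show m + 1 + i = i + 1 + m by omega, pow_add, pow_succ']
    rw [mul_assoc, hqm, mul_one]
  have hrefl : ∏ i ∈ range m, (1 - q ^ (m - i)) = qPoch q q m := by
    simp only [qPoch]
    rw [← Finset.prod_range_reflect (fun k => 1 - q * q ^ k) m]
    apply Finset.prod_congr rfl
    intro i hi
    simp only [Finset.mem_range] at hi
    congr 1
    rw [← pow_succ']
    congr 1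
    omega
  have hlow : ∏ i ∈ range m, (1 - q ^ i * x)
      = ((-1) ^ m * q ^ (m * (m-1) / 2) * x ^ m) * qPoch q q m := by
    rw [Finset.prod_congr rfl (show ∀ i ∈ range m, (1 - q ^ i * x)
        = ((-1) * q ^ i * x) * (1 - q ^ (m - i)) from ?_)]
    · rw [Finset.prod_mul_distrib, Finset.prod_mul_distrib, Finset.prod_mul_distrib,
        Finset.prod_const, Finset.prod_const, Finset.prod_pow_eq_pow_sum, Finset.sum_range_id,
        hrefl, Finset.card_range]
    · intro i hi
      simp only [Finset.mem_range] at hi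
      have hxm : q ^ i * x * q ^ (m - i) = 1 := by
        have e : q ^ i * q ^ (m - i) = q ^ m := by rw [← pow_add]; congr 1; omega
        calc q ^ i * x * q ^ (m - i) = q ^ i * q ^ (m - i) * x := by ring
        _ = q ^ m * x := by rw [e]
        _ = 1 := hqm
      linear_combination -hxm
  -- final numeric identity
  have hEv : m * (m+1) % 2 = 0 := Nat.even_iff.mp (Nat.even_mul_succ_self m)
  have h1 : m * (m-1) / 2 + m + m * (m+1) / 2 = m * (m+1) := by
    have ht := Nat.triangle_succ m
    rw [Nat.add_sub_cancel] at ht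
    rw [← ht, Nat.mul_comm (m+1) m]
    generalize m * (m+1) = b at hEv ⊢
    omega
  have hfin : x * (x ^ m * (q ^ (m * (m-1) / 2) * q ^ m)) = q ^ (-((m * (m+1) / 2 : ℕ) : ℤ)) := by
    have hexp : m * (m-1) / 2 + m * (m+1) / 2 = m * m := by
      have h2 : m * (m+1) = m * m + m := by ring
      generalize m * (m-1) / 2 = a at h1 ⊢
      generalize m * (m+1) / 2 = b at h1 ⊢
      rw [h2] at h1
      generalize m * m = c at h1 ⊢
      omega
    have hmain : q ^ (m * (m-1) / 2) * q ^ (m * (m+1) / 2) = q ^ (m * m) := by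
      rw [← pow_add, hexp]
    have hne1 : (q : ℂ) ^ (m * m) ≠ 0 := pow_ne_zero _ hqne
    have hne2 : (q : ℂ) ^ (m * (m+1) / 2) ≠ 0 := pow_ne_zero _ hqne
    have hne3 : (q : ℂ) ^ m ≠ 0 := pow_ne_zero _ hqne
    rw [zpow_neg, zpow_natCast, hxinv, inv_pow, ← pow_mul]
    field_simp
    linear_combination hmain
  rw [hA, hcol, hsplit, Finset.prod_union hdisj, hIco, hlow]
  calc x * ((-1) ^ m * q ^ (m * (m-1) / 2) * x ^ m * qPoch q q m * qPoch q q (n - m - 1) * (-(q ^ m)))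
      = (-1) ^ (m+1) * (x * (x ^ m * (q ^ (m * (m-1) / 2) * q ^ m))) * qPoch q q m * qPoch q q (n - m - 1) := by
        ring
    _ = (-1) ^ (m + 1) * q ^ (-((m * (m + 1) / 2 : ℕ) : ℤ)) * qPoch q q m * qPoch q q (n - m - 1) := by
        rw [hfin]
end

section
/- Let q be a complex number with |q| < 1 and let d(k) denote the number of positive divisors of the positive integer k. Then ∑_{k=0}^{∞} k·(−1)^k·q^{k(k+1)/2}/(q;q)_k = −(q;q)_∞ · ∑_{k=1}^{∞} d(k)·q^k. -/
/-- The infinite q-Pochhammer symbol `(a;q)_∞ = ∏_{k=0}^{∞} (1 - a q^k)`. -/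
noncomputable def qPochInf (a q : ℂ) : ℂ := ∏' k : ℕ, (1 - a * q ^ k)

set_option maxHeartbeats 1000000

namespace Stmt2Aux


variable {q : ℂ} (hq : ‖q‖ < 1)

noncomputable def c (q : ℂ) (k : ℕ) : ℂ := (-1)^k * q^(k*(k+1)/2) / qPoch q q k

lemma tri_succ (k : ℕ) : (k+1)*(k+2)/2 = k*(k+1)/2 + (k+1) := by
  have h : (k+1)*(k+2) = k*(k+1) + (k+1)*2 := by ring
  rw [h]; omega

include hq in
lemma one_sub_ne (j : ℕ) : (1 : ℂ) - q * q ^ j ≠ 0 := by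
  intro h
  have h1 : q * q ^ j = 1 := by linear_combination -h
  have : ‖q * q ^ j‖ < 1 := by
    rw [norm_mul, norm_pow]
    calc ‖q‖ * ‖q‖^j ≤ ‖q‖ * 1 :=
          mul_le_mul_of_nonneg_left (pow_le_one₀ (norm_nonneg q) hq.le) (norm_nonneg q)
      _ = ‖q‖ := by ring
      _ < 1 := hq
  rw [h1] at this; simp at this

include hq in
lemma qPoch_ne (k : ℕ) : qPoch q q k ≠ 0 := by
  unfold qPoch
  exact Finset.prod_ne_zero_iff.2 fun j _ => one_sub_ne hq j

lemma c_zero : c q 0 = 1 := by simp [c, qPoch]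

include hq in
lemma c_rec (k : ℕ) : c q (k+1) = q^(k+1) * (c q (k+1) - c q k) := by
  have hp : qPoch q q (k+1) = qPoch q q k * (1 - q * q^k) := Finset.prod_range_succ _ _
  have hne : qPoch q q k ≠ 0 := qPoch_ne hq k
  have hne1 : (1:ℂ) - q * q^k ≠ 0 := one_sub_ne hq k
  have hpow : q^((k+1)*(k+2)/2) = q^(k*(k+1)/2) * q^(k+1) := by
    rw [tri_succ, pow_add]
  have key : (1 - q*q^k) * c q (k+1) = -(q^(k+1)) * c q k := by
    unfold c
    rw [hp, hpow]
    field_simp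
    ring
  have h1 : q^(k+1) = q * q^k := by rw [pow_succ']
  linear_combination key + (c q (k+1) - c q k) * h1

lemma exp_aux {x r : ℝ} (hx : 0 ≤ x) (hxr : x ≤ r) (hr : r < 1) :
    Real.exp (-(x/(1-r))) ≤ 1 - x := by
  have hx1 : x < 1 := lt_of_le_of_lt hxr hr
  have h1x : (0:ℝ) < 1 - x := by linarith
  have h1r : (0:ℝ) < 1 - r := by linarith
  have hpos : (0:ℝ) < 1 + x/(1-r) := by positivity
  have key : 1 ≤ (1-x) * (1 + x/(1-r)) := by
    have h5 : x ≤ (1-x)*x/(1-r) := by rw [le_div_iff₀ h1r]; nlinarith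
    have expand : (1-x)*(1+x/(1-r)) = (1-x) + (1-x)*x/(1-r) := by ring
    linarith
  have h1 : 1 + x/(1-r) ≤ Real.exp (x/(1-r)) := by
    have := Real.add_one_le_exp (x/(1-r)); linarith
  calc Real.exp (-(x/(1-r))) = (Real.exp (x/(1-r)))⁻¹ := Real.exp_neg _
    _ ≤ (1 + x/(1-r))⁻¹ := by gcongr
    _ ≤ 1 - x := by rw [inv_eq_one_div, div_le_iff₀ hpos]; linarith

noncomputable def C (q : ℂ) : ℝ := Real.exp (-(‖q‖/(1-‖q‖)^2))

lemma C_pos : 0 < C q := Real.exp_pos _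

include hq in
lemma qPoch_norm_lower (k : ℕ) : C q ≤ ‖qPoch q q k‖ := by
  set r := ‖q‖ with hr
  have hr0 : 0 ≤ r := norm_nonneg q
  have h1r : (0:ℝ) < 1 - r := by linarith
  have step1 : ∀ j : ℕ, Real.exp (-(r^(j+1)/(1-r))) ≤ ‖1 - q * q^j‖ := by
    intro j
    have hb : r^(j+1) ≤ r := by
      calc r^(j+1) = r * r^j := by rw [pow_succ']
        _ ≤ r * 1 := mul_le_mul_of_nonneg_left (pow_le_one₀ hr0 hq.le) hr0
        _ = r := by ring
    have := exp_aux (pow_nonneg hr0 (j+1)) hb hq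
    calc Real.exp (-(r^(j+1)/(1-r))) ≤ 1 - r^(j+1) := this
      _ = 1 - ‖q * q^j‖ := by rw [norm_mul, norm_pow, pow_succ']
      _ ≤ ‖(1:ℂ)‖ - ‖q * q^j‖ := by norm_num
      _ ≤ ‖1 - q * q^j‖ := norm_sub_norm_le _ _
  have hnorm : ‖qPoch q q k‖ = ∏ j ∈ Finset.range k, ‖1 - q * q^j‖ := by
    rw [qPoch]; exact norm_prod _ _
  rw [hnorm]
  have step2 : Real.exp (∑ j ∈ Finset.range k, -(r^(j+1)/(1-r))) ≤
      ∏ j ∈ Finset.range k, ‖1 - q * q^j‖ := by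
    rw [Real.exp_sum]
    exact Finset.prod_le_prod (fun j _ => (Real.exp_pos _).le) (fun j _ => step1 j)
  refine le_trans ?_ step2
  show Real.exp (-(r/(1-r)^2)) ≤ _
  rw [Real.exp_le_exp]
  have hsum : ∑ j ∈ Finset.range k, r^(j+1) ≤ r/(1-r) := by
    have h2 : ∑ j ∈ Finset.range k, r^(j+1) = r * ∑ j ∈ Finset.range k, r^j := by
      rw [Finset.mul_sum]; exact Finset.sum_congr rfl fun j _ => by rw [pow_succ']
    have h3 : ∑ j ∈ Finset.range k, r^j ≤ (1-r)⁻¹ := by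
      have := Summable.sum_le_tsum (Finset.range k) (fun i _ => pow_nonneg hr0 i)
        (summable_geometric_of_lt_one hr0 hq)
      rwa [tsum_geometric_of_lt_one hr0 hq] at this
    rw [h2, div_eq_mul_inv]
    exact mul_le_mul_of_nonneg_left h3 hr0
  have hexpand : ∑ j ∈ Finset.range k, -(r^(j+1)/(1-r)) =
      -((∑ j ∈ Finset.range k, r^(j+1))/(1-r)) := by
    rw [Finset.sum_neg_distrib, ← Finset.sum_div]
  rw [hexpand]
  have h4 : (∑ j ∈ Finset.range k, r^(j+1))/(1-r) ≤ r/(1-r)^2 := by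
    rw [pow_two, ← div_div]
    gcongr
  linarith

lemma k_le_tri (k : ℕ) : k ≤ k*(k+1)/2 := by
  rw [Nat.le_div_iff_mul_le (by norm_num : 0 < 2)]
  rcases Nat.eq_zero_or_pos k with h | h
  · subst h; simp
  · exact Nat.mul_le_mul_left k (by omega)

include hq in
lemma c_norm_le (k : ℕ) : ‖c q k‖ ≤ ‖q‖^k / C q := by
  have h1 : ‖c q k‖ = ‖q‖^(k*(k+1)/2) / ‖qPoch q q k‖ := by
    rw [c, norm_div, norm_mul, norm_pow, norm_neg, norm_one, one_pow, one_mul, norm_pow]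
  rw [h1]
  apply div_le_div₀ (by positivity) (pow_le_pow_of_le_one (norm_nonneg q) hq.le (k_le_tri k))
    C_pos (qPoch_norm_lower hq k)

include hq in
lemma summable_base : Summable (fun k : ℕ => (k:ℝ) * ‖q‖^k / C q) := by
  apply Summable.div_const
  have := summable_pow_mul_geometric_of_norm_lt_one 1 (by rwa [Real.norm_eq_abs, abs_of_nonneg (norm_nonneg q)] : ‖‖q‖‖ < 1)
  simpa using this

include hq in
lemma summable_cG (j : ℕ) : Summable (fun k : ℕ => c q k * q^(j*k)) := by
  apply Summable.of_norm
  apply Summable.of_nonneg_of_le (fun k => norm_nonneg _) (fun k => ?_)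
    ((summable_geometric_of_lt_one (norm_nonneg q) hq).div_const (C q))
  rw [norm_mul, norm_pow]
  calc ‖c q k‖ * ‖q‖^(j*k) ≤ (‖q‖^k / C q) * 1 := by
        apply mul_le_mul (c_norm_le hq k) (pow_le_one₀ (norm_nonneg q) hq.le)
          (by positivity) (div_nonneg (by positivity) C_pos.le)
    _ = ‖q‖^k / C q := by ring

include hq in
lemma summable_cH (j : ℕ) : Summable (fun k : ℕ => (k:ℂ) * c q k * q^(j*k)) := by
  apply Summable.of_norm
  apply Summable.of_nonneg_of_le (fun k => norm_nonneg _) (fun k => ?_) (summable_base hq)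
  rw [norm_mul, norm_mul, norm_pow, Complex.norm_natCast]
  calc (k:ℝ) * ‖c q k‖ * ‖q‖^(j*k) ≤ (k:ℝ) * (‖q‖^k / C q) * 1 := by
        apply mul_le_mul (mul_le_mul_of_nonneg_left (c_norm_le hq k) (Nat.cast_nonneg k))
          (pow_le_one₀ (norm_nonneg q) hq.le) (by positivity)
        exact mul_nonneg (Nat.cast_nonneg k) (div_nonneg (by positivity) C_pos.le)
    _ = (k:ℝ) * ‖q‖^k / C q := by ring

noncomputable def G (q : ℂ) (j : ℕ) : ℂ := ∑' k : ℕ, c q k * q^(j*k)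
noncomputable def H (q : ℂ) (j : ℕ) : ℂ := ∑' k : ℕ, (k:ℂ) * c q k * q^(j*k)

lemma pow_reindex (j k : ℕ) : q^((j+1)*(k+1)) = q^(k+1) * q^(j*(k+1)) := by
  rw [← pow_add]; ring_nf

lemma pow_reindex2 (j k : ℕ) : q^((j+1)*(k+1)) = q^(j+1) * q^((j+1)*k) := by
  rw [← pow_add]; ring_nf

include hq in
lemma key_term (j k : ℕ) :
    c q (k+1) * q^(j*(k+1)) = c q (k+1) * q^((j+1)*(k+1)) - c q k * q^((j+1)*(k+1)) := by
  have h := c_rec hq k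
  rw [pow_reindex]
  calc c q (k+1) * q^(j*(k+1)) = (q^(k+1) * (c q (k+1) - c q k)) * q^(j*(k+1)) := by rw [← h]
    _ = _ := by ring

include hq in
lemma summable_shiftG (j : ℕ) : Summable (fun k : ℕ => c q k * q^((j+1)*(k+1))) := by
  have : (fun k : ℕ => c q k * q^((j+1)*(k+1))) =
      fun k : ℕ => q^(j+1) * (c q k * q^((j+1)*k)) := by
    funext k; rw [pow_reindex2]; ring
  rw [this]
  exact (summable_cG hq (j+1)).mul_left _

include hq in
lemma G_rec (j : ℕ) : G q j = (1 - q^(j+1)) * G q (j+1) := by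
  have hs := summable_cG hq j
  have hs1 := summable_cG hq (j+1)
  have hshift : Summable (fun k : ℕ => c q (k+1) * q^((j+1)*(k+1))) :=
    (summable_nat_add_iff (f := fun k : ℕ => c q k * q^((j+1)*k)) 1).mpr hs1
  have e2 : ∑' k : ℕ, c q k * q^((j+1)*(k+1)) = q^(j+1) * ∑' k : ℕ, c q k * q^((j+1)*k) := by
    have h3 : (fun k : ℕ => c q k * q^((j+1)*(k+1))) =
        fun k : ℕ => q^(j+1) * (c q k * q^((j+1)*k)) := by
      funext k; rw [pow_reindex2]; ring
    rw [h3, tsum_mul_left]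
  simp only [G]
  calc (∑' k : ℕ, c q k * q^(j*k))
      = c q 0 * q^(j*0) + ∑' k : ℕ, c q (k+1) * q^(j*(k+1)) := Summable.tsum_eq_zero_add hs
    _ = c q 0 * q^((j+1)*0) +
        ∑' k : ℕ, (c q (k+1) * q^((j+1)*(k+1)) - c q k * q^((j+1)*(k+1))) := by
        rw [tsum_congr (fun k => key_term hq j k)]; norm_num
    _ = (c q 0 * q^((j+1)*0) + ∑' k : ℕ, c q (k+1) * q^((j+1)*(k+1)))
        - ∑' k : ℕ, c q k * q^((j+1)*(k+1)) := by
        rw [Summable.tsum_sub hshift (summable_shiftG hq j)]; ring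
    _ = (∑' k : ℕ, c q k * q^((j+1)*k)) - q^(j+1) * ∑' k : ℕ, c q k * q^((j+1)*k) := by
        rw [← Summable.tsum_eq_zero_add hs1, e2]
    _ = (1 - q^(j+1)) * ∑' k : ℕ, c q k * q^((j+1)*k) := by ring

include hq in
lemma H_rec (j : ℕ) : H q j = (1 - q^(j+1)) * H q (j+1) - q^(j+1) * G q (j+1) := by
  have hs := summable_cH hq j
  have hs1 := summable_cH hq (j+1)
  have hA : Summable (fun k : ℕ => ((k:ℕ)+1 : ℂ) * c q (k+1) * q^((j+1)*(k+1))) := by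
    have h := (summable_nat_add_iff (f := fun k : ℕ => (k:ℂ) * c q k * q^((j+1)*k)) 1).mpr hs1
    apply h.congr
    intro k; push_cast; ring
  have hB : Summable (fun k : ℕ => (k:ℂ) * c q k * q^((j+1)*(k+1))) := by
    have h3 : (fun k : ℕ => (k:ℂ) * c q k * q^((j+1)*(k+1))) =
        fun k : ℕ => q^(j+1) * ((k:ℂ) * c q k * q^((j+1)*k)) := by
      funext k; rw [pow_reindex2]; ring
    rw [h3]; exact hs1.mul_left _
  have hC : Summable (fun k : ℕ => c q k * q^((j+1)*(k+1))) := summable_shiftG hq j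
  have key : ∀ k : ℕ, ((k:ℕ)+1 : ℂ) * c q (k+1) * q^(j*(k+1)) =
      ((((k:ℕ)+1 : ℂ)) * c q (k+1) * q^((j+1)*(k+1)) - (k:ℂ) * c q k * q^((j+1)*(k+1)))
        - c q k * q^((j+1)*(k+1)) := by
    intro k
    have h := key_term hq j k
    calc ((k:ℕ)+1 : ℂ) * c q (k+1) * q^(j*(k+1))
        = ((k:ℕ)+1 : ℂ) * (c q (k+1) * q^(j*(k+1))) := by ring
      _ = ((k:ℕ)+1 : ℂ) * (c q (k+1) * q^((j+1)*(k+1)) - c q k * q^((j+1)*(k+1))) := by rw [h]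
      _ = _ := by push_cast; ring
  have eB : ∑' k : ℕ, (k:ℂ) * c q k * q^((j+1)*(k+1))
      = q^(j+1) * ∑' k : ℕ, (k:ℂ) * c q k * q^((j+1)*k) := by
    have h3 : (fun k : ℕ => (k:ℂ) * c q k * q^((j+1)*(k+1))) =
        fun k : ℕ => q^(j+1) * ((k:ℂ) * c q k * q^((j+1)*k)) := by
      funext k; rw [pow_reindex2]; ring
    rw [h3, tsum_mul_left]
  have eC : ∑' k : ℕ, c q k * q^((j+1)*(k+1))
      = q^(j+1) * ∑' k : ℕ, c q k * q^((j+1)*k) := by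
    have h3 : (fun k : ℕ => c q k * q^((j+1)*(k+1))) =
        fun k : ℕ => q^(j+1) * (c q k * q^((j+1)*k)) := by
      funext k; rw [pow_reindex2]; ring
    rw [h3, tsum_mul_left]
  have eA : ∑' k : ℕ, ((k:ℕ)+1 : ℂ) * c q (k+1) * q^((j+1)*(k+1))
      = ∑' k : ℕ, (k:ℂ) * c q k * q^((j+1)*k) := by
    have h := Summable.tsum_eq_zero_add hs1
    rw [h]
    push_cast
    norm_num
  simp only [H, G]
  calc (∑' k : ℕ, (k:ℂ) * c q k * q^(j*k))
      = ((0:ℕ):ℂ) * c q 0 * q^(j*0) + ∑' k : ℕ, ((k+1:ℕ):ℂ) * c q (k+1) * q^(j*(k+1)) :=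
        Summable.tsum_eq_zero_add hs
    _ = ∑' k : ℕ, ((k:ℕ)+1 : ℂ) * c q (k+1) * q^(j*(k+1)) := by push_cast; norm_num
    _ = ∑' k : ℕ, (((((k:ℕ)+1 : ℂ)) * c q (k+1) * q^((j+1)*(k+1))
          - (k:ℂ) * c q k * q^((j+1)*(k+1))) - c q k * q^((j+1)*(k+1))) :=
        tsum_congr key
    _ = (∑' k : ℕ, (((k:ℕ)+1 : ℂ) * c q (k+1) * q^((j+1)*(k+1)) - (k:ℂ) * c q k * q^((j+1)*(k+1))))
        - ∑' k : ℕ, c q k * q^((j+1)*(k+1)) := Summable.tsum_sub (hA.sub hB) hC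
    _ = ((∑' k : ℕ, ((k:ℕ)+1 : ℂ) * c q (k+1) * q^((j+1)*(k+1)))
        - ∑' k : ℕ, (k:ℂ) * c q k * q^((j+1)*(k+1)))
        - ∑' k : ℕ, c q k * q^((j+1)*(k+1)) := by rw [Summable.tsum_sub hA hB]
    _ = ((∑' k : ℕ, (k:ℂ) * c q k * q^((j+1)*k))
        - q^(j+1) * ∑' k : ℕ, (k:ℂ) * c q k * q^((j+1)*k))
        - q^(j+1) * ∑' k : ℕ, c q k * q^((j+1)*k) := by rw [eA, eB, eC]
    _ = (1 - q^(j+1)) * (∑' k : ℕ, (k:ℂ) * c q k * q^((j+1)*k))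
        - q^(j+1) * ∑' k : ℕ, c q k * q^((j+1)*k) := by ring

lemma qPoch_succ (N : ℕ) : qPoch q q (N+1) = qPoch q q N * (1 - q * q^N) :=
  Finset.prod_range_succ _ _

lemma pow_succ'' (j : ℕ) : q^(j+1) = q * q^j := pow_succ' q j

include hq in
lemma G_unroll (N : ℕ) : G q 0 = qPoch q q N * G q N := by
  induction N with
  | zero => simp [qPoch]
  | succ n ih =>
    rw [ih, qPoch_succ, G_rec hq n, ← pow_succ'']
    ring

include hq in
lemma H_unroll (N : ℕ) : H q 0 = qPoch q q N * H q N
    - ∑ i ∈ Finset.range N, qPoch q q i * q^(i+1) * G q (i+1) := by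
  induction N with
  | zero => simp [qPoch]
  | succ n ih =>
    rw [H_rec hq n] at ih
    rw [qPoch_succ, Finset.sum_range_succ, ← pow_succ'']
    rw [ih]
    ring

include hq in
lemma tendsto_G : Filter.Tendsto (fun N => G q N) Filter.atTop (nhds 1) := by
  have hr0 : (0:ℝ) ≤ ‖q‖ := norm_nonneg q
  have hgs : Summable (fun k : ℕ => ‖q‖^(k+1) / C q) :=
    (summable_nat_add_iff (f := fun k : ℕ => ‖q‖^k / C q) 1).mpr
      ((summable_geometric_of_lt_one hr0 hq).div_const (C q))
  have key : ∀ N : ℕ, ‖G q N - 1‖ ≤ (∑' k : ℕ, ‖q‖^(k+1) / C q) * ‖q‖^N := by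
    intro N
    have hs := summable_cG hq N
    have h0 : G q N - 1 = ∑' k : ℕ, c q (k+1) * q^(N*(k+1)) := by
      have h := Summable.tsum_eq_zero_add hs
      simp only [G]
      rw [h, c]
      simp [qPoch]
    rw [h0]
    apply tsum_of_norm_bounded (hgs.hasSum.mul_right (‖q‖^N))
    intro k
    rw [norm_mul, norm_pow]
    exact mul_le_mul (c_norm_le hq (k+1))
      (pow_le_pow_of_le_one hr0 hq.le (Nat.le_mul_of_pos_right N (Nat.succ_pos k)))
      (by positivity) (div_nonneg (by positivity) C_pos.le)
  have h1 : Filter.Tendsto (fun N : ℕ => (∑' k : ℕ, ‖q‖^(k+1) / C q) * ‖q‖^N)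
      Filter.atTop (nhds 0) := by
    have := tendsto_pow_atTop_nhds_zero_of_lt_one hr0 hq
    simpa using this.const_mul (∑' k : ℕ, ‖q‖^(k+1) / C q)
  have h2 : Filter.Tendsto (fun N => G q N - 1) Filter.atTop (nhds 0) :=
    squeeze_zero_norm key h1
  have := h2.add_const 1
  simpa using this

include hq in
lemma tendsto_H : Filter.Tendsto (fun N => H q N) Filter.atTop (nhds 0) := by
  have hr0 : (0:ℝ) ≤ ‖q‖ := norm_nonneg q
  have key : ∀ N : ℕ, ‖H q N‖ ≤ (∑' k : ℕ, (k:ℝ) * ‖q‖^k / C q) * ‖q‖^N := by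
    intro N
    apply tsum_of_norm_bounded ((summable_base hq).hasSum.mul_right (‖q‖^N))
    intro k
    rw [norm_mul, norm_mul, norm_pow, Complex.norm_natCast]
    match k with
    | 0 => simp
    | (k+1) =>
      calc ((k+1:ℕ):ℝ) * ‖c q (k+1)‖ * ‖q‖^(N*(k+1))
          ≤ ((k+1:ℕ):ℝ) * (‖q‖^(k+1) / C q) * ‖q‖^N := by
            apply mul_le_mul (mul_le_mul_of_nonneg_left (c_norm_le hq (k+1)) (by positivity))
              (pow_le_pow_of_le_one hr0 hq.le (Nat.le_mul_of_pos_right N (Nat.succ_pos k)))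
              (by positivity)
            exact mul_nonneg (by positivity) (div_nonneg (by positivity) C_pos.le)
        _ = ((k+1:ℕ):ℝ) * ‖q‖^(k+1) / C q * ‖q‖^N := by ring
  have h1 : Filter.Tendsto (fun N : ℕ => (∑' k : ℕ, (k:ℝ) * ‖q‖^k / C q) * ‖q‖^N)
      Filter.atTop (nhds 0) := by
    have := tendsto_pow_atTop_nhds_zero_of_lt_one hr0 hq
    simpa using this.const_mul _
  exact squeeze_zero_norm key h1

include hq in
lemma multipliable_fac : Multipliable (fun k : ℕ => (1:ℂ) - q * q^k) := by
  have hr0 : (0:ℝ) ≤ ‖q‖ := norm_nonneg q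
  have h1r : (0:ℝ) < 1 - ‖q‖ := by linarith
  apply Complex.multipliable_of_summable_log
  apply Summable.of_norm
  apply Summable.of_nonneg_of_le (fun k => norm_nonneg _) (fun k => ?_)
    (((summable_geometric_of_lt_one hr0 hq).mul_left (((1-‖q‖)⁻¹/2 + 1) * ‖q‖)) : Summable
      (fun k : ℕ => ((1-‖q‖)⁻¹/2 + 1) * ‖q‖ * ‖q‖^k))
  have hzn : ‖-(q * q^k)‖ = ‖q‖^(k+1) := by rw [norm_neg, norm_mul, norm_pow, pow_succ']
  have hzr : ‖-(q * q^k)‖ ≤ ‖q‖ := by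
    rw [hzn, pow_succ']
    calc ‖q‖ * ‖q‖^k ≤ ‖q‖ * 1 := mul_le_mul_of_nonneg_left (pow_le_one₀ hr0 hq.le) hr0
      _ = ‖q‖ := by ring
  have hz1 : ‖-(q * q^k)‖ < 1 := lt_of_le_of_lt hzr hq
  have heq : (1:ℂ) - q * q^k = 1 + -(q * q^k) := by ring
  rw [heq]
  set z := -(q * q^k) with hz
  calc ‖Complex.log (1 + z)‖ ≤ ‖z‖^2 * (1 - ‖z‖)⁻¹ / 2 + ‖z‖ :=
        Complex.norm_log_one_add_le hz1
    _ ≤ ‖z‖ * (1 - ‖q‖)⁻¹ / 2 + ‖z‖ := by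
        have h1 : ‖z‖^2 ≤ ‖z‖ := by
          calc ‖z‖^2 = ‖z‖ * ‖z‖ := sq ‖z‖
            _ ≤ ‖z‖ * 1 := mul_le_mul_of_nonneg_left (hz1.le) (norm_nonneg z)
            _ = ‖z‖ := by ring
        have h2 : (1 - ‖z‖)⁻¹ ≤ (1 - ‖q‖)⁻¹ := by
          apply inv_anti₀ h1r
          linarith
        have h3 : ‖z‖^2 * (1 - ‖z‖)⁻¹ ≤ ‖z‖ * (1 - ‖q‖)⁻¹ := by
          apply mul_le_mul h1 h2 (inv_nonneg.mpr (by linarith)) (norm_nonneg z)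
        linarith
    _ = ((1 - ‖q‖)⁻¹/2 + 1) * ‖z‖ := by ring
    _ = ((1 - ‖q‖)⁻¹/2 + 1) * ‖q‖ * ‖q‖^k := by rw [hzn, pow_succ']; ring

include hq in
lemma tendsto_P : Filter.Tendsto (fun N => qPoch q q N) Filter.atTop (nhds (qPochInf q q)) := by
  have h := (multipliable_fac hq).hasProd.tendsto_prod_nat
  simpa [qPoch, qPochInf] using h

include hq in
lemma summable_w : Summable (fun i : ℕ => q^(i+1)/(1 - q^(i+1))) := by
  have hr0 : (0:ℝ) ≤ ‖q‖ := norm_nonneg q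
  have h1r : (0:ℝ) < 1 - ‖q‖ := by linarith
  apply Summable.of_norm
  apply Summable.of_nonneg_of_le (fun k => norm_nonneg _) (fun i => ?_)
    (((summable_geometric_of_lt_one hr0 hq).mul_left (‖q‖/(1-‖q‖))) : Summable
      (fun i : ℕ => ‖q‖/(1-‖q‖) * ‖q‖^i))
  have hpow : ‖q^(i+1)‖ ≤ ‖q‖ := by
    rw [norm_pow, pow_succ']
    calc ‖q‖ * ‖q‖^i ≤ ‖q‖ * 1 := mul_le_mul_of_nonneg_left (pow_le_one₀ hr0 hq.le) hr0
      _ = ‖q‖ := by ring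
  have hden : 1 - ‖q‖ ≤ ‖1 - q^(i+1)‖ := by
    calc 1 - ‖q‖ ≤ 1 - ‖q^(i+1)‖ := by linarith
      _ ≤ ‖(1:ℂ)‖ - ‖q^(i+1)‖ := by norm_num
      _ ≤ ‖1 - q^(i+1)‖ := norm_sub_norm_le _ _
  rw [norm_div]
  calc ‖q^(i+1)‖/‖1 - q^(i+1)‖ ≤ ‖q‖^(i+1)/(1-‖q‖) := by
        apply div_le_div₀ (by positivity) (le_of_eq (norm_pow q (i+1))) h1r hden
    _ = ‖q‖/(1-‖q‖) * ‖q‖^i := by rw [pow_succ']; ring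

include hq in
lemma G0_eq : G q 0 = qPochInf q q := by
  have h1 : Filter.Tendsto (fun N => qPoch q q N * G q N) Filter.atTop
      (nhds (qPochInf q q * 1)) := (tendsto_P hq).mul (tendsto_G hq)
  have h2 : (fun N => qPoch q q N * G q N) = fun _ => G q 0 :=
    funext fun N => (G_unroll hq N).symm
  rw [h2] at h1
  have := tendsto_nhds_unique tendsto_const_nhds h1
  simpa using this

include hq in
lemma H0_eq : H q 0 = -(qPochInf q q) * ∑' i : ℕ, q^(i+1)/(1 - q^(i+1)) := by
  have hterm : ∀ i : ℕ, qPoch q q i * q^(i+1) * G q (i+1)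
      = G q 0 * (q^(i+1)/(1 - q^(i+1))) := by
    intro i
    have h := G_unroll hq (i+1)
    rw [qPoch_succ, ← pow_succ''] at h
    have hne : (1:ℂ) - q^(i+1) ≠ 0 := by rw [pow_succ'']; exact one_sub_ne hq i
    rw [h]
    field_simp
  have h1 : Filter.Tendsto (fun N => qPoch q q N * H q N
      - G q 0 * ∑ i ∈ Finset.range N, q^(i+1)/(1 - q^(i+1))) Filter.atTop
      (nhds (qPochInf q q * 0 - G q 0 * ∑' i : ℕ, q^(i+1)/(1 - q^(i+1)))) := by
    apply Filter.Tendsto.sub ((tendsto_P hq).mul (tendsto_H hq))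
    exact ((summable_w hq).hasSum.tendsto_sum_nat).const_mul _
  have h2 : (fun N => qPoch q q N * H q N
      - G q 0 * ∑ i ∈ Finset.range N, q^(i+1)/(1 - q^(i+1))) = fun _ => H q 0 := by
    funext N
    rw [Finset.mul_sum, H_unroll hq N]
    congr 1
    exact (Finset.sum_congr rfl fun i _ => (hterm i)).symm
  rw [h2] at h1
  have h3 := tendsto_nhds_unique tendsto_const_nhds h1
  rw [G0_eq hq] at h3
  rw [h3]; ring

include hq in
lemma summable_F : Summable (fun p : ℕ × ℕ => q^((p.1+1)*(p.2+1))) := by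
  have hr0 : (0:ℝ) ≤ ‖q‖ := norm_nonneg q
  apply Summable.of_norm
  have hmaj : Summable (fun p : ℕ × ℕ => ‖q‖^p.1 * ‖q‖^p.2) :=
    (summable_geometric_of_lt_one hr0 hq).mul_of_nonneg
      (summable_geometric_of_lt_one hr0 hq)
      (fun i => by positivity) (fun i => by positivity)
  apply Summable.of_nonneg_of_le (fun p => norm_nonneg _) (fun p => ?_) hmaj
  rw [norm_pow]
  calc ‖q‖^((p.1+1)*(p.2+1)) ≤ ‖q‖^(p.1 + p.2) :=
        pow_le_pow_of_le_one hr0 hq.le (by nlinarith [Nat.zero_le (p.1*p.2)])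
    _ = ‖q‖^p.1 * ‖q‖^p.2 := pow_add _ _ _

lemma card_anti (n : ℕ) : (n.divisorsAntidiagonal).card = n.divisors.card := by
  rw [← Nat.image_fst_divisorsAntidiagonal]
  apply (Finset.card_image_of_injOn ?_).symm
  intro x hx y hy hxy
  rw [Finset.mem_coe, Nat.mem_divisorsAntidiagonal] at hx hy
  have hx0 : x.1 ≠ 0 := by rintro h; rw [h, zero_mul] at hx; exact hx.2 hx.1.symm
  have : x.1 * x.2 = y.1 * y.2 := by rw [hx.1, hy.1]
  rw [← hxy] at this
  have h2 : x.2 = y.2 := Nat.eq_of_mul_eq_mul_left (Nat.pos_of_ne_zero hx0) this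
  exact Prod.ext hxy h2

lemma fiber_eq (n : ℕ) (hn : n ≠ 0) :
    (fun p : ℕ × ℕ => (p.1+1)*(p.2+1)) ⁻¹' {n} =
      ↑(n.divisorsAntidiagonal.image (fun x => (x.1 - 1, x.2 - 1))) := by
  ext ⟨a, b⟩
  simp only [Set.mem_preimage, Set.mem_singleton_iff, Finset.coe_image, Set.mem_image,
    Finset.mem_coe, Nat.mem_divisorsAntidiagonal, Prod.exists]
  constructor
  · intro h
    exact ⟨a+1, b+1, ⟨h, hn⟩, by simp⟩
  · rintro ⟨x1, x2, ⟨hmul, -⟩, heq⟩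
    have hx1 : x1 ≠ 0 := by rintro rfl; rw [zero_mul] at hmul; exact hn hmul.symm
    have hx2 : x2 ≠ 0 := by rintro rfl; rw [mul_zero] at hmul; exact hn hmul.symm
    have ha : x1 - 1 = a := by rw [Prod.ext_iff] at heq; exact heq.1
    have hb : x2 - 1 = b := by rw [Prod.ext_iff] at heq; exact heq.2
    rw [← ha, ← hb, Nat.sub_add_cancel (Nat.pos_of_ne_zero hx1),
      Nat.sub_add_cancel (Nat.pos_of_ne_zero hx2)]
    exact hmul

lemma fiber_sum (n : ℕ) (hn : n ≠ 0) :
    ∑' (b : (fun p : ℕ × ℕ => (p.1+1)*(p.2+1)) ⁻¹' {n}), q^((b.val.1+1)*(b.val.2+1))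
      = (n.divisors.card : ℂ) * q^n := by
  rw [fiber_eq n hn]
  rw [Finset.tsum_subtype' (n.divisorsAntidiagonal.image (fun x => (x.1 - 1, x.2 - 1)))
    (fun p => q^((p.1+1)*(p.2+1)))]
  rw [Finset.sum_image ?hinj]
  case hinj =>
    intro x hx y hy hxy
    rw [Finset.mem_coe, Nat.mem_divisorsAntidiagonal] at hx hy
    have hx1 : x.1 ≠ 0 := by rintro h; rw [h, zero_mul] at hx; exact hx.2 hx.1.symm
    have hx2 : x.2 ≠ 0 := by rintro h; rw [h, mul_zero] at hx; exact hx.2 hx.1.symm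
    have hy1 : y.1 ≠ 0 := by rintro h; rw [h, zero_mul] at hy; exact hy.2 hy.1.symm
    have hy2 : y.2 ≠ 0 := by rintro h; rw [h, mul_zero] at hy; exact hy.2 hy.1.symm
    rw [Prod.ext_iff] at hxy ⊢
    obtain ⟨h1, h2⟩ := hxy
    simp only at h1 h2
    omega
  have hconst : ∀ x ∈ n.divisorsAntidiagonal, q^((x.1 - 1 + 1)*(x.2 - 1 + 1)) = q^n := by
    intro x hx
    rw [Nat.mem_divisorsAntidiagonal] at hx
    have hx1 : x.1 ≠ 0 := by rintro h; rw [h, zero_mul] at hx; exact hx.2 hx.1.symm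
    have hx2 : x.2 ≠ 0 := by rintro h; rw [h, mul_zero] at hx; exact hx.2 hx.1.symm
    rw [Nat.sub_add_cancel (Nat.pos_of_ne_zero hx1), Nat.sub_add_cancel (Nat.pos_of_ne_zero hx2),
      hx.1]
  rw [Finset.sum_congr rfl hconst, Finset.sum_const, card_anti, nsmul_eq_mul]

include hq in
lemma lambert : ∑' i : ℕ, q^(i+1)/(1 - q^(i+1)) =
    ∑' k : ℕ, (((k+1).divisors.card : ℕ) : ℂ) * q^(k+1) := by
  have hr0 : (0:ℝ) ≤ ‖q‖ := norm_nonneg q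
  have hF := summable_F hq
  -- step 1: LHS = double sum
  have hgeo : ∀ i : ℕ, q^(i+1)/(1 - q^(i+1)) = ∑' m : ℕ, q^((i+1)*(m+1)) := by
    intro i
    have hlt : ‖q^(i+1)‖ < 1 := by
      rw [norm_pow, pow_succ']
      calc ‖q‖ * ‖q‖^i ≤ ‖q‖ * 1 := mul_le_mul_of_nonneg_left (pow_le_one₀ hr0 hq.le) hr0
        _ = ‖q‖ := by ring
        _ < 1 := hq
    have h1 : ∀ m : ℕ, q^((i+1)*(m+1)) = q^(i+1) * (q^(i+1))^m := by
      intro m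
      rw [← pow_mul]
      congr 1
      ring
    rw [tsum_congr h1, tsum_mul_left, tsum_geometric_of_norm_lt_one hlt]
    rw [div_eq_mul_inv, mul_comm]
  have hdouble : ∑' i : ℕ, q^(i+1)/(1 - q^(i+1)) = ∑' p : ℕ × ℕ, q^((p.1+1)*(p.2+1)) := by
    rw [Summable.tsum_prod hF]
    exact tsum_congr hgeo
  -- step 2: fiberwise
  have hfib := hF.hasSum.tsum_fiberwise (fun p : ℕ × ℕ => (p.1+1)*(p.2+1))
  -- hfib : HasSum (fun n => ∑' b : fiber n, F b) (∑' F)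
  have hset : (fun p : ℕ × ℕ => (p.1+1)*(p.2+1)) ⁻¹' {0} = (∅ : Set (ℕ × ℕ)) := by
    rw [Set.eq_empty_iff_forall_notMem]
    rintro ⟨a, b⟩ h
    simp only [Set.mem_preimage, Set.mem_singleton_iff] at h
    rcases Nat.mul_eq_zero.mp h with h1 | h1 <;> omega
  have h0 : (∑' (b : (fun p : ℕ × ℕ => (p.1+1)*(p.2+1)) ⁻¹' {0}), q^((b.val.1+1)*(b.val.2+1)))
      = 0 := by
    rw [hset]
    exact tsum_empty
  have hu := hfib.summable
  have hS := hfib.tsum_eq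
  rw [hdouble, ← hS, Summable.tsum_eq_zero_add hu, h0, zero_add]
  exact tsum_congr fun k => fiber_sum (k+1) (Nat.succ_ne_zero k)


end Stmt2Aux

theorem stmt2 (q : ℂ) (hq : ‖q‖ < 1) :
    ∑' k : ℕ, (k : ℂ) * (-1) ^ k * q ^ (k * (k + 1) / 2) / qPoch q q k =
      -(qPochInf q q) * ∑' k : ℕ, (((k + 1).divisors.card : ℕ) : ℂ) * q ^ (k + 1) := by
  have hq' : ‖q‖ < 1 := by exact hq
  have h1 : (∑' k : ℕ, (k : ℂ) * (-1) ^ k * q ^ (k * (k + 1) / 2) / qPoch q q k)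
      = Stmt2Aux.H q 0 := by
    simp only [Stmt2Aux.H, Stmt2Aux.c]
    apply tsum_congr
    intro k
    rw [Nat.zero_mul, pow_zero, mul_one, mul_div_assoc, mul_div_assoc, mul_assoc]
  rw [h1, Stmt2Aux.H0_eq hq', Stmt2Aux.lambert hq']
end

section
/- Let q be a complex number with 0 < |q| < 1, let m ≥ 0 be an integer, and let a be a nonzero complex number with |1/(a·q^m)| < 1. Then ∑_{n=0}^{∞} n·((a;q)_n/(q;q)_n)·(1/(a·q^m))^n = (−1)^{m+1}·q^{−m(m+1)/2}·(q;q)_m·(q;q)_∞/(1/(a·q^m);q)_∞. -/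
open Complex Finset Filter Topology

/-! ### Auxiliary development -/

/-- `1 - x ≥ exp(-(x/(1-b)))` for `0 ≤ x ≤ b < 1`. -/
lemma aux_exp_neg_le_one_sub {x b : ℝ} (hx0 : 0 ≤ x) (hxb : x ≤ b) (hb : b < 1) :
    Real.exp (-(x / (1 - b))) ≤ 1 - x := by
  have h1b : 0 < 1 - b := by linarith
  have h1x : 0 < 1 - x := by linarith
  have h := Real.add_one_le_exp (x / (1 - b))
  have h2 : (1 : ℝ) ≤ (1 - x) * (x / (1 - b) + 1) := by
    rw [← sub_nonneg]
    have he : (1 - x) * (x / (1 - b) + 1) - 1 = x * (b - x) / (1 - b) := by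
      field_simp; ring
    rw [he]
    have : 0 ≤ x * (b - x) := mul_nonneg hx0 (by linarith)
    positivity
  have h3 : (1 : ℝ) ≤ (1 - x) * Real.exp (x / (1 - b)) := by
    refine h2.trans ?_
    exact mul_le_mul_of_nonneg_left h h1x.le
  calc Real.exp (-(x / (1 - b))) = 1 / Real.exp (x / (1 - b)) := by
        rw [Real.exp_neg, one_div]
    _ ≤ 1 - x := by
        rw [div_le_iff₀ (Real.exp_pos _)]
        linarith [h3]

lemma aux_norm_qPoch_le {q : ℂ} (hq1 : ‖q‖ < 1) (x : ℂ) (N : ℕ) :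
    ‖qPoch x q N‖ ≤ Real.exp (‖x‖ * (1 - ‖q‖)⁻¹) := by
  have h1q : 0 < 1 - ‖q‖ := by linarith
  rw [qPoch, norm_prod]
  calc ∏ k ∈ range N, ‖1 - x * q ^ k‖
      ≤ ∏ k ∈ range N, Real.exp (‖x‖ * ‖q‖ ^ k) := by
        apply Finset.prod_le_prod (fun k _ => norm_nonneg _)
        intro k _
        have h1 : ‖1 - x * q ^ k‖ ≤ 1 + ‖x‖ * ‖q‖ ^ k := by
          calc ‖1 - x * q ^ k‖ ≤ ‖(1 : ℂ)‖ + ‖x * q ^ k‖ := norm_sub_le _ _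
            _ = 1 + ‖x‖ * ‖q‖ ^ k := by rw [norm_one, norm_mul, norm_pow]
        refine h1.trans ?_
        have := Real.add_one_le_exp (‖x‖ * ‖q‖ ^ k)
        linarith
    _ = Real.exp (∑ k ∈ range N, ‖x‖ * ‖q‖ ^ k) := (Real.exp_sum _ _).symm
    _ ≤ Real.exp (‖x‖ * (1 - ‖q‖)⁻¹) := by
        apply Real.exp_le_exp.2
        have hsum : ∑ k ∈ range N, ‖q‖ ^ k ≤ (1 - ‖q‖)⁻¹ := by
          have h := Summable.sum_le_tsum (range N) (fun i _ => by positivity)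
            (summable_geometric_of_lt_one (norm_nonneg q) hq1)
          rwa [tsum_geometric_of_lt_one (norm_nonneg q) hq1] at h
        calc ∑ k ∈ range N, ‖x‖ * ‖q‖ ^ k = ‖x‖ * ∑ k ∈ range N, ‖q‖ ^ k := by
              rw [Finset.mul_sum]
          _ ≤ ‖x‖ * (1 - ‖q‖)⁻¹ := mul_le_mul_of_nonneg_left hsum (norm_nonneg x)

lemma aux_exp_le_norm_qPoch {q : ℂ} (hq1 : ‖q‖ < 1) {x : ℂ} (hx : ‖x‖ < 1) (N : ℕ) :
    Real.exp (-(‖x‖ / (1 - ‖x‖) * (1 - ‖q‖)⁻¹)) ≤ ‖qPoch x q N‖ := by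
  have h1q : 0 < 1 - ‖q‖ := by linarith
  have h1x : 0 < 1 - ‖x‖ := by linarith
  rw [qPoch, norm_prod]
  have step : ∀ k ∈ range N,
      Real.exp (-(‖x‖ * ‖q‖ ^ k / (1 - ‖x‖))) ≤ ‖1 - x * q ^ k‖ := by
    intro k _
    have hqk : ‖q‖ ^ k ≤ 1 := pow_le_one₀ (norm_nonneg q) hq1.le
    have hxq : ‖x‖ * ‖q‖ ^ k ≤ ‖x‖ := by
      calc ‖x‖ * ‖q‖ ^ k ≤ ‖x‖ * 1 := mul_le_mul_of_nonneg_left hqk (norm_nonneg x)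
        _ = ‖x‖ := mul_one _
    have h1 : Real.exp (-(‖x‖ * ‖q‖ ^ k / (1 - ‖x‖))) ≤ 1 - ‖x‖ * ‖q‖ ^ k :=
      aux_exp_neg_le_one_sub (by positivity) hxq hx
    refine h1.trans ?_
    have h2 := norm_sub_norm_le (1 : ℂ) (x * q ^ k)
    rw [norm_one, norm_mul, norm_pow] at h2
    linarith
  calc Real.exp (-(‖x‖ / (1 - ‖x‖) * (1 - ‖q‖)⁻¹))
      ≤ ∏ k ∈ range N, Real.exp (-(‖x‖ * ‖q‖ ^ k / (1 - ‖x‖))) := by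
        rw [← Real.exp_sum]
        apply Real.exp_le_exp.2
        have hsum : ∑ k ∈ range N, ‖q‖ ^ k ≤ (1 - ‖q‖)⁻¹ := by
          have h := Summable.sum_le_tsum (range N) (fun i _ => by positivity)
            (summable_geometric_of_lt_one (norm_nonneg q) hq1)
          rwa [tsum_geometric_of_lt_one (norm_nonneg q) hq1] at h
        have key : ∑ k ∈ range N, ‖x‖ * ‖q‖ ^ k / (1 - ‖x‖)
            ≤ ‖x‖ / (1 - ‖x‖) * (1 - ‖q‖)⁻¹ := by
          have he : ∑ k ∈ range N, ‖x‖ * ‖q‖ ^ k / (1 - ‖x‖)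
              = ‖x‖ / (1 - ‖x‖) * ∑ k ∈ range N, ‖q‖ ^ k := by
            rw [Finset.mul_sum]
            exact Finset.sum_congr rfl fun k _ => by ring
          rw [he]
          exact mul_le_mul_of_nonneg_left hsum (by positivity)
        have he2 : ∑ k ∈ range N, -(‖x‖ * ‖q‖ ^ k / (1 - ‖x‖))
            = -(∑ k ∈ range N, ‖x‖ * ‖q‖ ^ k / (1 - ‖x‖)) :=
          Finset.sum_neg_distrib _
        rw [he2]
        linarith
    _ ≤ ∏ k ∈ range N, ‖1 - x * q ^ k‖ :=
        Finset.prod_le_prod (fun k _ => (Real.exp_pos _).le) step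

lemma aux_one_sub_ne {q x : ℂ} (hq1 : ‖q‖ < 1) (hx : ‖x‖ < 1) (k : ℕ) :
    1 - x * q ^ k ≠ 0 := by
  intro h
  have h1 : x * q ^ k = 1 := by
    have := sub_eq_zero.mp h
    exact this.symm
  have h2 : ‖x * q ^ k‖ < 1 := by
    rw [norm_mul, norm_pow]
    have hqk : ‖q‖ ^ k ≤ 1 := pow_le_one₀ (norm_nonneg q) hq1.le
    calc ‖x‖ * ‖q‖ ^ k ≤ ‖x‖ * 1 := mul_le_mul_of_nonneg_left hqk (norm_nonneg x)
      _ < 1 := by simpa using hx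
  rw [h1, norm_one] at h2
  exact lt_irrefl _ h2

lemma aux_qPoch_ne_zero {q x : ℂ} (hq1 : ‖q‖ < 1) (hx : ‖x‖ < 1) (N : ℕ) :
    qPoch x q N ≠ 0 := by
  rw [qPoch]
  exact Finset.prod_ne_zero_iff.2 fun k _ => aux_one_sub_ne hq1 hx k

/-- The coefficient `c_n = (a;q)_n / (q;q)_n`. -/
noncomputable def auxC (q a : ℂ) (n : ℕ) : ℂ := qPoch a q n / qPoch q q n

lemma auxC_zero (q a : ℂ) : auxC q a 0 = 1 := by simp [auxC, qPoch]

lemma auxC_bound {q : ℂ} (hq1 : ‖q‖ < 1) (a : ℂ) :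
    ∃ M : ℝ, 0 < M ∧ ∀ n, ‖auxC q a n‖ ≤ M := by
  refine ⟨Real.exp (‖a‖ * (1 - ‖q‖)⁻¹) * Real.exp (‖q‖ / (1 - ‖q‖) * (1 - ‖q‖)⁻¹),
    by positivity, fun n => ?_⟩
  rw [auxC, norm_div]
  have hlow : Real.exp (-(‖q‖ / (1 - ‖q‖) * (1 - ‖q‖)⁻¹)) ≤ ‖qPoch q q n‖ :=
    aux_exp_le_norm_qPoch hq1 hq1 n
  have hup : ‖qPoch a q n‖ ≤ Real.exp (‖a‖ * (1 - ‖q‖)⁻¹) := aux_norm_qPoch_le hq1 a n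
  calc ‖qPoch a q n‖ / ‖qPoch q q n‖
      ≤ Real.exp (‖a‖ * (1 - ‖q‖)⁻¹) / Real.exp (-(‖q‖ / (1 - ‖q‖) * (1 - ‖q‖)⁻¹)) :=
        div_le_div₀ (by positivity) hup (Real.exp_pos _) hlow
    _ = Real.exp (‖a‖ * (1 - ‖q‖)⁻¹) * Real.exp (‖q‖ / (1 - ‖q‖) * (1 - ‖q‖)⁻¹) := by
        rw [Real.exp_neg, div_eq_mul_inv, inv_inv]

lemma aux_summable_T {q a z : ℂ} (hq1 : ‖q‖ < 1) (hz : ‖z‖ < 1) :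
    Summable (fun n => auxC q a n * z ^ n) := by
  obtain ⟨M, hM0, hM⟩ := auxC_bound hq1 a
  apply Summable.of_norm_bounded
    ((summable_geometric_of_lt_one (norm_nonneg z) hz).mul_left M)
  intro n
  rw [norm_mul, norm_pow]
  exact mul_le_mul_of_nonneg_right (hM n) (by positivity)

lemma aux_summable_S {q a z : ℂ} (hq1 : ‖q‖ < 1) (hz : ‖z‖ < 1) :
    Summable (fun n : ℕ => (n : ℂ) * auxC q a n * z ^ n) := by
  obtain ⟨M, hM0, hM⟩ := auxC_bound hq1 a
  have hg : Summable (fun n : ℕ => M * ((n : ℝ) ^ 1 * ‖z‖ ^ n)) := by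
    apply Summable.mul_left M
    have : ‖(‖z‖ : ℝ)‖ < 1 := by
      rw [Real.norm_eq_abs, _root_.abs_of_nonneg (norm_nonneg z)]; exact hz
    exact summable_pow_mul_geometric_of_norm_lt_one 1 this
  apply Summable.of_norm_bounded hg
  intro n
  rw [norm_mul, norm_mul, norm_pow, Complex.norm_natCast]
  calc (n : ℝ) * ‖auxC q a n‖ * ‖z‖ ^ n
      ≤ (n : ℝ) * M * ‖z‖ ^ n := by
        apply mul_le_mul_of_nonneg_right _ (by positivity)
        exact mul_le_mul_of_nonneg_left (hM n) (Nat.cast_nonneg n)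
    _ = M * ((n : ℝ) ^ 1 * ‖z‖ ^ n) := by ring

lemma auxC_rec {q : ℂ} (hq1 : ‖q‖ < 1) (a : ℂ) (n : ℕ) :
    auxC q a (n + 1) * (1 - q * q ^ n) = auxC q a n * (1 - a * q ^ n) := by
  have h1 : qPoch q q n ≠ 0 := aux_qPoch_ne_zero hq1 hq1 n
  have h2 : 1 - q * q ^ n ≠ 0 := aux_one_sub_ne hq1 hq1 n
  have e1 : qPoch a q (n + 1) = qPoch a q n * (1 - a * q ^ n) := by
    rw [qPoch, qPoch, Finset.prod_range_succ]
  have e2 : qPoch q q (n + 1) = qPoch q q n * (1 - q * q ^ n) := by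
    rw [qPoch, qPoch, Finset.prod_range_succ]
  rw [auxC, auxC, e1, e2]
  rw [div_mul_eq_mul_div, mul_div_mul_right _ _ h2]
  ring

/-- `T(z) = ∑ c_n z^n`. -/
noncomputable def auxT (q a z : ℂ) : ℂ := ∑' n : ℕ, auxC q a n * z ^ n

/-- `S(z) = ∑ n c_n z^n`. -/
noncomputable def auxS (q a z : ℂ) : ℂ := ∑' n : ℕ, (n : ℂ) * auxC q a n * z ^ n

lemma aux_trick {f : ℕ → ℂ} (hf : Summable f) (s : ℂ) :
    (1 - s) * ∑' n, f n = f 0 + ∑' n, (f (n + 1) - s * f n) := by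
  have h1 : Summable (fun n => f (n + 1)) := (summable_nat_add_iff 1).2 hf
  have h2 : Summable (fun n => s * f n) := hf.mul_left s
  rw [Summable.tsum_sub h1 h2, tsum_mul_left, Summable.tsum_eq_zero_add hf]
  ring

lemma aux_trick2 {F u : ℕ → ℂ} (hF : Summable F) (hu : Summable u) (s : ℂ) :
    (1 - s) * (∑' n, F n) - s * ∑' n, u n
      = F 0 + ∑' n, (F (n + 1) - s * F n - s * u n) := by
  have h1 : Summable (fun n => F (n + 1)) := (summable_nat_add_iff 1).2 hF
  have h2 : Summable (fun n => s * F n) := hF.mul_left s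
  have h3 : Summable (fun n => s * u n) := hu.mul_left s
  rw [Summable.tsum_sub (h1.sub h2) h3, Summable.tsum_sub h1 h2, tsum_mul_left, tsum_mul_left,
    Summable.tsum_eq_zero_add hF, Summable.tsum_eq_zero_add hu]
  ring

lemma aux_funeq_T {q a : ℂ} (hq1 : ‖q‖ < 1) {z : ℂ} (hz : ‖z‖ < 1) :
    (1 - z) * auxT q a z = (1 - a * z) * auxT q a (q * z) := by
  have hqz : ‖q * z‖ < 1 := by
    rw [norm_mul]
    nlinarith [norm_nonneg q, norm_nonneg z]
  have hu : Summable (fun n => auxC q a n * z ^ n) := aux_summable_T hq1 hz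
  have hv : Summable (fun n => auxC q a n * (q * z) ^ n) := aux_summable_T hq1 hqz
  rw [auxT, auxT, aux_trick hu z, aux_trick hv (a * z)]
  simp only [auxC_zero, pow_zero, mul_one, one_mul]
  congr 1
  apply tsum_congr
  intro n
  have h := auxC_rec hq1 a n
  linear_combination (z ^ (n + 1)) * h

lemma aux_funeq_S {q a : ℂ} (hq1 : ‖q‖ < 1) {z : ℂ} (hz : ‖z‖ < 1) :
    (1 - z) * auxS q a z - z * auxT q a z
      = (1 - a * z) * auxS q a (q * z) - a * z * auxT q a (q * z) := by
  have hqz : ‖q * z‖ < 1 := by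
    rw [norm_mul]
    nlinarith [norm_nonneg q, norm_nonneg z]
  have hF : Summable (fun n : ℕ => (n : ℂ) * auxC q a n * z ^ n) := aux_summable_S hq1 hz
  have hu : Summable (fun n => auxC q a n * z ^ n) := aux_summable_T hq1 hz
  have hG : Summable (fun n : ℕ => (n : ℂ) * auxC q a n * (q * z) ^ n) := aux_summable_S hq1 hqz
  have hv : Summable (fun n => auxC q a n * (q * z) ^ n) := aux_summable_T hq1 hqz
  rw [auxS, auxT, auxS, auxT, aux_trick2 hF hu z, aux_trick2 hG hv (a * z)]
  simp only [Nat.cast_zero, zero_mul]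
  congr 1
  apply tsum_congr
  intro n
  have h := auxC_rec hq1 a n
  push_cast
  linear_combination (((n : ℂ) + 1) * z ^ (n + 1)) * h

lemma aux_hasProd {q x : ℂ} (hq1 : ‖q‖ < 1) (h0 : ∀ k, 1 - x * q ^ k ≠ 0) :
    HasProd (fun k : ℕ => 1 - x * q ^ k) (qPochInf x q) ∧ qPochInf x q ≠ 0 := by
  have hs : Summable (fun k : ℕ => x * q ^ k) :=
    (summable_geometric_of_norm_lt_one hq1).mul_left x
  have hlog : Summable (fun k => Complex.log (1 - x * q ^ k)) := hs.clog_one_sub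
  have hp := hlog.hasSum.cexp
  have he : (Complex.exp ∘ fun k => Complex.log (1 - x * q ^ k))
      = fun k : ℕ => 1 - x * q ^ k := by
    funext k
    simp only [Function.comp_apply]
    exact Complex.exp_log (h0 k)
  rw [he] at hp
  constructor
  · rw [qPochInf, hp.tprod_eq]
    exact hp
  · rw [qPochInf, hp.tprod_eq]
    exact Complex.exp_ne_zero _

lemma auxT_tendsto_one {q a : ℂ} (hq1 : ‖q‖ < 1) {w : ℂ} (hw : ‖w‖ < 1) :
    Tendsto (fun N : ℕ => auxT q a (q ^ N * w)) atTop (𝓝 1) := by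
  obtain ⟨M, hM0, hM⟩ := auxC_bound hq1 a
  have key : ∀ N : ℕ, ‖q‖ ^ N ≤ 2⁻¹ → ‖auxT q a (q ^ N * w) - 1‖ ≤ 2 * M * ‖q‖ ^ N := by
    intro N hN
    have hζ : ‖q ^ N * w‖ ≤ ‖q‖ ^ N := by
      rw [norm_mul, norm_pow]
      calc ‖q‖ ^ N * ‖w‖ ≤ ‖q‖ ^ N * 1 := mul_le_mul_of_nonneg_left hw.le (by positivity)
        _ = ‖q‖ ^ N := mul_one _
    have hζh : ‖q ^ N * w‖ ≤ 2⁻¹ := hζ.trans hN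
    have hζ1 : ‖q ^ N * w‖ < 1 := lt_of_le_of_lt hζh (by norm_num)
    have hsum : Summable (fun n => auxC q a n * (q ^ N * w) ^ n) := aux_summable_T hq1 hζ1
    have hTT : auxT q a (q ^ N * w) - 1 = ∑' n, auxC q a (n + 1) * (q ^ N * w) ^ (n + 1) := by
      rw [auxT, Summable.tsum_eq_zero_add hsum]
      simp [auxC_zero]
    rw [hTT]
    have hb : ∀ n : ℕ, ‖auxC q a (n + 1) * (q ^ N * w) ^ (n + 1)‖
        ≤ M * ‖q‖ ^ N * 2⁻¹ ^ n := by
      intro n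
      rw [norm_mul, norm_pow]
      calc ‖auxC q a (n + 1)‖ * ‖q ^ N * w‖ ^ (n + 1)
          ≤ M * ‖q ^ N * w‖ ^ (n + 1) :=
            mul_le_mul_of_nonneg_right (hM _) (by positivity)
        _ = M * ‖q ^ N * w‖ * ‖q ^ N * w‖ ^ n := by ring
        _ ≤ M * ‖q‖ ^ N * 2⁻¹ ^ n := by
            apply mul_le_mul
            · exact mul_le_mul_of_nonneg_left hζ hM0.le
            · exact pow_le_pow_left₀ (norm_nonneg _) hζh n
            · positivity
            · positivity
    have hgs : Summable (fun n : ℕ => M * ‖q‖ ^ N * 2⁻¹ ^ n) :=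
      (summable_geometric_of_lt_one (by norm_num) (by norm_num)).mul_left _
    have hns : Summable (fun n => ‖auxC q a (n + 1) * (q ^ N * w) ^ (n + 1)‖) :=
      Summable.of_nonneg_of_le (fun n => norm_nonneg _) hb hgs
    calc ‖∑' n, auxC q a (n + 1) * (q ^ N * w) ^ (n + 1)‖
        ≤ ∑' n, ‖auxC q a (n + 1) * (q ^ N * w) ^ (n + 1)‖ := norm_tsum_le_tsum_norm hns
      _ ≤ ∑' n : ℕ, M * ‖q‖ ^ N * 2⁻¹ ^ n := Summable.tsum_le_tsum hb hns hgs
      _ = M * ‖q‖ ^ N * (1 - 2⁻¹)⁻¹ := by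
          rw [tsum_mul_left, tsum_geometric_of_lt_one (by norm_num) (by norm_num)]
      _ = 2 * M * ‖q‖ ^ N := by norm_num; ring
  have h0 : Tendsto (fun N : ℕ => ‖q‖ ^ N) atTop (𝓝 0) :=
    tendsto_pow_atTop_nhds_zero_of_lt_one (norm_nonneg q) hq1
  have hev : ∀ᶠ N in atTop, ‖auxT q a (q ^ N * w) - 1‖ ≤ 2 * M * ‖q‖ ^ N := by
    filter_upwards [h0.eventually_lt_const (by norm_num : (0 : ℝ) < 2⁻¹)] with N hN
    exact key N hN.le
  have hg0 : Tendsto (fun N : ℕ => 2 * M * ‖q‖ ^ N) atTop (𝓝 0) := by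
    simpa using h0.const_mul (2 * M)
  have := squeeze_zero_norm' hev hg0
  exact tendsto_sub_nhds_zero_iff.mp this

lemma aux_qbinom {q a : ℂ} (hq1 : ‖q‖ < 1) {w : ℂ} (hw : ‖w‖ < 1)
    (h0a : ∀ k, 1 - a * w * q ^ k ≠ 0) :
    qPochInf w q * auxT q a w = qPochInf (a * w) q := by
  have hqpow : ∀ N : ℕ, ‖q ^ N * w‖ < 1 := by
    intro N
    rw [norm_mul, norm_pow]
    calc ‖q‖ ^ N * ‖w‖ ≤ 1 * ‖w‖ :=
          mul_le_mul_of_nonneg_right (pow_le_one₀ (norm_nonneg q) hq1.le) (norm_nonneg w)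
      _ < 1 := by simpa using hw
  have iter : ∀ N : ℕ, qPoch w q N * auxT q a w = qPoch (a * w) q N * auxT q a (q ^ N * w) := by
    intro N
    induction N with
    | zero => simp [qPoch]
    | succ N ih =>
      have hfe := aux_funeq_T (a := a) hq1 (hqpow N)
      have e1 : qPoch w q (N + 1) = qPoch w q N * (1 - w * q ^ N) := by
        rw [qPoch, qPoch, Finset.prod_range_succ]
      have e2 : qPoch (a * w) q (N + 1) = qPoch (a * w) q N * (1 - a * w * q ^ N) := by
        rw [qPoch, qPoch, Finset.prod_range_succ]
      have e3 : q * (q ^ N * w) = q ^ (N + 1) * w := by ring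
      rw [e3] at hfe
      rw [e1, e2]
      calc qPoch w q N * (1 - w * q ^ N) * auxT q a w
          = qPoch w q N * auxT q a w * (1 - w * q ^ N) := by ring
        _ = qPoch (a * w) q N * auxT q a (q ^ N * w) * (1 - w * q ^ N) := by rw [ih]
        _ = qPoch (a * w) q N * ((1 - q ^ N * w) * auxT q a (q ^ N * w)) := by ring
        _ = qPoch (a * w) q N * ((1 - a * (q ^ N * w)) * auxT q a (q ^ (N + 1) * w)) := by
            rw [hfe]
        _ = qPoch (a * w) q N * (1 - a * w * q ^ N) * auxT q a (q ^ (N + 1) * w) := by ring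
  have h0w : ∀ k, 1 - w * q ^ k ≠ 0 := fun k => aux_one_sub_ne hq1 hw k
  have hPw := (aux_hasProd hq1 h0w).1
  have hPaw := (aux_hasProd hq1 h0a).1
  have t1 : Tendsto (fun N : ℕ => qPoch w q N * auxT q a w) atTop
      (𝓝 (qPochInf w q * auxT q a w)) := hPw.tendsto_prod_nat.mul_const _
  have t2 : Tendsto (fun N : ℕ => qPoch (a * w) q N * auxT q a (q ^ N * w)) atTop
      (𝓝 (qPochInf (a * w) q * 1)) :=
    hPaw.tendsto_prod_nat.mul (auxT_tendsto_one hq1 hw)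
  have := tendsto_nhds_unique (t1.congr iter) t2
  simpa using this

lemma aux_qPochInf_split {q x : ℂ} (hq1 : ‖q‖ < 1) (hx : ‖x‖ < 1) (N : ℕ) :
    qPochInf x q = qPoch x q N * qPochInf (x * q ^ N) q := by
  have h0 : ∀ k, 1 - x * q ^ k ≠ 0 := fun k => aux_one_sub_ne hq1 hx k
  have hxN : ‖x * q ^ N‖ < 1 := by
    rw [norm_mul, norm_pow]
    calc ‖x‖ * ‖q‖ ^ N ≤ ‖x‖ * 1 :=
          mul_le_mul_of_nonneg_left (pow_le_one₀ (norm_nonneg q) hq1.le) (norm_nonneg x)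
      _ < 1 := by simpa using hx
  have h0' : ∀ k, 1 - x * q ^ N * q ^ k ≠ 0 := fun k => aux_one_sub_ne hq1 hxN k
  have hP := (aux_hasProd hq1 h0).1
  have hP' := (aux_hasProd hq1 h0').1
  have e : ∀ n : ℕ, qPoch x q (n + N) = qPoch x q N * qPoch (x * q ^ N) q n := by
    intro n
    rw [add_comm, qPoch, qPoch, qPoch, Finset.prod_range_add]
    congr 1
    apply Finset.prod_congr rfl
    intro k _
    rw [pow_add]
    ring
  have t1 : Tendsto (fun n : ℕ => qPoch x q (n + N)) atTop (𝓝 (qPochInf x q)) :=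
    hP.tendsto_prod_nat.comp (tendsto_add_atTop_nat N)
  have t2 : Tendsto (fun n : ℕ => qPoch x q N * qPoch (x * q ^ N) q n) atTop
      (𝓝 (qPoch x q N * qPochInf (x * q ^ N) q)) :=
    hP'.tendsto_prod_nat.const_mul _
  exact tendsto_nhds_unique (t1.congr e) t2

theorem stmt5 (q a : ℂ) (hq0 : 0 < ‖q‖) (hq1 : ‖q‖ < 1)
    (m : ℕ) (ha : a ≠ 0) (habs : ‖1 / (a * q ^ m)‖ < 1) :
    ∑' n : ℕ, (n : ℂ) * (qPoch a q n / qPoch q q n) * (1 / (a * q ^ m)) ^ n =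
      (-1) ^ (m + 1) * q ^ (-((m * (m + 1) / 2 : ℕ) : ℤ)) * qPoch q q m *
        qPochInf q q / qPochInf (1 / (a * q ^ m)) q := by
  have hq : q ≠ 0 := by
    intro h
    rw [h] at hq0
    simp at hq0
  have hq1' : ‖q‖ < 1 := by exact hq1
  set z0 : ℂ := 1 / (a * q ^ m) with hz0def
  have haqm : a * q ^ m ≠ 0 := mul_ne_zero ha (pow_ne_zero _ hq)
  have hz0 : ‖z0‖ < 1 := by exact habs
  have haz0 : a * z0 = (q ^ m)⁻¹ := by
    rw [hz0def]
    field_simp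
  have hlad : ∀ j : ℕ, ‖z0 * q ^ j‖ < 1 := by
    intro j
    rw [norm_mul, norm_pow]
    calc ‖z0‖ * ‖q‖ ^ j ≤ ‖z0‖ * 1 :=
          mul_le_mul_of_nonneg_left (pow_le_one₀ (norm_nonneg q) hq1'.le) (norm_nonneg z0)
      _ < 1 := by simpa using hz0
  have ham : a * (z0 * q ^ m) = 1 := by
    rw [hz0def]
    field_simp
  -- vanishing of T along the ladder
  have Tzero : ∀ d : ℕ, d ≤ m → auxT q a (z0 * q ^ (m - d)) = 0 := by
    intro d
    induction d with
    | zero =>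
      intro _
      have hfe := aux_funeq_T (a := a) hq1' (hlad m)
      rw [ham] at hfe
      simp only [sub_self, zero_mul] at hfe
      have hne : 1 - z0 * q ^ m ≠ 0 := aux_one_sub_ne hq1' hz0 m
      have := (mul_eq_zero.mp hfe).resolve_left hne
      simpa using this
    | succ d ih =>
      intro hd
      have hdm : d ≤ m := Nat.le_of_succ_le hd
      have hstep : m - d = (m - (d + 1)) + 1 := by omega
      have hfe := aux_funeq_T (a := a) hq1' (hlad (m - (d + 1)))
      have he : q * (z0 * q ^ (m - (d + 1))) = z0 * q ^ (m - d) := by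
        rw [hstep, pow_succ]
        ring
      rw [he, ih hdm, mul_zero] at hfe
      have hne : 1 - z0 * q ^ (m - (d + 1)) ≠ 0 := aux_one_sub_ne hq1' hz0 (m - (d + 1))
      exact (mul_eq_zero.mp hfe).resolve_left hne
  -- the recursion for S
  have hS : ∀ d : ℕ, d ≤ m →
      qPoch z0 q (d + 1) * auxS q a z0
        = qPoch (a * z0) q d * ((1 - a * (z0 * q ^ d)) * auxS q a (z0 * q ^ (d + 1))
            - a * (z0 * q ^ d) * auxT q a (z0 * q ^ (d + 1))) := by
    intro d
    induction d with
    | zero =>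
      intro _
      have hT0 : auxT q a z0 = 0 := by
        have := Tzero m le_rfl
        simpa using this
      have hfe := aux_funeq_S (a := a) hq1' hz0
      rw [hT0, mul_zero, sub_zero] at hfe
      have harg : q * z0 = z0 * q ^ 1 := by ring
      rw [harg] at hfe
      have e1 : qPoch z0 q 1 = 1 - z0 := by simp [qPoch]
      have e0 : qPoch (a * z0) q 0 = 1 := by simp [qPoch]
      rw [e1, e0]
      linear_combination hfe
    | succ d ih =>
      intro hd
      have hdm : d ≤ m := Nat.le_of_succ_le hd
      have hprev := ih hdm
      have hT : auxT q a (z0 * q ^ (d + 1)) = 0 := by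
        have h := Tzero (m - (d + 1)) (by omega)
        have he : m - (m - (d + 1)) = d + 1 := by omega
        rwa [he] at h
      rw [hT, mul_zero, sub_zero] at hprev
      have hfe := aux_funeq_S (a := a) hq1' (hlad (d + 1))
      rw [hT, mul_zero, sub_zero] at hfe
      have harg : q * (z0 * q ^ (d + 1)) = z0 * q ^ (d + 1 + 1) := by ring
      rw [harg] at hfe
      have e1 : qPoch z0 q (d + 1 + 1) = qPoch z0 q (d + 1) * (1 - z0 * q ^ (d + 1)) := by
        rw [qPoch, qPoch, Finset.prod_range_succ]
      have e2 : qPoch (a * z0) q (d + 1) = qPoch (a * z0) q d * (1 - a * z0 * q ^ d) := by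
        rw [qPoch, qPoch, Finset.prod_range_succ]
      rw [e1, e2]
      linear_combination (1 - z0 * q ^ (d + 1)) * hprev
        + (qPoch (a * z0) q d * (1 - a * (z0 * q ^ d))) * hfe
  have hfinal := hS m le_rfl
  rw [ham] at hfinal
  have hfinal' : qPoch z0 q (m + 1) * auxS q a z0
      = -(qPoch (a * z0) q m * auxT q a (z0 * q ^ (m + 1))) := by
    linear_combination hfinal
  have hww : ‖z0 * q ^ (m + 1)‖ < 1 := hlad (m + 1)
  have haw : a * (z0 * q ^ (m + 1)) = q := by
    rw [hz0def]
    field_simp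
    ring
  have h0a : ∀ k, 1 - a * (z0 * q ^ (m + 1)) * q ^ k ≠ 0 := by
    intro k
    rw [haw]
    exact aux_one_sub_ne hq1' hq1' k
  have hqb := aux_qbinom hq1' hww h0a
  rw [haw] at hqb
  have hsplit := aux_qPochInf_split hq1' hz0 (m + 1)
  have hmain : qPochInf z0 q * auxS q a z0 = -(qPoch (a * z0) q m * qPochInf q q) := by
    calc qPochInf z0 q * auxS q a z0
        = qPoch z0 q (m + 1) * qPochInf (z0 * q ^ (m + 1)) q * auxS q a z0 := by
          rw [← hsplit]
      _ = qPochInf (z0 * q ^ (m + 1)) q * (qPoch z0 q (m + 1) * auxS q a z0) := by ring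
      _ = qPochInf (z0 * q ^ (m + 1)) q
            * (-(qPoch (a * z0) q m * auxT q a (z0 * q ^ (m + 1)))) := by rw [hfinal']
      _ = -(qPoch (a * z0) q m
            * (qPochInf (z0 * q ^ (m + 1)) q * auxT q a (z0 * q ^ (m + 1)))) := by ring
      _ = -(qPoch (a * z0) q m * qPochInf q q) := by rw [hqb]
  -- evaluation of the finite product
  have hA : qPoch (a * z0) q m = (-1) ^ m * (q ^ (m * (m + 1) / 2))⁻¹ * qPoch q q m := by
    rw [haz0, qPoch, ← Finset.prod_range_reflect]
    have hterm : ∀ j ∈ range m,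
        1 - (q ^ m)⁻¹ * q ^ (m - 1 - j) = -1 * (q ^ (j + 1))⁻¹ * (1 - q * q ^ j) := by
      intro j hj
      have hjm : j < m := mem_range.mp hj
      have hpow : q ^ (m - 1 - j) * q ^ (j + 1) = q ^ m := by
        rw [← pow_add]
        congr 1
        omega
      have hq1ne : (q : ℂ) ^ (j + 1) ≠ 0 := pow_ne_zero _ hq
      have hqmne : (q : ℂ) ^ m ≠ 0 := pow_ne_zero _ hq
      field_simp
      linear_combination -hpow
    rw [Finset.prod_congr rfl hterm, Finset.prod_mul_distrib, Finset.prod_mul_distrib,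
      Finset.prod_const, card_range, Finset.prod_inv_distrib,
      Finset.prod_pow_eq_pow_sum]
    have hgauss : ∑ j ∈ range m, (j + 1) = m * (m + 1) / 2 := by
      have h2 := Finset.sum_range_id_mul_two m
      have h3 : ∑ j ∈ range m, (j + 1) = (∑ j ∈ range m, j) + m := by
        rw [Finset.sum_add_distrib, Finset.sum_const, card_range, smul_eq_mul, mul_one]
      have h4 : m * (m + 1) = m * (m - 1) + 2 * m := by
        cases m with
        | zero => simp
        | succ k => simp [Nat.succ_sub_one]; ring
      omega
    rw [hgauss, qPoch]
  -- final assembly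
  have h0z : ∀ k, 1 - z0 * q ^ k ≠ 0 := fun k => aux_one_sub_ne hq1' hz0 k
  have hne0 : qPochInf z0 q ≠ 0 := (aux_hasProd hq1' h0z).2
  have hLHS : (∑' n : ℕ, (n : ℂ) * (qPoch a q n / qPoch q q n) * z0 ^ n) = auxS q a z0 := by
    rw [auxS]
    apply tsum_congr
    intro n
    rw [auxC]
  rw [hLHS, zpow_neg, zpow_natCast, eq_div_iff hne0]
  calc auxS q a z0 * qPochInf z0 q = -(qPoch (a * z0) q m * qPochInf q q) := by
        rw [← hmain]; ring
    _ = (-1) ^ (m + 1) * (q ^ (m * (m + 1) / 2))⁻¹ * qPoch q q m * qPochInf q q := by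
        rw [hA]; ring
end

section
/- Let q be a complex number with 0 < |q| < 1, and let c be a complex number with c·q^k ≠ 1 for every integer k ≥ 0. Then ∑_{n=1}^{∞} ((−1)^{n−1}·q^{n(n−1)/2}/(q;q)_n) · (∑_{k=0}^{n−1} 1/(1 − c·q^k)) = (q;q)_∞/(c;q)_∞. -/
open Filter Topology Finset

lemma stmt6aux_delta (q : ℂ) (hq1 : ‖q‖ < 1) :
    ∃ δ : ℝ, 0 < δ ∧ ∀ n, δ ≤ ‖qPoch q q n‖ := by
  set r := ‖q‖ with hr
  have hr0 : 0 ≤ r := norm_nonneg q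
  have hrpow : ∀ k : ℕ, r ^ (k+1) < 1 := fun k => pow_lt_one₀ hr0 hq1 k.succ_ne_zero
  have hpos : ∀ k : ℕ, 0 < 1 - r ^ (k+1) := fun k => by linarith [hrpow k]
  have hgpos : ∀ k : ℕ, 0 ≤ -Real.log (1 - r^(k+1)) := by
    intro k
    have := Real.log_nonpos (le_of_lt (hpos k)) (by nlinarith [pow_nonneg hr0 (k+1)])
    linarith
  have hgb : ∀ k : ℕ, -Real.log (1 - r^(k+1)) ≤ (1-r)⁻¹ * r^(k+1) := by
    intro k
    have hx : r^(k+1) ≤ r := by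
      simpa using pow_le_pow_of_le_one hr0 hq1.le (Nat.one_le_iff_ne_zero.mpr k.succ_ne_zero)
    rw [← Real.log_inv]
    have hpk := hpos k
    have h3 : (1 - r^(k+1))⁻¹ - 1 = r^(k+1) / (1 - r^(k+1)) := by
      rw [inv_eq_one_div]
      field_simp
      ring
    calc Real.log ((1-r^(k+1))⁻¹) ≤ (1-r^(k+1))⁻¹ - 1 :=
          Real.log_le_sub_one_of_pos (by positivity)
      _ = r^(k+1)/(1-r^(k+1)) := h3
      _ ≤ r^(k+1)/(1-r) := by
          apply div_le_div_of_nonneg_left (by positivity) (by linarith) (by linarith)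
      _ = (1-r)⁻¹ * r^(k+1) := by rw [div_eq_inv_mul]
  have hsumgeo : Summable (fun k : ℕ => (1-r)⁻¹ * r ^ (k+1)) := by
    apply Summable.mul_left
    exact (summable_nat_add_iff 1).mpr (summable_geometric_of_lt_one hr0 hq1)
  have hsumg : Summable (fun k : ℕ => -Real.log (1 - r^(k+1))) :=
    Summable.of_nonneg_of_le hgpos hgb hsumgeo
  refine ⟨Real.exp (∑' k : ℕ, Real.log (1 - r^(k+1))), Real.exp_pos _, fun n => ?_⟩
  have h2 : ∏ k ∈ Finset.range n, (1 - r^(k+1)) =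
      Real.exp (∑ k ∈ Finset.range n, Real.log (1-r^(k+1))) := by
    rw [Real.exp_sum]
    exact Finset.prod_congr rfl fun k _ => (Real.exp_log (hpos k)).symm
  have h1 : Real.exp (∑' k:ℕ, Real.log (1 - r^(k+1))) ≤ ∏ k ∈ Finset.range n, (1 - r^(k+1)) := by
    rw [h2]
    apply Real.exp_le_exp.mpr
    have h3 := Summable.sum_le_tsum (Finset.range n) (fun i _ => hgpos i) hsumg
    calc ∑' k:ℕ, Real.log (1-r^(k+1))
        = -∑' k:ℕ, -(Real.log (1-r^(k+1))) := by rw [tsum_neg]; ring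
      _ ≤ -∑ k ∈ Finset.range n, -(Real.log (1-r^(k+1))) := neg_le_neg h3
      _ = ∑ k ∈ Finset.range n, Real.log (1-r^(k+1)) := by simp
  refine h1.trans ?_
  rw [qPoch]
  calc ∏ k ∈ Finset.range n, (1 - r^(k+1))
      ≤ ∏ k ∈ Finset.range n, ‖(1 : ℂ) - q * q ^ k‖ := by
        apply Finset.prod_le_prod (fun k _ => (hpos k).le)
        intro k _
        have h4 : ‖(1:ℂ)‖ - ‖q * q^k‖ ≤ ‖(1:ℂ) - q*q^k‖ := norm_sub_norm_le _ _
        have h5 : ‖q * q^k‖ = r^(k+1) := by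
          rw [norm_mul, norm_pow, pow_succ]; ring
        simp only [norm_one] at h4
        linarith
    _ = ‖∏ k ∈ Finset.range n, ((1:ℂ) - q * q ^ k)‖ := by
        rw [norm_prod]


lemma stmt6aux_prod (q a : ℂ) (hq1 : ‖q‖ < 1)
    (hane : ∀ k : ℕ, (1:ℂ) - a * q ^ k ≠ 0) :
    Filter.Tendsto (fun n => qPoch a q n) Filter.atTop (𝓝 (qPochInf a q)) ∧ qPochInf a q ≠ 0 := by
  have htend0 : Filter.Tendsto (fun k : ℕ => a * q ^ k) Filter.atTop (𝓝 0) := by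
    simpa using (tendsto_pow_atTop_nhds_zero_of_norm_lt_one hq1).const_mul a
  have h2 : ∀ᶠ k : ℕ in Filter.atTop, ‖a * q^k‖ ≤ 1/2 := by
    have h3 := htend0.norm
    simp only [norm_zero] at h3
    exact h3.eventually (eventually_le_nhds (by norm_num))
  have hev : ∀ᶠ k : ℕ in Filter.atTop, ‖Complex.log (1 - a*q^k)‖ ≤ 3/2 * (‖a‖ * ‖q‖^k) := by
    filter_upwards [h2] with k hk
    have h3 : ‖Complex.log (1 + (-(a*q^k)))‖ ≤ 3/2 * ‖-(a*q^k)‖ :=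
      Complex.norm_log_one_add_half_le_self (by rwa [norm_neg])
    simpa [sub_eq_add_neg, norm_neg, norm_mul, norm_pow] using h3
  have hlogsum : Summable (fun k : ℕ => Complex.log (1 - a * q ^ k)) := by
    refine Summable.of_norm_bounded_eventually_nat ?_ hev
    exact ((summable_geometric_of_lt_one (norm_nonneg q) hq1).mul_left _).mul_left _
  have hmult : Multipliable (fun k : ℕ => 1 - a * q ^ k) :=
    Complex.multipliable_of_summable_log hlogsum
  constructor
  · have := hmult.hasProd.tendsto_prod_nat
    simpa [qPoch, qPochInf] using this
  · have h4 := Complex.cexp_tsum_eq_tprod (fun k => hane k) hlogsum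
    rw [qPochInf, ← h4]
    exact Complex.exp_ne_zero _


set_option maxHeartbeats 2000000 in
/-- The series on the left runs over `n ≥ 1`; here the summation index is shifted by one,
so that the term of index `n : ℕ` corresponds to `n + 1`. -/
theorem stmt6 (q c : ℂ) (hq0 : 0 < ‖q‖) (hq1 : ‖q‖ < 1)
    (hc : ∀ k : ℕ, c * q ^ k ≠ 1) :
    ∑' n : ℕ, ((-1) ^ n * q ^ ((n + 1) * n / 2) / qPoch q q (n + 1)) *
        ∑ k ∈ Finset.range (n + 1), 1 / (1 - c * q ^ k) =
      qPochInf q q / qPochInf c q := by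
  have hq1' : ‖q‖ < 1 := by exact hq1
  set r := ‖q‖ with hrdef
  have hr0 : (0:ℝ) ≤ r := norm_nonneg q
  have hr1 : r < 1 := hq1'
  -- nonvanishing of factors
  have hqne : ∀ k : ℕ, (1 : ℂ) - q * q ^ k ≠ 0 := by
    intro k h
    have h1 : q * q ^ k = 1 := by linear_combination -h
    have h2 : ‖q * q ^ k‖ < 1 := by
      rw [norm_mul, norm_pow]
      calc r * r ^ k ≤ r * 1 := by
            apply mul_le_mul_of_nonneg_left (pow_le_one₀ hr0 hr1.le) hr0
        _ = r := by ring
        _ < 1 := hr1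
    rw [h1, norm_one] at h2; exact lt_irrefl _ h2
  have hcne : ∀ k : ℕ, (1 : ℂ) - c * q ^ k ≠ 0 := fun k h => hc k (by linear_combination -h)
  have hPne : ∀ n, qPoch q q n ≠ 0 := fun n =>
    Finset.prod_ne_zero_iff.mpr fun k _ => hqne k
  -- lower bound δ
  obtain ⟨δ, hδ, hPδ⟩ := stmt6aux_delta q hq1'
  -- products converge
  obtain ⟨hqprod, hqprodne⟩ := stmt6aux_prod q q hq1' hqne
  obtain ⟨hcprod, hcprodne⟩ := stmt6aux_prod q c hq1' hcne
  -- uniform bound M on 1/(1-c q^j)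
  obtain ⟨M, hM⟩ : ∃ M : ℝ, ∀ j : ℕ, ‖1/((1:ℂ) - c * q ^ j)‖ ≤ M := by
    have htend0 : Tendsto (fun j : ℕ => c * q ^ j) atTop (𝓝 0) := by
      simpa using (tendsto_pow_atTop_nhds_zero_of_norm_lt_one hq1').const_mul c
    have h1 : Tendsto (fun j : ℕ => (1:ℂ) - c * q ^ j) atTop (𝓝 1) := by
      simpa using tendsto_const_nhds.sub htend0
    have h2 : Tendsto (fun j : ℕ => ‖1/((1:ℂ) - c * q ^ j)‖) atTop (𝓝 ‖1/(1:ℂ)‖) := by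
      simp only [one_div]
      exact ((h1.inv₀ one_ne_zero).norm)
    obtain ⟨B, hB⟩ := h2.bddAbove_range
    exact ⟨B, fun j => hB ⟨j, rfl⟩⟩
  have hM0 : 0 ≤ M := le_trans (norm_nonneg _) (hM 0)
  -- basic sequences
  set E : ℕ → ℂ := fun k => (-1)^k * q^(k*(k+1)/2) / qPoch q q k with hE
  set a : ℕ → ℂ := fun n => (-1)^n * q^((n+1)*n/2) / qPoch q q (n+1) with ha
  set w : ℕ → ℕ → ℂ := fun m k => 1 / (1 - c * q ^ (m + k)) with hw
  set L : ℕ → ℂ := fun m => ∑' k, E k * w m k with hL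
  have hE0 : E 0 = 1 := by simp [hE, qPoch]
  have hwb : ∀ m k, ‖w m k‖ ≤ M := fun m k => hM (m + k)
  have htri : ∀ k : ℕ, k*(k+1)/2 + (k+1) = (k+1)*(k+2)/2 := by
    intro k
    have h1 : (k+1)*(k+2) = k*(k+1) + 2*(k+1) := by ring
    rw [h1, Nat.add_mul_div_left _ _ (by norm_num : 0 < 2)]
  have hletri : ∀ k : ℕ, k ≤ k*(k+1)/2 := by
    intro k
    rcases Nat.eq_zero_or_pos k with h|h
    · simp [h]
    · rw [Nat.le_div_iff_mul_le (by norm_num : 0 < 2)]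
      exact Nat.mul_le_mul (le_refl k) (by omega)
  have habsq : ∀ m n : ℕ, n ≤ m → ‖q ^ m‖ ≤ r ^ n := by
    intro m n h
    rw [norm_pow]
    exact pow_le_pow_of_le_one hr0 hr1.le h
  have hEb : ∀ k, ‖E k‖ ≤ r^k / δ := by
    intro k
    rw [hE]
    simp only [norm_div, norm_mul, norm_pow, norm_neg, norm_one, one_pow, one_mul]
    apply div_le_div₀ (by positivity) ?_ hδ (hPδ k)
    rw [← norm_pow]
    exact habsq _ _ (hletri k)
  have hab : ∀ n, ‖a n‖ ≤ r^n / δ := by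
    intro n
    rw [ha]
    simp only [norm_div, norm_mul, norm_pow, norm_neg, norm_one, one_pow, one_mul]
    apply div_le_div₀ (by positivity) ?_ hδ (hPδ (n+1))
    rw [← norm_pow]
    apply habsq
    rw [Nat.mul_comm]
    exact hletri n
  have hgeo : Summable (fun k : ℕ => r ^ k) := summable_geometric_of_lt_one hr0 hr1
  have hgeoδ : Summable (fun k : ℕ => r ^ k / δ) := by
    simpa [div_eq_mul_inv] using hgeo.mul_right δ⁻¹
  have hSumE : Summable E := Summable.of_norm_bounded hgeoδ hEb
  have hSuma : Summable a := Summable.of_norm_bounded hgeoδ hab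
  have hSumEw : ∀ m, Summable (fun k => E k * w m k) := by
    intro m
    apply Summable.of_norm_bounded (hgeoδ.mul_right M)
    intro k
    rw [norm_mul]
    exact mul_le_mul (hEb k) (hwb m k) (norm_nonneg _) (by positivity)
  -- E recurrence
  have hqpoch_succ : ∀ n, qPoch q q (n+1) = qPoch q q n * (1 - q * q^n) := fun n =>
    Finset.prod_range_succ _ n
  have htri' : ∀ n : ℕ, (n+1)*(n+1+1)/2 = n*(n+1)/2 + (n+1) := by
    intro n
    rw [show (n+1)*(n+1+1) = n*(n+1) + 2*(n+1) from by ring,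
      Nat.add_mul_div_left _ _ (by norm_num : 0 < 2)]
  have hErec : ∀ k, E (k+1) * (1 - q * q^k) = -(q*q^k) * E k := by
    intro k
    simp only [hE]
    rw [hqpoch_succ k, htri' k]
    field_simp [hPne k, hqne k]
    ring
  -- Euler partial sums
  have hpartial : ∀ N, ∑ n ∈ Finset.range N, a n = 1 - E N := by
    intro N
    induction N with
    | zero => simp [hE0]
    | succ n ih =>
        rw [Finset.sum_range_succ, ih]
        simp only [hE, ha]
        rw [hqpoch_succ n, htri' n, show (n+1)*n = n*(n+1) from Nat.mul_comm _ _]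
        field_simp [hPne n, hqne n]
        ring
  have hElim : Tendsto E atTop (𝓝 0) := by
    apply squeeze_zero_norm hEb
    have := (tendsto_pow_atTop_nhds_zero_of_lt_one hr0 hr1).div_const δ
    simpa using this
  have htsuma : ∑' n, a n = 1 := by
    have h1 : Tendsto (fun N => ∑ n ∈ Finset.range N, a n) atTop (𝓝 1) := by
      simp only [hpartial]
      simpa using tendsto_const_nhds.sub hElim
    exact tendsto_nhds_unique hSuma.hasSum.tendsto_sum_nat h1
  -- double sum swap: LHS = L 0
  have hmain1 : ∑' n : ℕ, ((-1) ^ n * q ^ ((n + 1) * n / 2) / qPoch q q (n + 1)) *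
        ∑ k ∈ Finset.range (n + 1), 1 / (1 - c * q ^ k) = L 0 := by
    set f2 : ℕ → ℕ → ℂ := fun n k => if k ≤ n then a n * w 0 k else 0 with hf2
    have hGnonneg : (0:ℕ × ℕ → ℝ) ≤ (fun p : ℕ × ℕ => if p.2 ≤ p.1 then r ^ p.1 / δ * M else 0) := by
      intro p
      dsimp only
      split_ifs
      · positivity
      · exact le_refl _
    have hG : Summable (fun p : ℕ × ℕ => if p.2 ≤ p.1 then r ^ p.1 / δ * M else 0) := by
      rw [summable_prod_of_nonneg hGnonneg]
      constructor
      · intro n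
        apply summable_of_ne_finset_zero (s := Finset.range (n+1))
        intro k hk
        simp only [Finset.mem_range, not_lt] at hk
        simp only []
        rw [if_neg (by omega)]
      · have hrow : ∀ n : ℕ, (∑' k : ℕ, if k ≤ n then r ^ n / δ * M else 0)
            = ((n:ℝ)+1) * (r^n/δ*M) := by
          intro n
          rw [tsum_eq_sum (s := Finset.range (n+1)) ?_]
          · rw [Finset.sum_congr rfl (fun k hk => if_pos (by
              simp only [Finset.mem_range, Nat.lt_succ_iff] at hk; omega))]
            rw [Finset.sum_const, Finset.card_range, nsmul_eq_mul]
            push_cast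
            ring
          · intro k hk
            simp only [Finset.mem_range, not_lt] at hk
            rw [if_neg (by omega)]
        have hs1 : Summable (fun n : ℕ => ((n:ℝ)^1 * r^n + r^n) * (M/δ)) := by
          apply Summable.mul_right
          exact (summable_pow_mul_geometric_of_norm_lt_one 1 (by
            rwa [Real.norm_eq_abs, abs_of_nonneg hr0])).add hgeo
        apply (hs1.congr ?_).congr (fun n => (hrow n).symm)
        intro n
        push_cast
        ring
    have hunc : Summable (Function.uncurry f2) := by
      apply Summable.of_norm_bounded hG
      intro p
      simp only [Function.uncurry, hf2]
      split_ifs with h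
      · rw [norm_mul]
        exact mul_le_mul (hab p.1) (hwb 0 p.2) (norm_nonneg _) (by positivity)
      · simp
    have hrown : ∀ n, ((-1) ^ n * q ^ ((n + 1) * n / 2) / qPoch q q (n + 1)) *
        ∑ k ∈ Finset.range (n + 1), 1 / (1 - c * q ^ k) = ∑' k, f2 n k := by
      intro n
      rw [tsum_eq_sum (s := Finset.range (n+1)) ?_]
      · rw [Finset.mul_sum]
        apply Finset.sum_congr rfl
        intro k hk
        simp only [Finset.mem_range, Nat.lt_succ_iff] at hk
        simp only [hf2, hw, ha, Nat.zero_add]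
        rw [if_pos hk]
      · intro k hk
        simp only [Finset.mem_range, not_lt] at hk
        simp only [hf2]
        rw [if_neg (by omega)]
    have hcol : ∀ k, ∑' n, f2 n k = w 0 k * E k := by
      intro k
      have h1 : ∀ n, f2 n k = w 0 k * (a n - if n ∈ Finset.range k then a n else 0) := by
        intro n
        simp only [hf2, Finset.mem_range]
        by_cases h : k ≤ n
        · rw [if_pos h, if_neg (by omega)]
          ring
        · rw [if_neg h, if_pos (by omega)]
          ring
      rw [tsum_congr h1, tsum_mul_left]
      congr 1
      rw [Summable.tsum_sub hSuma (summable_of_ne_finset_zero (s := Finset.range k)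
        (fun n hn => if_neg hn)), htsuma,
        tsum_eq_sum (s := Finset.range k) (fun n hn => if_neg hn),
        Finset.sum_congr rfl (fun n hn => if_pos hn), hpartial k]
      ring
    calc ∑' n : ℕ, ((-1) ^ n * q ^ ((n + 1) * n / 2) / qPoch q q (n + 1)) *
        ∑ k ∈ Finset.range (n + 1), 1 / (1 - c * q ^ k)
        = ∑' n, ∑' k, f2 n k := tsum_congr hrown
      _ = ∑' k, ∑' n, f2 n k := (Summable.tsum_comm hunc).symm
      _ = ∑' k, w 0 k * E k := tsum_congr hcol
      _ = L 0 := by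
          simp only [hL]
          exact tsum_congr fun k => mul_comm _ _
  -- functional equation
  have hwshift : ∀ m k, w m (k+1) = w (m+1) k := by
    intro m k
    simp only [hw]
    rw [show m + (k+1) = (m+1) + k from by omega]
  have hterm : ∀ m k, (1 - c*q^m) * (E (k+1) * w m (k+1)) = (E (k+1) - E k) + E k * w m (k+1) := by
    intro m k
    have h1 := hErec k
    have hne : (1:ℂ) - c * q ^ (m + (k+1)) ≠ 0 := hcne (m+(k+1))
    have h2 : (1 - c*q^m) * E (k+1) = (E (k+1) - E k) * (1 - c*q^(m+(k+1))) + E k := by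
      linear_combination (-(c*q^m)) * h1
    simp only [hw]
    field_simp
    linear_combination h2
  have hsdiff : Summable (fun k => E (k+1) - E k) := ((summable_nat_add_iff 1).mpr hSumE).sub hSumE
  have htel : ∑' k : ℕ, (E (k+1) - E k) = -1 := by
    have h2 : ∀ N, ∑ k ∈ Finset.range N, (E (k+1) - E k) = E N - E 0 := fun N =>
      Finset.sum_range_sub E N
    have h1 : Tendsto (fun N => ∑ k ∈ Finset.range N, (E (k+1) - E k)) atTop (𝓝 (-1)) := by
      simp only [h2, hE0]
      simpa using hElim.sub (tendsto_const_nhds (x := (1:ℂ)))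
    exact tendsto_nhds_unique hsdiff.hasSum.tendsto_sum_nat h1
  have hfuneq : ∀ m, (1 - c * q ^ m) * L m = L (m + 1) := by
    intro m
    have hs1 : Summable (fun k => E k * w m k) := hSumEw m
    have h0eq : (1 - c*q^m) * (E 0 * w m 0) = 1 := by
      rw [hE0, one_mul]
      simp only [hw, Nat.add_zero]
      rw [mul_one_div, div_self (hcne m)]
    calc (1 - c*q^m) * L m = ∑' k, (1 - c*q^m) * (E k * w m k) := by
          simp only [hL]; exact (tsum_mul_left).symm
      _ = (1 - c*q^m) * (E 0 * w m 0) + ∑' k, (1 - c*q^m)*(E (k+1) * w m (k+1)) :=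
          Summable.tsum_eq_zero_add (hs1.mul_left _)
      _ = 1 + ∑' k, ((E (k+1) - E k) + E k * w (m+1) k) := by
          rw [h0eq]
          congr 1
          exact tsum_congr fun k => by rw [hterm m k, hwshift m k]
      _ = 1 + ((∑' k : ℕ, (E (k+1) - E k)) + ∑' k, E k * w (m+1) k) := by
          rw [Summable.tsum_add hsdiff (hSumEw (m+1))]
      _ = L (m+1) := by rw [htel]; simp only [hL]; ring
  have hLiter : ∀ m, L m = qPoch c q m * L 0 := by
    intro m
    induction m with
    | zero => simp [qPoch]
    | succ n ih =>
        rw [← hfuneq n, ih, show qPoch c q (n+1) = qPoch c q n * (1 - c*q^n) from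
          Finset.prod_range_succ _ n]
        ring
  -- limit of L
  have hLlim : Tendsto L atTop (𝓝 (∑' k, E k)) := by
    set S := ∑' k, E k with hS
    have hwm1 : ∀ m k, w m k - 1 = c * q^(m+k) * w m k := by
      intro m k
      simp only [hw]
      have hne := hcne (m+k)
      field_simp
      ring
    set C := ‖c‖ * M / δ * (1-r)⁻¹ with hC
    have hbound : ∀ m, ‖L m - S‖ ≤ C * r ^ m := by
      intro m
      have h1 : L m - S = ∑' k, (E k * w m k - E k) := by
        simp only [hL, hS]
        rw [Summable.tsum_sub (hSumEw m) hSumE]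
      rw [h1]
      have h2 : ∀ k, ‖E k * w m k - E k‖ ≤ (‖c‖ * M / δ * r^m) * r^k := by
        intro k
        have h3 : E k * w m k - E k = E k * (c * q^(m+k) * w m k) := by
          rw [← hwm1 m k]; ring
        rw [h3]
        calc ‖E k * (c * q^(m+k) * w m k)‖ = ‖E k‖ * (‖c‖ * (‖q^(m+k)‖ * ‖w m k‖)) := by
              simp [norm_mul, mul_assoc]
          _ ≤ (r^k/δ) * (‖c‖ * (r^m * M)) := by
              gcongr
              · exact hEb k
              · exact habsq (m+k) m (by omega)
              · exact hwb m k
          _ = (‖c‖ * M / δ * r^m) * r^k := by ring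
      have hsnorm : Summable (fun k => ‖E k * w m k - E k‖) :=
        summable_norm_iff.mpr ((hSumEw m).sub hSumE)
      calc ‖∑' k, (E k * w m k - E k)‖ ≤ ∑' k, ‖E k * w m k - E k‖ :=
            norm_tsum_le_tsum_norm hsnorm
        _ ≤ ∑' k : ℕ, (‖c‖ * M / δ * r^m) * r^k :=
            Summable.tsum_le_tsum h2 hsnorm (hgeo.mul_left _)
        _ = (‖c‖ * M / δ * r^m) * (1-r)⁻¹ := by
            rw [tsum_mul_left, tsum_geometric_of_lt_one hr0 hr1]
        _ = C * r^m := by rw [hC]; ring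
    have h0 : Tendsto (fun m : ℕ => C * r^m) atTop (𝓝 0) := by
      simpa using (tendsto_pow_atTop_nhds_zero_of_lt_one hr0 hr1).const_mul C
    have h4 := squeeze_zero_norm hbound h0
    have h5 := h4.add_const S
    simpa using h5
  have hconc1 : qPochInf c q * L 0 = ∑' k, E k := by
    have h1 : Tendsto (fun m => qPoch c q m * L 0) atTop (𝓝 (qPochInf c q * L 0)) :=
      hcprod.mul_const _
    have h2 : Tendsto (fun m => qPoch c q m * L 0) atTop (𝓝 (∑' k, E k)) := by
      have : ∀ m, qPoch c q m * L 0 = L m := fun m => (hLiter m).symm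
      simp only [this]
      exact hLlim
    exact tendsto_nhds_unique h1 h2
  -- Euler at x = q
  have hconc2 : ∑' k, E k = qPochInf q q := by
    set Φ : ℕ → ℂ := fun m => ∑' k, E k * q^(m*k) with hPhi
    have hSumPhi : ∀ m, Summable (fun k => E k * q^(m*k)) := by
      intro m
      apply Summable.of_norm_bounded hgeoδ
      intro k
      rw [norm_mul]
      calc ‖E k‖ * ‖q^(m*k)‖ ≤ (r^k/δ) * 1 := by
            apply mul_le_mul (hEb k) ?_ (norm_nonneg _) (by positivity)
            rw [norm_pow]
            exact pow_le_one₀ hr0 hr1.le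
        _ = r^k/δ := mul_one _
    have hPhi0 : Φ 0 = ∑' k, E k := by
      simp only [hPhi, Nat.zero_mul, pow_zero, mul_one]
    have hPhiterm : ∀ m k, E (k+1) * q^(m*(k+1)) - E (k+1) * q^((m+1)*(k+1))
        = -(q*q^m) * (E k * q^((m+1)*k)) := by
      intro m k
      have h1 := hErec k
      rw [show m*(k+1) = m*k+m from by ring, show (m+1)*(k+1) = m*k+m+k+1 from by ring,
        show (m+1)*k = m*k+k from by ring]
      linear_combination (q^(m*k+m)) * h1
    have hPhifuneq : ∀ m, Φ m = (1 - q*q^m) * Φ (m+1) := by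
      intro m
      have hsd : Summable (fun k => E k * q^(m*k) - E k * q^((m+1)*k)) :=
        (hSumPhi m).sub (hSumPhi (m+1))
      have hdiff : Φ m - Φ (m+1) = ∑' k, (E k * q^(m*k) - E k * q^((m+1)*k)) := by
        simp only [hPhi]
        rw [Summable.tsum_sub (hSumPhi m) (hSumPhi (m+1))]
      have h0 : E 0 * q^(m*0) - E 0 * q^((m+1)*0) = 0 := by simp
      have h2 : Φ m - Φ (m+1) = -(q*q^m) * Φ (m+1) := by
        rw [hdiff, Summable.tsum_eq_zero_add hsd, h0, zero_add]
        calc ∑' k, (E (k+1) * q^(m*(k+1)) - E (k+1) * q^((m+1)*(k+1)))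
            = ∑' k, -(q*q^m) * (E k * q^((m+1)*k)) := tsum_congr fun k => hPhiterm m k
          _ = -(q*q^m) * Φ (m+1) := by rw [tsum_mul_left]
      linear_combination h2
    have hPhiiter : ∀ m, Φ 0 = qPoch q q m * Φ m := by
      intro m
      induction m with
      | zero => simp [qPoch]
      | succ n ih =>
          rw [ih, hPhifuneq n, hqpoch_succ n]
          ring
    have hgeo1 : Summable (fun k : ℕ => r ^ (k+1)) := (summable_nat_add_iff 1).mpr hgeo
    have hsumgeo1 : ∑' k : ℕ, r^(k+1) = (1-r)⁻¹ * r := by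
      simp only [pow_succ]
      rw [tsum_mul_right, tsum_geometric_of_lt_one hr0 hr1]
    have hPhilim : Tendsto Φ atTop (𝓝 1) := by
      have hbound : ∀ m, ‖Φ m - 1‖ ≤ ((1-r)⁻¹ * r / δ) * r ^ m := by
        intro m
        have h1 : Φ m = 1 + ∑' k, E (k+1) * q^(m*(k+1)) := by
          simp only [hPhi]
          rw [Summable.tsum_eq_zero_add (hSumPhi m)]
          norm_num [hE0]
        rw [h1]
        simp only [add_sub_cancel_left]
        have h2 : ∀ k, ‖E (k+1) * q^(m*(k+1))‖ ≤ (r^m/δ) * r^(k+1) := by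
          intro k
          rw [norm_mul]
          calc ‖E (k+1)‖ * ‖q^(m*(k+1))‖ ≤ (r^(k+1)/δ) * r^m := by
                apply mul_le_mul (hEb (k+1)) ?_ (norm_nonneg _) (by positivity)
                apply habsq
                calc m = m*1 := (Nat.mul_one m).symm
                  _ ≤ m*(k+1) := Nat.mul_le_mul (le_refl m) (by omega)
            _ = (r^m/δ) * r^(k+1) := by ring
        have hsn : Summable (fun k => ‖E (k+1) * q^(m*(k+1))‖) :=
          summable_norm_iff.mpr ((summable_nat_add_iff 1).mpr (hSumPhi m))
        calc ‖∑' k, E (k+1) * q^(m*(k+1))‖ ≤ ∑' k, ‖E (k+1)*q^(m*(k+1))‖ :=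
              norm_tsum_le_tsum_norm hsn
          _ ≤ ∑' k : ℕ, (r^m/δ) * r^(k+1) := Summable.tsum_le_tsum h2 hsn (hgeo1.mul_left _)
          _ = (r^m/δ) * ∑' k : ℕ, r^(k+1) := tsum_mul_left
          _ = (r^m/δ) * ((1-r)⁻¹ * r) := by rw [hsumgeo1]
          _ = ((1-r)⁻¹ * r / δ) * r^m := by ring
      have h0 : Tendsto (fun m : ℕ => ((1-r)⁻¹ * r / δ) * r^m) atTop (𝓝 0) := by
        simpa using (tendsto_pow_atTop_nhds_zero_of_lt_one hr0 hr1).const_mul ((1-r)⁻¹ * r / δ)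
      have h4 := squeeze_zero_norm hbound h0
      have h5 := h4.add_const 1
      simpa using h5
    have h1 : Tendsto (fun m => qPoch q q m * Φ m) atTop (𝓝 (qPochInf q q * 1)) :=
      hqprod.mul hPhilim
    have h2 : Tendsto (fun m => qPoch q q m * Φ m) atTop (𝓝 (Φ 0)) := by
      have h3 : ∀ m, qPoch q q m * Φ m = Φ 0 := fun m => (hPhiiter m).symm
      simp only [h3]
      exact tendsto_const_nhds
    have h6 := tendsto_nhds_unique h2 h1
    rw [← hPhi0, h6, mul_one]
  rw [hmain1, eq_div_iff hcprodne]
  rw [mul_comm] at hconc1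
  rw [hconc1, hconc2]
end

section
/- Let q be a complex number with 0 < |q| < 1, and let b, c be complex numbers with b ≠ 0, |c/b| < 1, and c·q^k ≠ 1 for every integer k ≥ 0. Then ∑_{n=1}^{∞} (1/(1 − q^n))·((b;q)_n/(c;q)_n)·(c/b)^n = ((c/b;q)_∞/(c;q)_∞) · ∑_{n=0}^{∞} n·((b;q)_n/(q;q)_n)·(c/b)^n. -/
open Filter Topology Finset

namespace QAux

variable {q : ℂ}

lemma qPoch_succ (a q : ℂ) (n : ℕ) : qPoch a q (n+1) = qPoch a q n * (1 - a * q ^ n) :=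
  Finset.prod_range_succ _ _

lemma qPoch_succ' (a q : ℂ) (n : ℕ) : qPoch a q (n+1) = (1 - a) * qPoch (a*q) q n := by
  rw [qPoch, Finset.prod_range_succ']
  simp only [pow_zero, mul_one, qPoch]
  rw [mul_comm]
  congr 1
  apply Finset.prod_congr rfl
  intro k _
  ring_nf

lemma qPoch_ne_zero {a : ℂ} (h : ∀ k, 1 - a * q ^ k ≠ 0) (n : ℕ) : qPoch a q n ≠ 0 :=
  Finset.prod_ne_zero_iff.2 fun k _ => h k

/-- summable geometric weights -/
lemma sumgeo (hq : ‖q‖ < 1) (x : ℂ) : Summable (fun k : ℕ => ‖x‖ * ‖q‖ ^ k) :=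
  (summable_geometric_of_lt_one (norm_nonneg q) hq).mul_left _

lemma tsum_geo (hq : ‖q‖ < 1) (x : ℂ) : ∑' k : ℕ, ‖x‖ * ‖q‖ ^ k = ‖x‖ / (1 - ‖q‖) := by
  rw [tsum_mul_left, tsum_geometric_of_lt_one (norm_nonneg q) hq, div_eq_mul_inv]

lemma norm_one_sub_le (x : ℂ) : ‖(1 : ℂ) - x‖ ≤ 1 + ‖x‖ := by
  calc ‖(1:ℂ) - x‖ ≤ ‖(1:ℂ)‖ + ‖x‖ := norm_sub_le _ _
  _ = 1 + ‖x‖ := by norm_num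

/-- upper bound for finite q-Pochhammer -/
lemma qPoch_norm_le (hq : ‖q‖ < 1) (a : ℂ) (n : ℕ) :
    ‖qPoch a q n‖ ≤ Real.exp (‖a‖ / (1 - ‖q‖)) := by
  have h1q : (0:ℝ) < 1 - ‖q‖ := by linarith
  calc ‖qPoch a q n‖ ≤ ∏ k ∈ range n, ‖(1 : ℂ) - a * q ^ k‖ := norm_prod_le _ _
    _ ≤ ∏ k ∈ range n, Real.exp (‖a‖ * ‖q‖ ^ k) := by
        apply Finset.prod_le_prod (fun k _ => norm_nonneg _)
        intro k _
        calc ‖(1:ℂ) - a * q ^ k‖ ≤ 1 + ‖a * q ^ k‖ := norm_one_sub_le _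
          _ = 1 + ‖a‖ * ‖q‖ ^ k := by rw [norm_mul, norm_pow]
          _ ≤ Real.exp (‖a‖ * ‖q‖ ^ k) := Real.add_one_le_exp _ |>.trans_eq' (by ring_nf)
    _ = Real.exp (∑ k ∈ range n, ‖a‖ * ‖q‖ ^ k) := by rw [Real.exp_sum]
    _ ≤ Real.exp (‖a‖ / (1 - ‖q‖)) := by
        apply Real.exp_le_exp.2
        rw [← tsum_geo hq a]
        exact Summable.sum_le_tsum _ (fun k _ => by positivity) (sumgeo hq a)

/-- ∏ (1 - y k) ≥ 1 - ∑ y k for 0 ≤ y k ≤ 1 -/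
lemma prod_one_sub_ge (y : ℕ → ℝ) (h0 : ∀ k, 0 ≤ y k) (h1 : ∀ k, y k ≤ 1) (n : ℕ) :
    1 - ∑ k ∈ range n, y k ≤ ∏ k ∈ range n, (1 - y k) := by
  induction n with
  | zero => simp
  | succ n ih =>
    rw [Finset.sum_range_succ, Finset.prod_range_succ]
    have hp : (0:ℝ) ≤ ∏ k ∈ range n, (1 - y k) :=
      Finset.prod_nonneg fun k _ => by linarith [h1 k]
    have hky := h0 n
    have hk1 := h1 n
    nlinarith [Finset.sum_nonneg (fun k (_ : k ∈ range n) => h0 k)]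

/-- lower bound: when x is small the product stays ≥ 1/2 -/
lemma qPoch_norm_ge_half (hq : ‖q‖ < 1) {x : ℂ} (hx : ‖x‖ / (1 - ‖q‖) ≤ 1/2) (n : ℕ) :
    (1:ℝ)/2 ≤ ‖qPoch x q n‖ := by
  have h1q : (0:ℝ) < 1 - ‖q‖ := by linarith
  have hsum : ∑ k ∈ range n, ‖x‖ * ‖q‖ ^ k ≤ 1/2 := by
    calc ∑ k ∈ range n, ‖x‖ * ‖q‖ ^ k ≤ ∑' k : ℕ, ‖x‖ * ‖q‖ ^ k :=
          Summable.sum_le_tsum _ (fun k _ => by positivity) (sumgeo hq x)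
      _ = ‖x‖ / (1 - ‖q‖) := tsum_geo hq x
      _ ≤ 1/2 := hx
  have hterm : ∀ k, ‖x‖ * ‖q‖ ^ k ≤ 1 := by
    intro k
    have h1 : ‖x‖ * ‖q‖ ^ k ≤ ∑ j ∈ range (k+1), ‖x‖ * ‖q‖ ^ j := by
      apply Finset.single_le_sum (f := fun j => ‖x‖ * ‖q‖ ^ j) (fun j _ => by positivity)
      simp
    have h2 : ∑ j ∈ range (k+1), ‖x‖ * ‖q‖ ^ j ≤ 1/2 := by
      calc ∑ j ∈ range (k+1), ‖x‖ * ‖q‖ ^ j ≤ ∑' j : ℕ, ‖x‖ * ‖q‖ ^ j :=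
            Summable.sum_le_tsum _ (fun k _ => by positivity) (sumgeo hq x)
        _ = ‖x‖ / (1 - ‖q‖) := tsum_geo hq x
        _ ≤ 1/2 := hx
    linarith
  calc (1:ℝ)/2 = 1 - 1/2 := by norm_num
    _ ≤ 1 - ∑ k ∈ range n, ‖x‖ * ‖q‖ ^ k := by linarith
    _ ≤ ∏ k ∈ range n, (1 - ‖x‖ * ‖q‖ ^ k) :=
        prod_one_sub_ge _ (fun k => by positivity) hterm n
    _ ≤ ∏ k ∈ range n, ‖(1:ℂ) - x * q ^ k‖ := by
        apply Finset.prod_le_prod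
        · intro k _; linarith [hterm k, (by positivity : (0:ℝ) ≤ ‖x‖ * ‖q‖^k)]
        · intro k _
          calc 1 - ‖x‖ * ‖q‖ ^ k = 1 - ‖x * q ^ k‖ := by rw [norm_mul, norm_pow]
            _ ≤ ‖(1:ℂ) - x * q ^ k‖ := by
                have := norm_sub_norm_le (1:ℂ) (x * q ^ k)
                simpa using this
    _ = ‖qPoch x q n‖ := (norm_prod (range n) _).symm

lemma summable_log (hq : ‖q‖ < 1) {x : ℂ} (h0 : ∀ k, 1 - x * q ^ k ≠ 0) :
    Summable (fun k : ℕ => Complex.log (1 - x * q ^ k)) := by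
  have h1q : (0:ℝ) < 1 - ‖q‖ := by linarith
  -- choose N with ‖x‖ ‖q‖^N ≤ 1/2
  obtain ⟨N, hN⟩ : ∃ N : ℕ, ‖x‖ * ‖q‖ ^ N ≤ 1/2 := by
    rcases eq_or_ne x 0 with rfl | hx
    · exact ⟨0, by norm_num⟩
    · have : Tendsto (fun n : ℕ => ‖x‖ * ‖q‖ ^ n) atTop (𝓝 0) := by
        simpa using (tendsto_pow_atTop_nhds_zero_of_lt_one (norm_nonneg q) hq).const_mul ‖x‖
      exact ((this.eventually (eventually_le_nhds (by norm_num : (0:ℝ) < 1/2))).exists).imp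
        (fun n hn => hn)
  rw [← summable_nat_add_iff N]
  apply Summable.of_norm_bounded (g := fun k => 3/2 * (‖x‖ * ‖q‖ ^ (k + N)))
  · apply Summable.mul_left
    exact ((summable_geometric_of_lt_one (norm_nonneg q) hq).mul_left ‖x‖).comp_injective
      (add_left_injective N)
  · intro k
    have hsmall : ‖x * q ^ (k + N)‖ ≤ 1/2 := by
      rw [norm_mul, norm_pow, pow_add]
      calc ‖x‖ * (‖q‖^k * ‖q‖^N) = (‖x‖ * ‖q‖^N) * ‖q‖^k := by ring
        _ ≤ (1/2) * 1 := by
            apply mul_le_mul hN (pow_le_one₀ (norm_nonneg q) hq.le) (by positivity) (by norm_num)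
        _ = 1/2 := by norm_num
    have : (1 : ℂ) - x * q ^ (k + N) = 1 + (-(x * q ^ (k + N))) := by ring
    rw [this]
    calc ‖Complex.log (1 + -(x * q ^ (k+N)))‖ ≤ 3/2 * ‖-(x * q ^ (k+N))‖ :=
          Complex.norm_log_one_add_half_le_self (by rwa [norm_neg])
      _ = 3/2 * (‖x‖ * ‖q‖ ^ (k+N)) := by rw [norm_neg, norm_mul, norm_pow]

lemma multipliable (hq : ‖q‖ < 1) {x : ℂ} (h0 : ∀ k, 1 - x * q ^ k ≠ 0) :
    Multipliable (fun k : ℕ => 1 - x * q ^ k) := by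
  exact Complex.multipliable_of_summable_log (summable_log hq h0)

lemma tendsto_qPoch (hq : ‖q‖ < 1) {x : ℂ} (h0 : ∀ k, 1 - x * q ^ k ≠ 0) :
    Tendsto (fun n => qPoch x q n) atTop (𝓝 (qPochInf x q)) :=
  (multipliable hq h0).hasProd.tendsto_prod_nat

lemma qPochInf_ne_zero (hq : ‖q‖ < 1) {x : ℂ} (h0 : ∀ k, 1 - x * q ^ k ≠ 0) :
    qPochInf x q ≠ 0 := by
  have := Complex.cexp_tsum_eq_tprod (f := fun k => 1 - x * q ^ k)
    (fun k => h0 k) (summable_log hq h0)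
  rw [qPochInf, ← this]
  exact Complex.exp_ne_zero _

lemma qPochInf_shift (hq : ‖q‖ < 1) {x : ℂ} (h0 : ∀ k, 1 - x * q ^ k ≠ 0) :
    qPochInf x q = (1 - x) * qPochInf (x*q) q := by
  have h0' : ∀ k, 1 - (x*q) * q ^ k ≠ 0 := by
    intro k
    have := h0 (k+1)
    rw [pow_succ] at this
    convert this using 2
    ring
  have t1 : Tendsto (fun n => qPoch x q (n+1)) atTop (𝓝 (qPochInf x q)) :=
    (tendsto_qPoch hq h0).comp (tendsto_add_atTop_nat 1)
  have t2 : Tendsto (fun n => (1-x) * qPoch (x*q) q n) atTop (𝓝 ((1-x) * qPochInf (x*q) q)) :=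
    (tendsto_qPoch hq h0').const_mul _
  refine tendsto_nhds_unique t1 ?_
  convert t2 using 2 with n
  exact qPoch_succ' x q n

/-- norm of qPochInf bounds -/
lemma qPochInf_norm_le (hq : ‖q‖ < 1) {x : ℂ} (h0 : ∀ k, 1 - x * q ^ k ≠ 0) :
    ‖qPochInf x q‖ ≤ Real.exp (‖x‖ / (1 - ‖q‖)) :=
  le_of_tendsto ((tendsto_qPoch hq h0).norm) (Eventually.of_forall (qPoch_norm_le hq x))

lemma qPochInf_norm_ge_half (hq : ‖q‖ < 1) {x : ℂ} (h0 : ∀ k, 1 - x * q ^ k ≠ 0)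
    (hx : ‖x‖ / (1 - ‖q‖) ≤ 1/2) : (1:ℝ)/2 ≤ ‖qPochInf x q‖ :=
  ge_of_tendsto ((tendsto_qPoch hq h0).norm) (Eventually.of_forall (qPoch_norm_ge_half hq hx))

end QAux

namespace QAux

/-- |∏(1-xq^k) - 1| ≤ exp(S) - 1 -/
lemma qPoch_sub_one_norm_le (hq : ‖q‖ < 1) (x : ℂ) (n : ℕ) :
    ‖qPoch x q n - 1‖ ≤ Real.exp (‖x‖ / (1 - ‖q‖)) - 1 := by
  have h1q : (0:ℝ) < 1 - ‖q‖ := by linarith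
  have key : ∀ n, ‖qPoch x q n - 1‖ ≤ (∏ k ∈ range n, (1 + ‖x‖ * ‖q‖^k)) - 1 := by
    intro n
    induction n with
    | zero => simp [qPoch]
    | succ n ih =>
      have hBpos : (1:ℝ) ≤ ∏ k ∈ range n, (1 + ‖x‖ * ‖q‖^k) := by
        calc (1:ℝ) = ∏ k ∈ range n, 1 := by simp
          _ ≤ ∏ k ∈ range n, (1 + ‖x‖ * ‖q‖^k) :=
            Finset.prod_le_prod (fun k _ => by norm_num)
              (fun k _ => by nlinarith [mul_nonneg (norm_nonneg x) (pow_nonneg (norm_nonneg q) k)])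
      rw [qPoch_succ, Finset.prod_range_succ]
      have expand : qPoch x q n * (1 - x * q ^ n) - 1
          = (qPoch x q n - 1) * (1 - x * q ^ n) - x * q ^ n := by ring
      rw [expand]
      have hy : ‖x * q ^ n‖ = ‖x‖ * ‖q‖^n := by rw [norm_mul, norm_pow]
      calc ‖(qPoch x q n - 1) * (1 - x * q ^ n) - x * q ^ n‖
          ≤ ‖(qPoch x q n - 1)‖ * ‖(1 - x * q ^ n)‖ + ‖x * q ^ n‖ := by
            refine (norm_sub_le _ _).trans ?_
            rw [norm_mul]
        _ ≤ ((∏ k ∈ range n, (1 + ‖x‖ * ‖q‖^k)) - 1) * (1 + ‖x‖*‖q‖^n) + ‖x‖*‖q‖^n := by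
            rw [hy]
            have h2 : ‖(1:ℂ) - x * q^n‖ ≤ 1 + ‖x‖*‖q‖^n := (norm_one_sub_le _).trans_eq (by rw [hy])
            have h3 : (0:ℝ) ≤ ‖qPoch x q n - 1‖ := norm_nonneg _
            nlinarith [norm_nonneg ((1:ℂ) - x*q^n), ih]
        _ = (∏ k ∈ range n, (1 + ‖x‖ * ‖q‖^k)) * (1 + ‖x‖*‖q‖^n) - 1 := by ring
  refine (key n).trans ?_
  have : ∏ k ∈ range n, (1 + ‖x‖ * ‖q‖^k) ≤ Real.exp (‖x‖ / (1 - ‖q‖)) := by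
    calc ∏ k ∈ range n, (1 + ‖x‖ * ‖q‖^k) ≤ ∏ k ∈ range n, Real.exp (‖x‖ * ‖q‖^k) := by
          apply Finset.prod_le_prod (fun k _ => by positivity)
          intro k _
          have := Real.add_one_le_exp (‖x‖ * ‖q‖^k)
          linarith
      _ = Real.exp (∑ k ∈ range n, ‖x‖ * ‖q‖ ^ k) := by rw [Real.exp_sum]
      _ ≤ Real.exp (‖x‖ / (1 - ‖q‖)) := by
          apply Real.exp_le_exp.2
          rw [← tsum_geo hq x]
          exact Summable.sum_le_tsum _ (fun k _ => by positivity) (sumgeo hq x)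
  linarith

lemma qPochInf_sub_one_norm_le (hq : ‖q‖ < 1) {x : ℂ} (h0 : ∀ k, 1 - x * q ^ k ≠ 0) :
    ‖qPochInf x q - 1‖ ≤ Real.exp (‖x‖ / (1 - ‖q‖)) - 1 := by
  have : Tendsto (fun n => ‖qPoch x q n - 1‖) atTop (𝓝 ‖qPochInf x q - 1‖) :=
    ((tendsto_qPoch hq h0).sub_const 1).norm
  exact le_of_tendsto this (Eventually.of_forall (qPoch_sub_one_norm_le hq x))

/-- uniform positive lower bound on ‖qPoch x q n‖ over all n -/
lemma exists_lb_qPoch (hq : ‖q‖ < 1) {x : ℂ} (h0 : ∀ k, 1 - x * q ^ k ≠ 0) :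
    ∃ m : ℝ, 0 < m ∧ ∀ n, m ≤ ‖qPoch x q n‖ := by
  have hP : qPochInf x q ≠ 0 := qPochInf_ne_zero hq h0
  have hPn : 0 < ‖qPochInf x q‖ := norm_pos_iff.2 hP
  have hev : ∀ᶠ n in atTop, ‖qPochInf x q‖/2 < ‖qPoch x q n‖ :=
    (tendsto_qPoch hq h0).norm (eventually_gt_nhds (by linarith))
  obtain ⟨N, hN⟩ := hev.exists_forall_of_atTop
  -- min over n ≤ N
  have hfin : ∀ M : ℕ, ∃ m : ℝ, 0 < m ∧ ∀ n ≤ M, m ≤ ‖qPoch x q n‖ := by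
    intro M
    induction M with
    | zero =>
      refine ⟨‖qPoch x q 0‖, norm_pos_iff.2 (qPoch_ne_zero h0 0), ?_⟩
      intro n hn
      interval_cases n
      · exact le_rfl
    | succ M ih =>
      obtain ⟨m, hm, hmle⟩ := ih
      refine ⟨min m ‖qPoch x q (M+1)‖, lt_min hm (norm_pos_iff.2 (qPoch_ne_zero h0 _)), ?_⟩
      intro n hn
      rcases Nat.lt_succ_iff_lt_or_eq.1 (Nat.lt_succ_of_le hn) with h | rfl
      · exact (min_le_left _ _).trans (hmle n (Nat.lt_succ_iff.1 h))
      · exact min_le_right _ _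
  obtain ⟨m, hm, hmle⟩ := hfin N
  refine ⟨min m (‖qPochInf x q‖/2), lt_min hm (by linarith), ?_⟩
  intro n
  rcases le_or_gt n N with h | h
  · exact (min_le_left _ _).trans (hmle n h)
  · exact (min_le_right _ _).trans (hN n h.le).le

/-! ### The Lambert-type series Λ -/

noncomputable def Lam (q x : ℂ) : ℂ := ∑' k : ℕ, (x * q ^ k) / (1 - x * q ^ k)

lemma summable_lam_term (hq : ‖q‖ < 1) (x : ℂ) :
    Summable (fun k : ℕ => (x * q ^ k) / (1 - x * q ^ k)) := by
  obtain ⟨N, hN⟩ : ∃ N : ℕ, ‖x‖ * ‖q‖ ^ N ≤ 1/2 := by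
    have : Tendsto (fun n : ℕ => ‖x‖ * ‖q‖ ^ n) atTop (𝓝 0) := by
      simpa using (tendsto_pow_atTop_nhds_zero_of_lt_one (norm_nonneg q) hq).const_mul ‖x‖
    exact ((this.eventually (eventually_le_nhds (by norm_num : (0:ℝ) < 1/2))).exists).imp
      (fun n hn => hn)
  rw [← summable_nat_add_iff N]
  apply Summable.of_norm_bounded (g := fun k => 2 * (‖x‖ * ‖q‖ ^ (k + N)))
  · exact (((summable_geometric_of_lt_one (norm_nonneg q) hq).mul_left ‖x‖).comp_injective
      (add_left_injective N)).mul_left 2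
  · intro k
    have hsm : ‖x * q ^ (k + N)‖ ≤ 1/2 := by
      rw [norm_mul, norm_pow, pow_add]
      calc ‖x‖ * (‖q‖^k * ‖q‖^N) = (‖x‖ * ‖q‖^N) * ‖q‖^k := by ring
        _ ≤ (1/2) * 1 :=
            mul_le_mul hN (pow_le_one₀ (norm_nonneg q) hq.le) (by positivity) (by norm_num)
        _ = 1/2 := by norm_num
    have hden : (1:ℝ)/2 ≤ ‖(1:ℂ) - x * q ^ (k+N)‖ := by
      have := norm_sub_norm_le (1:ℂ) (x * q ^ (k+N))
      simp only [norm_one] at this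
      linarith
    rw [norm_div]
    rw [div_le_iff₀ (by linarith)]
    calc ‖x * q ^ (k+N)‖ = ‖x‖ * ‖q‖^(k+N) := by rw [norm_mul, norm_pow]
      _ = 2 * (‖x‖ * ‖q‖^(k+N)) * (1/2) := by ring
      _ ≤ 2 * (‖x‖ * ‖q‖ ^ (k + N)) * ‖1 - x * q ^ (k + N)‖ := by
          apply mul_le_mul_of_nonneg_left hden (by positivity)

lemma lam_shift (hq : ‖q‖ < 1) (x : ℂ) : Lam q x = x / (1 - x) + Lam q (x * q) := by
  rw [Lam, Summable.tsum_eq_zero_add (summable_lam_term hq x)]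
  congr 1
  · simp
  · rw [Lam]
    apply tsum_congr
    intro k
    have : x * q ^ (k+1) = x * q * q ^ k := by ring
    rw [this]

lemma lam_norm_le (hq : ‖q‖ < 1) {x : ℂ} (hx : ‖x‖ ≤ 1/2) :
    ‖Lam q x‖ ≤ 2 * ‖x‖ / (1 - ‖q‖) := by
  have h1q : (0:ℝ) < 1 - ‖q‖ := by linarith
  have hterm : ∀ k : ℕ, ‖(x * q ^ k) / (1 - x * q ^ k)‖ ≤ 2 * (‖x‖ * ‖q‖^k) := by
    intro k
    have hxq : ‖x * q ^ k‖ ≤ 1/2 := by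
      rw [norm_mul, norm_pow]
      calc ‖x‖ * ‖q‖^k ≤ (1/2) * 1 :=
          mul_le_mul hx (pow_le_one₀ (norm_nonneg q) hq.le) (by positivity) (by norm_num)
        _ = 1/2 := by norm_num
    have hden : (1:ℝ)/2 ≤ ‖(1:ℂ) - x * q ^ k‖ := by
      have := norm_sub_norm_le (1:ℂ) (x * q ^ k)
      simp only [norm_one] at this
      linarith
    rw [norm_div, div_le_iff₀ (by linarith)]
    calc ‖x * q ^ k‖ = ‖x‖ * ‖q‖^k := by rw [norm_mul, norm_pow]
      _ = 2 * (‖x‖ * ‖q‖^k) * (1/2) := by ring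
      _ ≤ 2 * (‖x‖ * ‖q‖ ^ k) * ‖1 - x * q ^ k‖ :=
          mul_le_mul_of_nonneg_left hden (by positivity)
  have hsum2 : Summable (fun k : ℕ => 2 * (‖x‖ * ‖q‖ ^ k)) := (sumgeo hq x).mul_left 2
  calc ‖Lam q x‖ ≤ ∑' k : ℕ, 2 * (‖x‖ * ‖q‖^k) := by
        refine (norm_tsum_le_tsum_norm ?_).trans (Summable.tsum_le_tsum hterm ?_ hsum2)
        · exact hsum2.of_nonneg_of_le (fun k => norm_nonneg _) hterm
        · exact hsum2.of_nonneg_of_le (fun k => norm_nonneg _) hterm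
    _ = 2 * (‖x‖ / (1-‖q‖)) := by rw [tsum_mul_left, tsum_geo hq x]
    _ = 2 * ‖x‖ / (1-‖q‖) := by ring

lemma tendsto_lam_zero (hq : ‖q‖ < 1) (x : ℂ) :
    Tendsto (fun K : ℕ => Lam q (x * q ^ K)) atTop (𝓝 0) := by
  have h1q : (0:ℝ) < 1 - ‖q‖ := by linarith
  have hx0 : Tendsto (fun K : ℕ => ‖x‖ * ‖q‖ ^ K) atTop (𝓝 0) := by
    simpa using (tendsto_pow_atTop_nhds_zero_of_lt_one (norm_nonneg q) hq).const_mul ‖x‖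
  apply squeeze_zero_norm'
  · filter_upwards [hx0.eventually (eventually_le_nhds (by norm_num : (0:ℝ) < 1/2))] with K hK
    calc ‖Lam q (x * q ^ K)‖ ≤ 2 * ‖x * q ^ K‖ / (1 - ‖q‖) := by
          apply lam_norm_le hq
          rwa [norm_mul, norm_pow]
      _ = (2 / (1 - ‖q‖)) * (‖x‖ * ‖q‖^K) := by rw [norm_mul, norm_pow]; ring
  · simpa using hx0.const_mul (2 / (1 - ‖q‖))

end QAux

namespace QAux

lemma one_sub_ne {z : ℂ} (h : ‖z‖ < 1) : (1 : ℂ) - z ≠ 0 := by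
  intro he
  rw [sub_eq_zero] at he
  rw [← he] at h
  simp at h

lemma small_ne (hq : ‖q‖ < 1) {x : ℂ} (hx : ‖x‖ < 1) (k : ℕ) : (1:ℂ) - x * q ^ k ≠ 0 := by
  apply one_sub_ne
  rw [norm_mul, norm_pow]
  calc ‖x‖ * ‖q‖ ^ k ≤ ‖x‖ * 1 :=
      mul_le_mul_of_nonneg_left (pow_le_one₀ (norm_nonneg q) hq.le) (norm_nonneg x)
    _ < 1 := by simpa using hx

/-- The key telescoping evaluation:
`∑ (b;q)_n / (c'q;q)_n (c'/b)^n = (1-c')/(1-c'/b)` with `c' = t*b`. -/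
lemma star (hq : ‖q‖ < 1) {b t : ℂ} (hb : b ≠ 0) (ht : ‖t‖ < 1)
    (hc' : ∀ k, 1 - (t*b) * q ^ (k+1) ≠ 0) :
    Summable (fun n => qPoch b q n / qPoch (t*b*q) q n * t^n) ∧
    ∑' n : ℕ, qPoch b q n / qPoch (t*b*q) q n * t^n = (1 - t*b) / (1 - t) := by
  have hcq : ∀ k, (1:ℂ) - (t*b*q) * q ^ k ≠ 0 := by
    intro k
    have := hc' k
    rw [pow_succ'] at this
    convert this using 2
    ring
  have hpne : ∀ n, qPoch (t*b*q) q n ≠ 0 := qPoch_ne_zero hcq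
  have h1t : (1:ℂ) - t ≠ 0 := one_sub_ne ht
  set v : ℕ → ℂ := fun n => (1 - (t*b)*q^n) / (1 - t) * (qPoch b q n / qPoch (t*b*q) q n) * t^n
    with hv
  have htel : ∀ n, qPoch b q n / qPoch (t*b*q) q n * t^n = v n - v (n+1) := by
    intro n
    have hbq : qPoch b q (n+1) = qPoch b q n * (1 - b * q^n) := qPoch_succ b q n
    have hcqn : qPoch (t*b*q) q (n+1) = qPoch (t*b*q) q n * (1 - (t*b*q) * q^n) :=
      qPoch_succ (t*b*q) q n
    rw [hv]
    simp only
    rw [hbq, hcqn]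
    have hcn1 : (1:ℂ) - (t*b) * q^(n+1) = 1 - (t*b*q) * q^n := by rw [pow_succ']; ring
    rw [hcn1, pow_succ]
    field_simp [hpne n, hcq n, h1t]
    ring
  -- partial sums and limit
  have hpart : ∀ N, ∑ n ∈ range N, qPoch b q n / qPoch (t*b*q) q n * t^n = v 0 - v N := by
    intro N
    rw [← Finset.sum_range_sub' v N]
    exact Finset.sum_congr rfl fun n _ => htel n
  have hv0 : v 0 = (1 - t*b) / (1 - t) := by
    rw [hv]; simp [qPoch]
  -- bound for v
  obtain ⟨m, hm, hmle⟩ := exists_lb_qPoch hq hcq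
  have hub := qPoch_norm_le hq (q := q) b
  set Cb := Real.exp (‖b‖ / (1 - ‖q‖)) with hCb
  have hvb : ∀ n, ‖v n‖ ≤ ((1 + ‖t*b‖) / ‖(1:ℂ) - t‖ * (Cb / m)) * ‖t‖^n := by
    intro n
    rw [hv]
    simp only
    rw [norm_mul, norm_mul, norm_div, norm_div, norm_pow]
    have h1 : ‖(1:ℂ) - t*b*q^n‖ ≤ 1 + ‖t*b‖ := by
      refine (norm_one_sub_le _).trans ?_
      rw [norm_mul, norm_pow]
      have : ‖t*b‖ * ‖q‖^n ≤ ‖t*b‖ * 1 :=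
        mul_le_mul_of_nonneg_left (pow_le_one₀ (norm_nonneg q) hq.le) (norm_nonneg _)
      simpa using this
    have h2 : ‖qPoch b q n‖ / ‖qPoch (t*b*q) q n‖ ≤ Cb / m := by
      apply div_le_div₀ (by positivity) (hub n) hm (hmle n)
    have h3 : (0:ℝ) < ‖(1:ℂ) - t‖ := norm_pos_iff.2 h1t
    calc ‖1 - t*b*q^n‖ / ‖(1:ℂ)-t‖ * (‖qPoch b q n‖ / ‖qPoch (t*b*q) q n‖) * ‖t‖^n
        ≤ (1 + ‖t*b‖) / ‖(1:ℂ)-t‖ * (Cb/m) * ‖t‖^n := by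
          apply mul_le_mul_of_nonneg_right _ (by positivity)
          apply mul_le_mul _ h2 (by positivity) (by positivity)
          exact (div_le_div_iff_of_pos_right h3).2 h1
      _ = (1 + ‖t*b‖) / ‖(1:ℂ)-t‖ * (Cb/m) * ‖t‖^n := rfl
  have hvlim : Tendsto v atTop (𝓝 0) := by
    apply squeeze_zero_norm hvb
    simpa using (tendsto_pow_atTop_nhds_zero_of_lt_one (norm_nonneg t) ht).const_mul
      ((1 + ‖t*b‖) / ‖(1:ℂ) - t‖ * (Cb / m))
  have hsum : Summable (fun n => qPoch b q n / qPoch (t*b*q) q n * t^n) := by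
    apply Summable.of_norm_bounded (g := fun n => (Cb/m) * ‖t‖^n)
    · exact ((summable_geometric_of_lt_one (norm_nonneg t) ht).mul_left _)
    · intro n
      rw [norm_mul, norm_div, norm_pow]
      apply mul_le_mul_of_nonneg_right _ (by positivity)
      exact div_le_div₀ (by positivity) (hub n) hm (hmle n)
  refine ⟨hsum, ?_⟩
  have t1 : Tendsto (fun N => ∑ n ∈ range N, qPoch b q n / qPoch (t*b*q) q n * t^n) atTop
      (𝓝 (∑' n : ℕ, qPoch b q n / qPoch (t*b*q) q n * t^n)) := hsum.hasSum.tendsto_sum_nat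
  have t2 : Tendsto (fun N => ∑ n ∈ range N, qPoch b q n / qPoch (t*b*q) q n * t^n) atTop
      (𝓝 (v 0 - 0)) := by
    simp only [hpart]
    exact tendsto_const_nhds.sub hvlim
  rw [tendsto_nhds_unique t1 t2, sub_zero, hv0]

end QAux

namespace QAux

/-- coefficients of the q-binomial series -/
noncomputable def acoef (q b : ℂ) (n : ℕ) : ℂ := qPoch b q n / qPoch q q n

noncomputable def fF (q b s : ℂ) : ℂ := ∑' n : ℕ, acoef q b n * s ^ n

noncomputable def DD (q b s : ℂ) : ℂ := ∑' n : ℕ, (n : ℂ) * acoef q b n * s ^ n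

variable {q b : ℂ}

lemma hq_ne (hq : ‖q‖ < 1) : ∀ k, (1:ℂ) - q * q ^ k ≠ 0 := small_ne hq hq

lemma acoef_zero (q b : ℂ) : acoef q b 0 = 1 := by simp [acoef, qPoch]

lemma acoef_bound (hq : ‖q‖ < 1) (b : ℂ) : ∃ C : ℝ, 0 < C ∧ ∀ n, ‖acoef q b n‖ ≤ C := by
  obtain ⟨m, hm, hmle⟩ := exists_lb_qPoch hq (hq_ne hq)
  refine ⟨Real.exp (‖b‖ / (1 - ‖q‖)) / m, by positivity, ?_⟩
  intro n
  rw [acoef, norm_div]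
  exact div_le_div₀ (by positivity) (qPoch_norm_le hq b n) hm (hmle n)

lemma acoef_rec (hq : ‖q‖ < 1) (b : ℂ) (n : ℕ) :
    (1 - q * q ^ n) * acoef q b (n+1) = (1 - b * q ^ n) * acoef q b n := by
  rw [acoef, acoef, qPoch_succ, qPoch_succ]
  have h1 := qPoch_ne_zero (hq_ne hq) n
  have h2 := hq_ne hq n
  field_simp

lemma summable_f (hq : ‖q‖ < 1) (b : ℂ) {s : ℂ} (hs : ‖s‖ < 1) :
    Summable (fun n : ℕ => acoef q b n * s ^ n) := by
  obtain ⟨C, hC, hCle⟩ := acoef_bound hq b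
  apply Summable.of_norm_bounded (g := fun n => C * ‖s‖^n)
  · exact (summable_geometric_of_lt_one (norm_nonneg s) hs).mul_left C
  · intro n
    rw [norm_mul, norm_pow]
    exact mul_le_mul_of_nonneg_right (hCle n) (by positivity)

lemma summable_D (hq : ‖q‖ < 1) (b : ℂ) {s : ℂ} (hs : ‖s‖ < 1) :
    Summable (fun n : ℕ => (n:ℂ) * acoef q b n * s ^ n) := by
  obtain ⟨C, hC, hCle⟩ := acoef_bound hq b
  refine Summable.of_norm_bounded (g := fun n => C * ((n:ℝ) * ‖s‖^n)) ?_ ?_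
  · apply Summable.mul_left
    have := summable_pow_mul_geometric_of_norm_lt_one (R := ℝ) 1 (r := ‖s‖) (by simpa using hs)
    simpa using this
  · intro n
    rw [norm_mul, norm_mul, norm_pow, Complex.norm_natCast]
    calc (n:ℝ) * ‖acoef q b n‖ * ‖s‖^n ≤ (n:ℝ) * C * ‖s‖^n := by
          apply mul_le_mul_of_nonneg_right (mul_le_mul_of_nonneg_left (hCle n) (by positivity))
            (by positivity)
      _ = C * ((n:ℝ) * ‖s‖^n) := by ring

lemma norm_mul_q_lt (hq : ‖q‖ < 1) {s : ℂ} (hs : ‖s‖ < 1) : ‖s * q‖ < 1 := by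
  rw [norm_mul]
  calc ‖s‖ * ‖q‖ ≤ 1 * ‖q‖ := mul_le_mul_of_nonneg_right hs.le (norm_nonneg q)
    _ < 1 := by simpa using hq

lemma funcEq_f (hq : ‖q‖ < 1) (b : ℂ) {s : ℂ} (hs : ‖s‖ < 1) :
    (1 - s) * fF q b s = (1 - b * s) * fF q b (s * q) := by
  have hsq : ‖s * q‖ < 1 := norm_mul_q_lt hq hs
  have S1 := summable_f hq b hs
  have S2 := summable_f hq b hsq
  have key : fF q b s - fF q b (s*q) = s * fF q b s - b * s * fF q b (s*q) := by
    have e1 : fF q b s - fF q b (s*q)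
        = ∑' n : ℕ, (acoef q b n * s^n - acoef q b n * (s*q)^n) := (Summable.tsum_sub S1 S2).symm
    have e2 : ∑' n : ℕ, (acoef q b n * s^n - acoef q b n * (s*q)^n)
        = ∑' n : ℕ, (acoef q b (n+1) * s^(n+1) - acoef q b (n+1) * (s*q)^(n+1)) := by
      rw [Summable.tsum_eq_zero_add (S1.sub S2)]
      simp
    have e3 : ∀ n : ℕ, acoef q b (n+1) * s^(n+1) - acoef q b (n+1) * (s*q)^(n+1)
        = s * (acoef q b n * s^n) - b * s * (acoef q b n * (s*q)^n) := by
      intro n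
      have hr := acoef_rec hq b n
      linear_combination (s^(n+1)) * hr
    have e4 : ∑' n : ℕ, (acoef q b (n+1) * s^(n+1) - acoef q b (n+1) * (s*q)^(n+1))
        = s * fF q b s - b * s * fF q b (s*q) := by
      rw [tsum_congr e3, Summable.tsum_sub (S1.mul_left s) (S2.mul_left (b*s)),
        tsum_mul_left, tsum_mul_left]
      rfl
    rw [e1, e2, e4]
  linear_combination key

lemma funcEq_D (hq : ‖q‖ < 1) (b : ℂ) {s : ℂ} (hs : ‖s‖ < 1) :
    (1 - s) * DD q b s
      = (1 - b * s) * DD q b (s * q) + s * fF q b s - b * s * fF q b (s * q) := by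
  have hsq : ‖s * q‖ < 1 := norm_mul_q_lt hq hs
  have S1 := summable_f hq b hs
  have S2 := summable_f hq b hsq
  have T1 := summable_D hq b hs
  have T2 := summable_D hq b hsq
  have key : DD q b s - DD q b (s*q)
      = (s * DD q b s + s * fF q b s) - (b * s * DD q b (s*q) + b * s * fF q b (s*q)) := by
    have e1 : DD q b s - DD q b (s*q)
        = ∑' n : ℕ, ((n:ℂ) * acoef q b n * s^n - (n:ℂ) * acoef q b n * (s*q)^n) :=
      (Summable.tsum_sub T1 T2).symm
    have e2 : ∑' n : ℕ, ((n:ℂ) * acoef q b n * s^n - (n:ℂ) * acoef q b n * (s*q)^n)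
        = ∑' n : ℕ, (((n:ℕ)+1:ℂ) * acoef q b (n+1) * s^(n+1)
            - ((n:ℕ)+1:ℂ) * acoef q b (n+1) * (s*q)^(n+1)) := by
      rw [Summable.tsum_eq_zero_add (T1.sub T2)]
      push_cast
      simp
    have e3 : ∀ n : ℕ, ((n:ℕ)+1:ℂ) * acoef q b (n+1) * s^(n+1)
            - ((n:ℕ)+1:ℂ) * acoef q b (n+1) * (s*q)^(n+1)
        = (s * ((n:ℂ) * acoef q b n * s^n) + s * (acoef q b n * s^n))
            - (b * s * ((n:ℂ) * acoef q b n * (s*q)^n) + b * s * (acoef q b n * (s*q)^n)) := by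
      intro n
      have hr := acoef_rec hq b n
      linear_combination (((n:ℂ)+1) * s^(n+1)) * hr
    have e4 : ∑' n : ℕ, ((s * ((n:ℂ) * acoef q b n * s^n) + s * (acoef q b n * s^n))
            - (b * s * ((n:ℂ) * acoef q b n * (s*q)^n) + b * s * (acoef q b n * (s*q)^n)))
        = (s * DD q b s + s * fF q b s) - (b * s * DD q b (s*q) + b * s * fF q b (s*q)) := by
      rw [Summable.tsum_sub ((T1.mul_left s).add (S1.mul_left s))
        ((T2.mul_left (b*s)).add (S2.mul_left (b*s))),
        Summable.tsum_add (T1.mul_left s) (S1.mul_left s),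
        Summable.tsum_add (T2.mul_left (b*s)) (S2.mul_left (b*s)),
        tsum_mul_left, tsum_mul_left, tsum_mul_left, tsum_mul_left]
      rfl
    rw [e1, e2, tsum_congr e3, e4]
  linear_combination key

end QAux

namespace QAux

variable {q b : ℂ}

lemma fF_sub_one_bound (hq : ‖q‖ < 1) (b : ℂ) :
    ∃ C : ℝ, 0 < C ∧ ∀ u : ℂ, ‖u‖ ≤ 1/2 → ‖fF q b u - 1‖ ≤ C * ‖u‖ := by
  obtain ⟨C, hC, hCle⟩ := acoef_bound hq b
  refine ⟨2 * C, by positivity, ?_⟩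
  intro u hu
  have hu1 : ‖u‖ < 1 := lt_of_le_of_lt hu (by norm_num)
  have S1 := summable_f hq b hu1
  have e0 : fF q b u - 1 = ∑' n : ℕ, acoef q b (n+1) * u^(n+1) := by
    rw [fF, Summable.tsum_eq_zero_add S1, acoef_zero]
    simp
  rw [e0]
  have hsg : Summable (fun n : ℕ => C * ‖u‖^(n+1)) := by
    have : Summable (fun n : ℕ => ‖u‖^n) := summable_geometric_of_lt_one (norm_nonneg u) hu1
    exact (((summable_nat_add_iff 1).2 this).mul_left C)
  have hbound : ∀ n : ℕ, ‖acoef q b (n+1) * u^(n+1)‖ ≤ C * ‖u‖^(n+1) := by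
    intro n
    rw [norm_mul, norm_pow]
    exact mul_le_mul_of_nonneg_right (hCle (n+1)) (by positivity)
  calc ‖∑' n : ℕ, acoef q b (n+1) * u^(n+1)‖ ≤ ∑' n : ℕ, C * ‖u‖^(n+1) := by
        refine (norm_tsum_le_tsum_norm ?_).trans (Summable.tsum_le_tsum hbound ?_ hsg)
        · exact hsg.of_nonneg_of_le (fun n => norm_nonneg _) hbound
        · exact hsg.of_nonneg_of_le (fun n => norm_nonneg _) hbound
    _ = C * ‖u‖ * (1 - ‖u‖)⁻¹ := by
        have : ∀ n : ℕ, C * ‖u‖^(n+1) = (C * ‖u‖) * ‖u‖^n := by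
          intro n; rw [pow_succ]; ring
        rw [tsum_congr this, tsum_mul_left, tsum_geometric_of_lt_one (norm_nonneg u) hu1]
    _ ≤ 2 * C * ‖u‖ := by
        have h2 : (1 - ‖u‖)⁻¹ ≤ 2 := by
          rw [inv_le_comm₀ (by linarith) (by norm_num)]
          linarith
        calc C * ‖u‖ * (1-‖u‖)⁻¹ ≤ C * ‖u‖ * 2 :=
            mul_le_mul_of_nonneg_left h2 (by positivity)
          _ = 2 * C * ‖u‖ := by ring

lemma DD_bound (hq : ‖q‖ < 1) (b : ℂ) :
    ∃ C : ℝ, 0 < C ∧ ∀ u : ℂ, ‖u‖ ≤ 1/2 → ‖DD q b u‖ ≤ C * ‖u‖ := by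
  obtain ⟨C, hC, hCle⟩ := acoef_bound hq b
  refine ⟨4 * C, by positivity, ?_⟩
  intro u hu
  have hu1 : ‖u‖ < 1 := lt_of_le_of_lt hu (by norm_num)
  have hsg : Summable (fun n : ℕ => C * ((n:ℝ) * ‖u‖^n)) := by
    apply Summable.mul_left
    have := summable_pow_mul_geometric_of_norm_lt_one (R := ℝ) 1 (r := ‖u‖) (by simpa using hu1)
    simpa using this
  have hbound : ∀ n : ℕ, ‖(n:ℂ) * acoef q b n * u^n‖ ≤ C * ((n:ℝ) * ‖u‖^n) := by
    intro n
    rw [norm_mul, norm_mul, norm_pow, Complex.norm_natCast]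
    calc (n:ℝ) * ‖acoef q b n‖ * ‖u‖^n ≤ (n:ℝ) * C * ‖u‖^n :=
        mul_le_mul_of_nonneg_right (mul_le_mul_of_nonneg_left (hCle n) (by positivity))
          (by positivity)
      _ = C * ((n:ℝ) * ‖u‖^n) := by ring
  calc ‖DD q b u‖ ≤ ∑' n : ℕ, C * ((n:ℝ) * ‖u‖^n) := by
        refine (norm_tsum_le_tsum_norm ?_).trans (Summable.tsum_le_tsum hbound ?_ hsg)
        · exact hsg.of_nonneg_of_le (fun n => norm_nonneg _) hbound
        · exact hsg.of_nonneg_of_le (fun n => norm_nonneg _) hbound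
    _ = C * (‖u‖ / (1 - ‖u‖)^2) := by
        rw [tsum_mul_left]
        congr 1
        have := tsum_coe_mul_geometric_of_norm_lt_one (𝕜 := ℝ) (r := ‖u‖) (by simpa using hu1)
        simpa using this
    _ ≤ 4 * C * ‖u‖ := by
        have h2 : (1/2:ℝ) ≤ 1 - ‖u‖ := by linarith
        have h3 : (1/4:ℝ) ≤ (1 - ‖u‖)^2 := by nlinarith
        have h4 : ‖u‖ / (1 - ‖u‖)^2 ≤ ‖u‖ * 4 := by
          rw [div_le_iff₀ (by nlinarith)]
          nlinarith [norm_nonneg u]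
        calc C * (‖u‖ / (1-‖u‖)^2) ≤ C * (‖u‖ * 4) := mul_le_mul_of_nonneg_left h4 hC.le
          _ = 4 * C * ‖u‖ := by ring

lemma tendsto_norm_geo (hq : ‖q‖ < 1) (s : ℂ) :
    Tendsto (fun K : ℕ => ‖s‖ * ‖q‖ ^ K) atTop (𝓝 0) := by
  simpa using (tendsto_pow_atTop_nhds_zero_of_lt_one (norm_nonneg q) hq).const_mul ‖s‖

lemma eventually_small (hq : ‖q‖ < 1) (s : ℂ) (ε : ℝ) (hε : 0 < ε) :
    ∀ᶠ K : ℕ in atTop, ‖s * q ^ K‖ ≤ ε := by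
  filter_upwards [(tendsto_norm_geo hq s).eventually (eventually_le_nhds hε)] with K hK
  rw [norm_mul, norm_pow]
  exact hK

lemma tendsto_fF_one (hq : ‖q‖ < 1) (b s : ℂ) :
    Tendsto (fun K : ℕ => fF q b (s * q ^ K)) atTop (𝓝 1) := by
  obtain ⟨C, hC, hCle⟩ := fF_sub_one_bound hq b
  rw [← tendsto_sub_nhds_zero_iff]
  apply squeeze_zero_norm' (a := fun K => C * (‖s‖ * ‖q‖^K))
  · filter_upwards [eventually_small hq s (1/2) (by norm_num)] with K hK
    calc ‖fF q b (s*q^K) - 1‖ ≤ C * ‖s * q^K‖ := hCle _ hK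
      _ = C * (‖s‖ * ‖q‖^K) := by rw [norm_mul, norm_pow]
  · simpa using (tendsto_norm_geo hq s).const_mul C

lemma tendsto_DD_zero (hq : ‖q‖ < 1) (b s : ℂ) :
    Tendsto (fun K : ℕ => DD q b (s * q ^ K)) atTop (𝓝 0) := by
  obtain ⟨C, hC, hCle⟩ := DD_bound hq b
  apply squeeze_zero_norm' (a := fun K => C * (‖s‖ * ‖q‖^K))
  · filter_upwards [eventually_small hq s (1/2) (by norm_num)] with K hK
    calc ‖DD q b (s*q^K)‖ ≤ C * ‖s * q^K‖ := hCle _ hK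
      _ = C * (‖s‖ * ‖q‖^K) := by rw [norm_mul, norm_pow]
  · simpa using (tendsto_norm_geo hq s).const_mul C

lemma tendsto_qPochInf_one (hq : ‖q‖ < 1) {x : ℕ → ℂ} {s : ℂ}
    (hx : ∀ K, ‖x K‖ ≤ ‖s‖ * ‖q‖^K) (h0 : ∀ K k, 1 - x K * q ^ k ≠ 0) :
    Tendsto (fun K : ℕ => qPochInf (x K) q) atTop (𝓝 1) := by
  have h1q : (0:ℝ) < 1 - ‖q‖ := by linarith
  rw [← tendsto_sub_nhds_zero_iff]
  apply squeeze_zero_norm' (a := fun K => Real.exp (‖s‖ * ‖q‖^K / (1 - ‖q‖)) - 1)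
  · apply Eventually.of_forall
    intro K
    calc ‖qPochInf (x K) q - 1‖
        ≤ Real.exp (‖x K‖ / (1 - ‖q‖)) - 1 := qPochInf_sub_one_norm_le hq (h0 K)
      _ ≤ Real.exp (‖s‖ * ‖q‖^K / (1 - ‖q‖)) - 1 := by
          have := Real.exp_le_exp.2 ((div_le_div_iff_of_pos_right h1q).2 (hx K))
          linarith
  · have t0 : Tendsto (fun K : ℕ => ‖s‖ * ‖q‖^K / (1 - ‖q‖)) atTop (𝓝 0) := by
      simpa using (tendsto_norm_geo hq s).div_const (1 - ‖q‖)
    have := (Real.continuous_exp.continuousAt (x := (0:ℝ))).tendsto.comp t0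
    rw [Real.exp_zero] at this
    simpa using this.sub_const 1

/-- The q-binomial theorem. -/
lemma qBinom (hq : ‖q‖ < 1) (b : ℂ) {s : ℂ} (hs : ‖s‖ < 1)
    (h0 : ∀ k, 1 - b * s * q ^ k ≠ 0) :
    fF q b s * qPochInf s q = qPochInf (b * s) q := by
  set Gd : ℂ → ℂ := fun u => fF q b u * qPochInf u q - qPochInf (b * u) q with hGd
  have rung : ∀ u : ℂ, ‖u‖ < 1 → (∀ k, 1 - b * u * q ^ k ≠ 0) →
      Gd u = (1 - b * u) * Gd (u * q) := by
    intro u hu hu0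
    have e1 : qPochInf u q = (1 - u) * qPochInf (u*q) q := qPochInf_shift hq (small_ne hq hu)
    have e2 : qPochInf (b*u) q = (1 - b*u) * qPochInf ((b*u)*q) q := qPochInf_shift hq hu0
    have e3 := funcEq_f hq b hu
    rw [hGd]
    simp only
    rw [show b * (u * q) = (b * u) * q by ring, e1, e2]
    linear_combination (qPochInf (u*q) q) * e3
  have hlad : ∀ K : ℕ, Gd s = qPoch (b*s) q K * Gd (s * q ^ K) := by
    intro K
    induction K with
    | zero => simp [qPoch]
    | succ K ih =>
      have hK : ‖s * q ^ K‖ < 1 := by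
        rw [norm_mul, norm_pow]
        calc ‖s‖ * ‖q‖^K ≤ ‖s‖ * 1 :=
            mul_le_mul_of_nonneg_left (pow_le_one₀ (norm_nonneg q) hq.le) (norm_nonneg s)
          _ < 1 := by simpa using hs
      have hK0 : ∀ k, 1 - b * (s * q ^ K) * q ^ k ≠ 0 := by
        intro k
        have := h0 (K + k)
        rw [pow_add] at this
        convert this using 2
        ring
      rw [ih, rung (s * q ^ K) hK hK0, qPoch_succ,
        show s * q ^ (K+1) = (s * q ^ K) * q by rw [pow_succ]; ring]
      ring
  have hGdlim : Tendsto (fun K : ℕ => Gd (s * q ^ K)) atTop (𝓝 0) := by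
    have l1 := tendsto_fF_one hq b s
    have l2 : Tendsto (fun K : ℕ => qPochInf (s * q ^ K) q) atTop (𝓝 1) := by
      apply tendsto_qPochInf_one hq (s := s) (fun K => by rw [norm_mul, norm_pow])
      intro K k
      apply small_ne hq _ k
      rw [norm_mul, norm_pow]
      calc ‖s‖ * ‖q‖^K ≤ ‖s‖ * 1 :=
          mul_le_mul_of_nonneg_left (pow_le_one₀ (norm_nonneg q) hq.le) (norm_nonneg s)
        _ < 1 := by simpa using hs
    have l3 : Tendsto (fun K : ℕ => qPochInf (b * (s * q ^ K)) q) atTop (𝓝 1) := by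
      apply tendsto_qPochInf_one hq (s := b * s) (x := fun K => b * (s * q ^ K))
      · intro K
        rw [show b * (s * q^K) = (b*s) * q^K by ring, norm_mul, norm_pow]
      · intro K k
        have := h0 (K + k)
        rw [pow_add] at this
        convert this using 2
        ring
    have := (l1.mul l2).sub l3
    simpa using this
  have hbd : Tendsto (fun K : ℕ => qPoch (b*s) q K * Gd (s * q ^ K)) atTop (𝓝 0) := by
    apply squeeze_zero_norm (a := fun K => Real.exp (‖b*s‖/(1-‖q‖)) * ‖Gd (s * q ^ K)‖)
    · intro K
      rw [norm_mul]
      exact mul_le_mul_of_nonneg_right (qPoch_norm_le hq (b*s) K) (norm_nonneg _)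
    · simpa using (hGdlim.norm).const_mul (Real.exp (‖b*s‖/(1-‖q‖)))
  have : Tendsto (fun _ : ℕ => Gd s) atTop (𝓝 (Gd s)) := tendsto_const_nhds
  have hGs : Gd s = 0 := by
    apply tendsto_nhds_unique this
    have : (fun _ : ℕ => Gd s) = fun K => qPoch (b*s) q K * Gd (s * q ^ K) := by
      funext K
      exact hlad K
    rw [this]
    exact hbd
  rw [hGd] at hGs
  simp only at hGs
  linear_combination hGs

end QAux

namespace QAux

noncomputable def SS (q b c' : ℂ) : ℂ :=
  ∑' n : ℕ, (1/(1 - q^(n+1))) * (qPoch b q (n+1) / qPoch c' q (n+1)) * (c'/b)^(n+1)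

variable {q b : ℂ}

lemma one_sub_qpow_ne (hq : ‖q‖ < 1) (n : ℕ) : (1:ℂ) - q^(n+1) ≠ 0 := by
  have := hq_ne hq n
  rwa [← pow_succ'] at this

lemma norm_one_sub_qpow_ge (hq : ‖q‖ < 1) (n : ℕ) : 1 - ‖q‖ ≤ ‖(1:ℂ) - q^(n+1)‖ := by
  have h1 : ‖q^(n+1)‖ ≤ ‖q‖ := by
    rw [norm_pow, pow_succ]
    calc ‖q‖^n * ‖q‖ ≤ 1 * ‖q‖ :=
        mul_le_mul_of_nonneg_right (pow_le_one₀ (norm_nonneg q) hq.le) (norm_nonneg q)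
      _ = ‖q‖ := by ring
  have := norm_sub_norm_le (1:ℂ) (q^(n+1))
  simp only [norm_one] at this
  linarith

lemma norm_inv_one_sub_qpow_le (hq : ‖q‖ < 1) (n : ℕ) :
    ‖(1:ℂ)/(1 - q^(n+1))‖ ≤ 1/(1 - ‖q‖) := by
  have h1q : (0:ℝ) < 1 - ‖q‖ := by linarith
  rw [norm_div, norm_one]
  exact one_div_le_one_div_of_le h1q (norm_one_sub_qpow_ge hq n)

lemma SS_term_norm_le (hq : ‖q‖ < 1) {c' : ℂ} {m : ℝ} (hm : 0 < m)
    (hmle : ∀ n, m ≤ ‖qPoch c' q n‖) (n : ℕ) :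
    ‖(1/(1 - q^(n+1))) * (qPoch b q (n+1) / qPoch c' q (n+1)) * (c'/b)^(n+1)‖
      ≤ (1/(1-‖q‖)) * (Real.exp (‖b‖/(1-‖q‖)) / m) * ‖c'/b‖^(n+1) := by
  rw [norm_mul, norm_mul, norm_pow]
  have h2 : ‖qPoch b q (n+1) / qPoch c' q (n+1)‖ ≤ Real.exp (‖b‖/(1-‖q‖)) / m := by
    rw [norm_div]
    exact div_le_div₀ (by positivity) (qPoch_norm_le hq b (n+1)) hm (hmle (n+1))
  apply mul_le_mul_of_nonneg_right _ (by positivity)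
  have h1q : (0:ℝ) < 1 - ‖q‖ := by linarith
  exact mul_le_mul (norm_inv_one_sub_qpow_le hq n) h2 (norm_nonneg _) (by positivity)

lemma summable_SS (hq : ‖q‖ < 1) (b : ℂ) {c' : ℂ} (ht' : ‖c'/b‖ < 1)
    (h0 : ∀ k, (1:ℂ) - c' * q ^ k ≠ 0) :
    Summable (fun n : ℕ =>
      (1/(1 - q^(n+1))) * (qPoch b q (n+1) / qPoch c' q (n+1)) * (c'/b)^(n+1)) := by
  obtain ⟨m, hm, hmle⟩ := exists_lb_qPoch hq h0
  set C := (1/(1-‖q‖)) * (Real.exp (‖b‖/(1-‖q‖)) / m) with hC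
  refine Summable.of_norm_bounded (g := fun n => (C * ‖c'/b‖) * ‖c'/b‖^n) ?_ ?_
  · exact (summable_geometric_of_lt_one (norm_nonneg _) ht').mul_left _
  · intro n
    have := SS_term_norm_le (b := b) hq hm hmle n
    rw [hC]
    calc ‖(1/(1 - q^(n+1))) * (qPoch b q (n+1) / qPoch c' q (n+1)) * (c'/b)^(n+1)‖
        ≤ (1/(1-‖q‖)) * (Real.exp (‖b‖/(1-‖q‖)) / m) * ‖c'/b‖^(n+1) := this
      _ = (1/(1-‖q‖)) * (Real.exp (‖b‖/(1-‖q‖)) / m) * ‖c'/b‖ * ‖c'/b‖^n := by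
          rw [pow_succ]; ring

/-- Rung identity for the sum `SS`. -/
lemma rungA (hq : ‖q‖ < 1) (hb : b ≠ 0) {c' : ℂ} (ht' : ‖c'/b‖ < 1)
    (h0 : ∀ k, (1:ℂ) - c' * q ^ k ≠ 0) :
    SS q b c' - SS q b (c'*q) = 1/(1 - c'/b) - 1/(1 - c') := by
  have h1c : (1:ℂ) - c' ≠ 0 := by simpa using h0 0
  have h1t : (1:ℂ) - c'/b ≠ 0 := one_sub_ne ht'
  have hcb : c'/b * b = c' := div_mul_cancel₀ c' hb
  have h0q : ∀ k, (1:ℂ) - (c'*q) * q ^ k ≠ 0 := by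
    intro k
    have := h0 (k+1)
    rw [pow_succ'] at this
    convert this using 2
    ring
  have htq' : ‖(c'*q)/b‖ < 1 := by
    have : (c'*q)/b = (c'/b)*q := by ring
    rw [this]
    exact norm_mul_q_lt hq ht'
  -- the star sum
  have h0' : ∀ k, (1:ℂ) - ((c'/b)*b) * q ^ (k+1) ≠ 0 := by
    intro k
    rw [hcb]
    exact h0 (k+1)
  obtain ⟨hstarS, hstarV⟩ := star hq hb ht' h0'
  rw [hcb] at hstarS hstarV
  -- shifted star sum
  have hu0 : qPoch b q 0 / qPoch (c'*q) q 0 * (c'/b)^0 = 1 := by simp [qPoch]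
  have hshift : ∑' n : ℕ, qPoch b q (n+1) / qPoch (c'*q) q (n+1) * (c'/b)^(n+1)
      = (1 - c') / (1 - c'/b) - 1 := by
    have := Summable.tsum_eq_zero_add hstarS
    rw [hstarV] at this
    rw [hu0] at this
    linear_combination -this
  have S1 := summable_SS hq b ht' h0
  have S2 := summable_SS hq b htq' h0q
  have hterm : ∀ n : ℕ,
      (1/(1 - q^(n+1))) * (qPoch b q (n+1) / qPoch c' q (n+1)) * (c'/b)^(n+1)
        - (1/(1 - q^(n+1))) * (qPoch b q (n+1) / qPoch (c'*q) q (n+1)) * ((c'*q)/b)^(n+1)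
      = (1/(1-c')) * (qPoch b q (n+1) / qPoch (c'*q) q (n+1) * (c'/b)^(n+1)) := by
    intro n
    have e1 : qPoch c' q (n+1) = (1 - c') * qPoch (c'*q) q n := qPoch_succ' c' q n
    have e2 : qPoch (c'*q) q (n+1) = qPoch (c'*q) q n * (1 - (c'*q) * q^n) :=
      qPoch_succ (c'*q) q n
    have e3 : ((c'*q)/b)^(n+1) = (c'/b)^(n+1) * q^(n+1) := by
      rw [show (c'*q)/b = (c'/b)*q by ring, mul_pow]
    rw [e1, e2, e3]
    have hpn := qPoch_ne_zero h0q n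
    have hqn := h0q n
    have hq1 := one_sub_qpow_ne hq n
    set tv := c'/b with htv
    set P := qPoch (c'*q) q n with hP
    set A := qPoch b q (n+1) with hA
    field_simp
    ring
  rw [SS, SS, ← Summable.tsum_sub S1 S2, tsum_congr hterm, tsum_mul_left, hshift]
  have : (1:ℂ)/(1-c') * ((1 - c') / (1 - c'/b) - 1) = 1/(1 - c'/b) - 1/(1 - c') := by
    field_simp
  rw [this]

lemma norm_SS_le_of_small (hq : ‖q‖ < 1) (b : ℂ) {c' : ℂ}
    (hsm : ‖c'‖ / (1 - ‖q‖) ≤ 1/2) (ht' : ‖c'/b‖ < 1) :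
    ‖SS q b c'‖ ≤ ((1/(1-‖q‖)) * (Real.exp (‖b‖/(1-‖q‖)) / (1/2)))
      * (‖c'/b‖ / (1 - ‖c'/b‖)) := by
  set C := (1/(1-‖q‖)) * (Real.exp (‖b‖/(1-‖q‖)) / (1/2)) with hC
  have hmle := qPoch_norm_ge_half hq hsm
  have hbnd := fun n => SS_term_norm_le (b := b) hq (by norm_num : (0:ℝ) < 1/2) hmle n
  have hgeo : Summable (fun n : ℕ => C * ‖c'/b‖^(n+1)) := by
    apply Summable.mul_left
    exact (summable_nat_add_iff 1).2 (summable_geometric_of_lt_one (norm_nonneg _) ht')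
  have hsummn : Summable (fun n : ℕ => ‖(1/(1 - q^(n+1))) * (qPoch b q (n+1) / qPoch c' q (n+1))
      * (c'/b)^(n+1)‖) := by
    apply hgeo.of_nonneg_of_le (fun n => norm_nonneg _)
    intro n
    calc ‖(1/(1 - q^(n+1))) * (qPoch b q (n+1) / qPoch c' q (n+1)) * (c'/b)^(n+1)‖
        ≤ (1/(1-‖q‖)) * (Real.exp (‖b‖/(1-‖q‖)) / (1/2)) * ‖c'/b‖^(n+1) := hbnd n
      _ = C * ‖c'/b‖^(n+1) := by rw [hC]
  calc ‖SS q b c'‖ ≤ ∑' n : ℕ, ‖(1/(1 - q^(n+1))) * (qPoch b q (n+1) / qPoch c' q (n+1))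
        * (c'/b)^(n+1)‖ := norm_tsum_le_tsum_norm hsummn
    _ ≤ ∑' n : ℕ, C * ‖c'/b‖^(n+1) := Summable.tsum_le_tsum (fun n => by
        calc ‖(1/(1 - q^(n+1))) * (qPoch b q (n+1) / qPoch c' q (n+1)) * (c'/b)^(n+1)‖
            ≤ (1/(1-‖q‖)) * (Real.exp (‖b‖/(1-‖q‖)) / (1/2)) * ‖c'/b‖^(n+1) := hbnd n
          _ = C * ‖c'/b‖^(n+1) := by rw [hC]) hsummn hgeo
    _ = C * (‖c'/b‖ / (1 - ‖c'/b‖)) := by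
        have : ∀ n : ℕ, C * ‖c'/b‖^(n+1) = (C * ‖c'/b‖) * ‖c'/b‖^n := by
          intro n; rw [pow_succ]; ring
        rw [tsum_congr this, tsum_mul_left,
          tsum_geometric_of_lt_one (norm_nonneg _) ht']
        rw [div_eq_mul_inv]
        ring

lemma tendsto_SS_zero (hq : ‖q‖ < 1) (b c : ℂ) (ht : ‖c/b‖ < 1) :
    Tendsto (fun K : ℕ => SS q b (c*q^K)) atTop (𝓝 0) := by
  have h1q : (0:ℝ) < 1 - ‖q‖ := by linarith
  have h1t : (0:ℝ) < 1 - ‖c/b‖ := by linarith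
  set C := (1/(1-‖q‖)) * (Real.exp (‖b‖/(1-‖q‖)) / (1/2)) with hC
  have hCpos : 0 < C := by rw [hC]; positivity
  apply squeeze_zero_norm' (a := fun K => (C / (1 - ‖c/b‖) * ‖c/b‖) * ‖q‖^K)
  · have hev : ∀ᶠ K : ℕ in atTop, ‖c‖ * ‖q‖^K ≤ (1-‖q‖)/2 :=
      (tendsto_norm_geo hq c).eventually (eventually_le_nhds (by linarith))
    filter_upwards [hev] with K hK
    have hcq : ‖c*q^K‖ / (1-‖q‖) ≤ 1/2 := by
      rw [norm_mul, norm_pow, div_le_iff₀ h1q]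
      calc ‖c‖ * ‖q‖^K ≤ (1-‖q‖)/2 := hK
        _ = 1/2 * (1-‖q‖) := by ring
    have htK : ‖(c*q^K)/b‖ ≤ ‖c/b‖ * ‖q‖^K := by
      have : (c*q^K)/b = (c/b)*q^K := by ring
      rw [this, norm_mul, norm_pow]
    have htK1 : ‖(c*q^K)/b‖ < 1 := by
      calc ‖(c*q^K)/b‖ ≤ ‖c/b‖ * ‖q‖^K := htK
        _ ≤ ‖c/b‖ * 1 := mul_le_mul_of_nonneg_left (pow_le_one₀ (norm_nonneg q) hq.le)
            (norm_nonneg _)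
        _ < 1 := by simpa using ht
    calc ‖SS q b (c*q^K)‖ ≤ C * (‖(c*q^K)/b‖ / (1 - ‖(c*q^K)/b‖)) :=
          norm_SS_le_of_small hq b hcq htK1
      _ ≤ C * ((‖c/b‖ * ‖q‖^K) / (1 - ‖c/b‖)) := by
          apply mul_le_mul_of_nonneg_left _ hCpos.le
          apply div_le_div₀ (by positivity) htK h1t
          have hle : ‖c*q^K/b‖ ≤ ‖c/b‖ := by
            refine htK.trans ?_
            calc ‖c/b‖ * ‖q‖^K ≤ ‖c/b‖ * 1 :=
                mul_le_mul_of_nonneg_left (pow_le_one₀ (norm_nonneg q) hq.le) (norm_nonneg _)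
              _ = ‖c/b‖ := by ring
          linarith
      _ = (C / (1 - ‖c/b‖) * ‖c/b‖) * ‖q‖^K := by ring
  · simpa using (tendsto_pow_atTop_nhds_zero_of_lt_one (norm_nonneg q) hq).const_mul
      (C / (1 - ‖c/b‖) * ‖c/b‖)

lemma ladder (E : ℕ → ℂ) (h : ∀ K, E K = E (K+1)) (h0 : Tendsto E atTop (𝓝 0)) :
    E 0 = 0 := by
  have hc : ∀ K, E K = E 0 := by
    intro K
    induction K with
    | zero => rfl
    | succ K ih => rw [← h K, ih]
  have hE : E = fun _ => E 0 := funext hc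
  rw [hE] at h0
  exact tendsto_nhds_unique tendsto_const_nhds h0

/-- Part A: the left-hand side equals `Λ(c/b) - Λ(c)`. -/
lemma partA (hq : ‖q‖ < 1) (hb : b ≠ 0) {c : ℂ} (ht : ‖c/b‖ < 1)
    (h0 : ∀ k, (1:ℂ) - c * q ^ k ≠ 0) :
    SS q b c = Lam q (c/b) - Lam q c := by
  set E : ℕ → ℂ := fun K => SS q b (c*q^K) - (Lam q ((c*q^K)/b) - Lam q (c*q^K)) with hE
  have hrung : ∀ K, E K = E (K+1) := by
    intro K
    have ht' : ‖(c*q^K)/b‖ < 1 := by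
      have heq : (c*q^K)/b = (c/b)*q^K := by ring
      rw [heq, norm_mul, norm_pow]
      calc ‖c/b‖ * ‖q‖^K ≤ ‖c/b‖ * 1 :=
          mul_le_mul_of_nonneg_left (pow_le_one₀ (norm_nonneg q) hq.le) (norm_nonneg _)
        _ < 1 := by simpa using ht
    have h0' : ∀ k, (1:ℂ) - (c*q^K) * q ^ k ≠ 0 := by
      intro k
      have := h0 (K+k)
      rw [pow_add] at this
      convert this using 2
      ring
    have hrA := rungA hq hb ht' h0'
    have lam1 := lam_shift hq ((c*q^K)/b)
    have lam2 := lam_shift hq (c*q^K)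
    have h1t' : (1:ℂ) - (c*q^K)/b ≠ 0 := one_sub_ne ht'
    have h1c' : (1:ℂ) - c*q^K ≠ 0 := by simpa using h0' 0
    have hbe : b - c*q^K ≠ 0 := by
      rw [sub_ne_zero]
      intro h
      apply h1t'
      rw [h] at hb ⊢
      rw [div_self hb]
      ring
    have hident : 1/(1 - (c*q^K)/b) - 1/(1-(c*q^K))
        - ((c*q^K)/b/(1-(c*q^K)/b) - (c*q^K)/(1-(c*q^K))) = 0 := by
      field_simp
      ring
    have hA1 : c*q^(K+1) = (c*q^K)*q := by rw [pow_succ]; ring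
    have hA2 : ((c*q^K)*q)/b = ((c*q^K)/b)*q := by ring
    rw [hE]
    simp only
    rw [hA1, hA2]
    linear_combination hrA - lam1 + lam2 + hident
  have hdecay : Tendsto E atTop (𝓝 0) := by
    have l1 := tendsto_SS_zero hq b c ht
    have l2 : Tendsto (fun K : ℕ => Lam q ((c*q^K)/b)) atTop (𝓝 0) := by
      have heq : (fun K : ℕ => Lam q ((c*q^K)/b)) = fun K : ℕ => Lam q ((c/b)*q^K) := by
        funext K
        congr 1
        ring
      rw [heq]
      exact tendsto_lam_zero hq (c/b)
    have l3 := tendsto_lam_zero hq c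
    have := l1.sub (l2.sub l3)
    simpa using this
  have := ladder E hrung hdecay
  rw [hE] at this
  simp only [pow_zero, mul_one] at this
  have hz : c * 1 = c := mul_one c
  linear_combination this

end QAux

namespace QAux

noncomputable def WW (q b c' : ℂ) : ℂ := qPochInf (c'/b) q / qPochInf c' q * DD q b (c'/b)

variable {q b : ℂ}

lemma rungB (hq : ‖q‖ < 1) (hb : b ≠ 0) {t : ℂ} (ht : ‖t‖ < 1)
    (h0 : ∀ k, (1:ℂ) - (t*b) * q ^ k ≠ 0) :
    WW q b (t*b) - WW q b ((t*b)*q) = t/(1 - t) - (t*b)/(1 - t*b) := by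
  have htb : t*b/b = t := mul_div_cancel_right₀ t hb
  have htbq : t*b*q/b = t*q := by
    rw [mul_comm (t*b) q, mul_div_assoc, htb, mul_comm]
  have h1c : (1:ℂ) - t*b ≠ 0 := by simpa using h0 0
  have h1t : (1:ℂ) - t ≠ 0 := one_sub_ne ht
  have htq : ‖t*q‖ < 1 := norm_mul_q_lt hq ht
  have h0t : ∀ k, (1:ℂ) - t * q^k ≠ 0 := small_ne hq ht
  have h0tq : ∀ k, (1:ℂ) - (t*q) * q^k ≠ 0 := small_ne hq htq
  have h0cq : ∀ k, (1:ℂ) - ((t*b)*q)*q^k ≠ 0 := by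
    intro k
    have := h0 (k+1)
    rw [pow_succ'] at this
    convert this using 2
    ring
  have e_c : qPochInf (t*b) q = (1-t*b) * qPochInf ((t*b)*q) q := qPochInf_shift hq h0
  have e_t : qPochInf t q = (1-t) * qPochInf (t*q) q := qPochInf_shift hq h0t
  have Pcq_ne : qPochInf ((t*b)*q) q ≠ 0 := qPochInf_ne_zero hq h0cq
  have Ptq_ne : qPochInf (t*q) q ≠ 0 := qPochInf_ne_zero hq h0tq
  have qB1 : fF q b t * qPochInf t q = qPochInf (t*b) q := by
    have h0b : ∀ k, (1:ℂ) - b * t * q ^ k ≠ 0 := by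
      intro k
      have := h0 k
      convert this using 2
      ring
    have := qBinom hq b ht h0b
    rwa [show b*t = t*b by ring] at this
  have qB2 : fF q b (t*q) * qPochInf (t*q) q = qPochInf ((t*b)*q) q := by
    have h0b : ∀ k, (1:ℂ) - b * (t*q) * q ^ k ≠ 0 := by
      intro k
      have := h0cq k
      convert this using 2
      ring
    have := qBinom hq b htq h0b
    rwa [show b*(t*q) = (t*b)*q by ring] at this
  have DE := funcEq_D hq b ht
  rw [show b*t = t*b by ring] at DE
  have A' : (1-t) * (fF q b t * qPochInf (t*q) q)
      = (1-t*b) * qPochInf ((t*b)*q) q := by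
    rw [e_t, e_c] at qB1
    linear_combination qB1
  rw [WW, WW, htb, htbq, e_c, e_t]
  set P := qPochInf ((t*b)*q) q with hP
  set R := qPochInf (t*q) q with hR
  field_simp
  linear_combination ((1-t) * R) * DE
    + t * A'
    - ((t*b) * (1-t)) * qB2

end QAux

namespace QAux

variable {q b : ℂ}

lemma tendsto_WW_zero (hq : ‖q‖ < 1) (hb : b ≠ 0) {c : ℂ} (ht : ‖c/b‖ < 1)
    (h0 : ∀ k, (1:ℂ) - c * q ^ k ≠ 0) :
    Tendsto (fun K : ℕ => WW q b (c*q^K)) atTop (𝓝 0) := by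
  have h1q : (0:ℝ) < 1 - ‖q‖ := by linarith
  have hcK : ∀ K k, (1:ℂ) - (c*q^K) * q ^ k ≠ 0 := by
    intro K k
    have := h0 (K+k)
    rw [pow_add] at this
    convert this using 2
    ring
  have hdd := tendsto_DD_zero hq b (c/b)
  apply squeeze_zero_norm' (a := fun K => (Real.exp 1 * 2) * ‖DD q b ((c/b)*q^K)‖)
  · have ev1 : ∀ᶠ K : ℕ in atTop, ‖c‖ * ‖q‖^K ≤ (1-‖q‖)/2 :=
      (tendsto_norm_geo hq c).eventually (eventually_le_nhds (by linarith))
    have ev2 : ∀ᶠ K : ℕ in atTop, ‖c/b‖ * ‖q‖^K ≤ (1-‖q‖)/2 :=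
      (tendsto_norm_geo hq (c/b)).eventually (eventually_le_nhds (by linarith))
    filter_upwards [ev1, ev2] with K h1 h2
    have hdivK : (c*q^K)/b = (c/b)*q^K := by ring
    have hnc : ‖c*q^K‖ / (1-‖q‖) ≤ 1/2 := by
      rw [norm_mul, norm_pow, div_le_iff₀ h1q]
      linarith
    have hnt : ‖(c*q^K)/b‖ / (1-‖q‖) ≤ 1/2 := by
      rw [hdivK, norm_mul, norm_pow, div_le_iff₀ h1q]
      linarith
    have hPc : (1:ℝ)/2 ≤ ‖qPochInf (c*q^K) q‖ := qPochInf_norm_ge_half hq (hcK K) hnc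
    have h0tK : ∀ k, (1:ℂ) - ((c*q^K)/b) * q ^ k ≠ 0 := by
      apply small_ne hq
      rw [hdivK, norm_mul, norm_pow]
      calc ‖c/b‖ * ‖q‖^K ≤ ‖c/b‖ * 1 :=
          mul_le_mul_of_nonneg_left (pow_le_one₀ (norm_nonneg q) hq.le) (norm_nonneg _)
        _ < 1 := by simpa using ht
    have hPt : ‖qPochInf ((c*q^K)/b) q‖ ≤ Real.exp 1 := by
      refine (qPochInf_norm_le hq h0tK).trans ?_
      apply Real.exp_le_exp.2
      rw [div_le_one h1q]
      have := hnt
      rw [div_le_iff₀ h1q] at this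
      linarith
    rw [WW, norm_mul, norm_div, hdivK]
    have hd2 : ‖qPochInf ((c/b)*q^K) q‖ / ‖qPochInf (c*q^K) q‖ ≤ Real.exp 1 / (1/2) := by
      apply div_le_div₀ (by positivity) _ (by norm_num) hPc
      rw [← hdivK]
      exact hPt
    calc ‖qPochInf ((c/b)*q^K) q‖ / ‖qPochInf (c*q^K) q‖ * ‖DD q b ((c/b)*q^K)‖
        ≤ (Real.exp 1 / (1/2)) * ‖DD q b ((c/b)*q^K)‖ :=
          mul_le_mul_of_nonneg_right hd2 (norm_nonneg _)
      _ = (Real.exp 1 * 2) * ‖DD q b ((c/b)*q^K)‖ := by ring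
  · simpa using (hdd.norm).const_mul (Real.exp 1 * 2)

/-- Part B: the right-hand side equals `Λ(c/b) - Λ(c)`. -/
lemma partB (hq : ‖q‖ < 1) (hb : b ≠ 0) {c : ℂ} (ht : ‖c/b‖ < 1)
    (h0 : ∀ k, (1:ℂ) - c * q ^ k ≠ 0) :
    WW q b c = Lam q (c/b) - Lam q c := by
  set E : ℕ → ℂ := fun K => WW q b (c*q^K) - (Lam q ((c*q^K)/b) - Lam q (c*q^K)) with hE
  have hrung : ∀ K, E K = E (K+1) := by
    intro K
    have ht' : ‖(c*q^K)/b‖ < 1 := by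
      have heq : (c*q^K)/b = (c/b)*q^K := by ring
      rw [heq, norm_mul, norm_pow]
      calc ‖c/b‖ * ‖q‖^K ≤ ‖c/b‖ * 1 :=
          mul_le_mul_of_nonneg_left (pow_le_one₀ (norm_nonneg q) hq.le) (norm_nonneg _)
        _ < 1 := by simpa using ht
    have h0' : ∀ k, (1:ℂ) - (c*q^K) * q ^ k ≠ 0 := by
      intro k
      have := h0 (K+k)
      rw [pow_add] at this
      convert this using 2
      ring
    have hcb : (c*q^K)/b*b = c*q^K := div_mul_cancel₀ _ hb
    have h0'' : ∀ k, (1:ℂ) - ((c*q^K)/b*b) * q ^ k ≠ 0 := by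
      intro k
      rw [hcb]
      exact h0' k
    have hrB := rungB hq hb ht' h0''
    rw [hcb] at hrB
    have lam1 := lam_shift hq ((c*q^K)/b)
    have lam2 := lam_shift hq (c*q^K)
    have hA1 : c*q^(K+1) = (c*q^K)*q := by rw [pow_succ]; ring
    have hA2 : ((c*q^K)*q)/b = ((c*q^K)/b)*q := by ring
    rw [hE]
    simp only
    rw [hA1, hA2]
    linear_combination hrB - lam1 + lam2
  have hdecay : Tendsto E atTop (𝓝 0) := by
    have l1 := tendsto_WW_zero hq hb ht h0
    have l2 : Tendsto (fun K : ℕ => Lam q ((c*q^K)/b)) atTop (𝓝 0) := by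
      have heq : (fun K : ℕ => Lam q ((c*q^K)/b)) = fun K : ℕ => Lam q ((c/b)*q^K) := by
        funext K
        congr 1
        ring
      rw [heq]
      exact tendsto_lam_zero hq (c/b)
    have l3 := tendsto_lam_zero hq c
    have := l1.sub (l2.sub l3)
    simpa using this
  have := ladder E hrung hdecay
  rw [hE] at this
  simp only [pow_zero, mul_one] at this
  linear_combination this

end QAux


open QAux in
/-- The series on the left runs over `n ≥ 1`; here the summation index is shifted by one,
so that the term of index `n : ℕ` corresponds to `n + 1`. -/
theorem stmt8 (q b c : ℂ) (hq0 : 0 < ‖q‖) (hq1 : ‖q‖ < 1)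
    (hb : b ≠ 0) (hcb : ‖c / b‖ < 1) (hc : ∀ k : ℕ, c * q ^ k ≠ 1) :
    ∑' n : ℕ, (1 / (1 - q ^ (n + 1))) * (qPoch b q (n + 1) / qPoch c q (n + 1)) * (c / b) ^ (n + 1) =
      (qPochInf (c / b) q / qPochInf c q) *
        ∑' n : ℕ, (n : ℂ) * (qPoch b q n / qPoch q q n) * (c / b) ^ n := by
  have hq : ‖q‖ < 1 := hq1
  have ht : ‖c/b‖ < 1 := hcb
  have h0 : ∀ k, (1:ℂ) - c * q ^ k ≠ 0 := fun k => sub_ne_zero.2 (Ne.symm (hc k))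
  have hL : (∑' n : ℕ, (1 / (1 - q ^ (n + 1))) * (qPoch b q (n + 1) / qPoch c q (n + 1))
      * (c / b) ^ (n + 1)) = SS q b c := rfl
  have hR : (qPochInf (c / b) q / qPochInf c q) *
      (∑' n : ℕ, (n : ℂ) * (qPoch b q n / qPoch q q n) * (c / b) ^ n) = WW q b c := by
    simp only [WW, DD, acoef]
  rw [hL, hR, partA hq hb ht h0, partB hq hb ht h0]
end
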